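/- arXiv:1102.2374 — 9 statements merged into one kernel-verified Lean document; each statement's English description precedes it below -/
import Mathlib

section
/- Let μ > 0 and let v : [0,∞) → ℝ be a C² solution of v'' + v'/a + μv + v³ = 0 for a > 0, with v and a·v'(a) continuous at a = 0. Set w(a) = √a · v(a) and E(a) = ½(w')² + w²/(8a²) + (μ/2)w² + w⁴/(4a). Then E is nonincreasing on (0,∞), with E'(a) = -w²/(4a³) - w⁴/(4a²) ≤ 0. -/
open Real Set

/-- Focusing radial standing-wave ODE `v'' + v'/a + μv + v³ = 0`, `μ > 0`:
with `w = √a·v` and `E = ½(w')² + w²/(8a²) + (μ/2)w² + w⁴/(4a)`,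
one has `E' = -w²/(4a³) - w⁴/(4a²) ≤ 0`, so `E` is nonincreasing on `(0,∞)`. -/
theorem stmt3 (μ : ℝ) (hμ : 0 < μ) (v : ℝ → ℝ)
    (hv : ContDiffOn ℝ 2 v (Set.Ioi 0))
    (hode : ∀ a > (0:ℝ), deriv (deriv v) a + deriv v a / a + μ * v a + (v a) ^ 3 = 0)
    (hv0 : ContinuousWithinAt v (Set.Ici 0) 0)
    (hav0 : ContinuousWithinAt (fun a => a * deriv v a) (Set.Ici 0) 0) :
    let w : ℝ → ℝ := fun a => Real.sqrt a * v a
    let E : ℝ → ℝ := fun a =>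
      (deriv w a) ^ 2 / 2 + (w a) ^ 2 / (8 * a ^ 2) + μ / 2 * (w a) ^ 2 + (w a) ^ 4 / (4 * a)
    AntitoneOn E (Set.Ioi 0) ∧
    ∀ a > (0:ℝ),
      deriv E a = -(w a) ^ 2 / (4 * a ^ 3) - (w a) ^ 4 / (4 * a ^ 2) ∧ deriv E a ≤ 0 := by
  intro w E
  have hvd : ∀ b ∈ Set.Ioi (0:ℝ), HasDerivAt v (deriv v b) b := by
    intro b hb
    exact ((hv.differentiableOn (by norm_num)).differentiableAt
      (isOpen_Ioi.mem_nhds hb)).hasDerivAt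
  have hv' : ContDiffOn ℝ 1 (deriv v) (Set.Ioi 0) :=
    hv.deriv_of_isOpen isOpen_Ioi (by norm_num)
  have hvd2 : ∀ b ∈ Set.Ioi (0:ℝ), HasDerivAt (deriv v) (deriv (deriv v) b) b := by
    intro b hb
    exact ((hv'.differentiableOn (by norm_num)).differentiableAt
      (isOpen_Ioi.mem_nhds hb)).hasDerivAt
  have hwd : ∀ b ∈ Set.Ioi (0:ℝ), HasDerivAt w
      (1 / (2 * Real.sqrt b) * v b + Real.sqrt b * deriv v b) b := by
    intro b hb
    exact (Real.hasDerivAt_sqrt (ne_of_gt hb)).mul (hvd b hb)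
  have hW : ∀ b ∈ Set.Ioi (0:ℝ),
      deriv w b = 1 / (2 * Real.sqrt b) * v b + Real.sqrt b * deriv v b :=
    fun b hb => (hwd b hb).deriv
  have key : ∀ a ∈ Set.Ioi (0:ℝ),
      HasDerivAt E (-(w a) ^ 2 / (4 * a ^ 3) - (w a) ^ 4 / (4 * a ^ 2)) a := by
    intro a ha
    have ha0 : (0:ℝ) < a := ha
    have hs0 : 0 < Real.sqrt a := Real.sqrt_pos.mpr ha0
    have hF : HasDerivAt (fun b => 1 / (2 * Real.sqrt b) * v b + Real.sqrt b * deriv v b)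
        ((-(2 * (1 / (2 * Real.sqrt a))) / (2 * Real.sqrt a) ^ 2 * v a
          + 1 / (2 * Real.sqrt a) * deriv v a)
         + (1 / (2 * Real.sqrt a) * deriv v a + Real.sqrt a * deriv (deriv v) a)) a := by
      have h1 : HasDerivAt (fun b => 1 / (2 * Real.sqrt b))
          (-(2 * (1 / (2 * Real.sqrt a))) / (2 * Real.sqrt a) ^ 2) a := by
        have := ((Real.hasDerivAt_sqrt (ne_of_gt ha0)).const_mul 2).inv (by positivity)
        have hfe : (fun b => 1 / (2 * Real.sqrt b)) = (fun y => 2 * Real.sqrt y)⁻¹ := by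
          funext b; simp [one_div]
        rw [hfe]; exact this
      exact (h1.mul (hvd a ha)).add ((Real.hasDerivAt_sqrt (ne_of_gt ha0)).mul (hvd2 a ha))
    have hdw : HasDerivAt (deriv w)
        ((-(2 * (1 / (2 * Real.sqrt a))) / (2 * Real.sqrt a) ^ 2 * v a
          + 1 / (2 * Real.sqrt a) * deriv v a)
         + (1 / (2 * Real.sqrt a) * deriv v a + Real.sqrt a * deriv (deriv v) a)) a := by
      apply hF.congr_of_eventuallyEq
      filter_upwards [isOpen_Ioi.mem_nhds ha] with b hb using hW b hb
    have hw' := hwd a ha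
    have h8 : HasDerivAt (fun b : ℝ => 8 * b ^ 2) (8 * (2 * a ^ 1)) a :=
      (hasDerivAt_pow 2 a).const_mul 8
    have h4 : HasDerivAt (fun b : ℝ => 4 * b) (4 * 1) a :=
      (hasDerivAt_id a).const_mul 4
    have hE : HasDerivAt E _ a :=
      ((((hdw.pow 2).div_const 2).add
        ((hw'.pow 2).div h8 (by positivity))).add
        ((hw'.pow 2).const_mul (μ / 2))).add
        ((hw'.pow 4).div h4 (by positivity))
    convert hE using 1
    have hode' := hode a ha0
    have hs2 : Real.sqrt a ^ 2 = a := Real.sq_sqrt ha0.le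
    have hV2 : deriv (deriv v) a = -(deriv v a / a) - μ * v a - (v a) ^ 3 := by linarith
    have hsne : Real.sqrt a ≠ 0 := ne_of_gt hs0
    have hane : a ≠ 0 := ne_of_gt ha0
    simp only [w, Pi.pow_apply]
    rw [hW a ha, hV2]
    set V := v a with hVdef
    set V1 := deriv v a with hV1def
    set s := Real.sqrt a with hsdef
    clear_value V V1 s
    rw [← hs2]
    field_simp
    ring_nf
    field_simp
    ring
  refine ⟨?_, ?_⟩
  · apply antitoneOn_of_deriv_nonpos (convex_Ioi 0)
    · exact fun a ha => (key a ha).differentiableAt.continuousAt.continuousWithinAt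
    · intro a ha
      rw [interior_Ioi] at ha
      exact (key a ha).differentiableAt.differentiableWithinAt
    · intro a ha
      rw [interior_Ioi] at ha
      rw [(key a ha).deriv]
      have ha0 : (0:ℝ) < a := ha
      have h1 : 0 ≤ (w a) ^ 2 / (4 * a ^ 3) := by positivity
      have h2 : 0 ≤ (w a) ^ 4 / (4 * a ^ 2) := by positivity
      rw [neg_div]
      linarith
  · intro a ha
    have hd := (key a ha).deriv
    refine ⟨hd, ?_⟩
    rw [hd]
    have ha0 : (0:ℝ) < a := ha
    have h1 : 0 ≤ (w a) ^ 2 / (4 * a ^ 3) := by positivity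
    have h2 : 0 ≤ (w a) ^ 4 / (4 * a ^ 2) := by positivity
    rw [neg_div]
    linarith
end

section
/- Let μ > 0 and let v be a nontrivial C² real solution on (0,∞) of v'' + v'/a + μv + v³ = 0 that extends continuously to a = 0 with a·v'(a) → 0 as a → 0⁺. Then v and v' are bounded on [1,∞); in fact √a·v(a) and (√a·v(a))' are bounded as a → ∞, so v(a) = O(a^{-1/2}). -/
open Real Set

noncomputable def wfun (v : ℝ → ℝ) (b : ℝ) : ℝ := Real.sqrt b * v b

noncomputable def w1fun (v : ℝ → ℝ) (b : ℝ) : ℝ :=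
  v b / (2 * Real.sqrt b) + Real.sqrt b * deriv v b

noncomputable def Efun (μ : ℝ) (v : ℝ → ℝ) (b : ℝ) : ℝ :=
  (w1fun v b) ^ 2 / 2 + (wfun v b) ^ 2 / (8 * Real.sqrt b ^ 4)
    + μ / 2 * (wfun v b) ^ 2 + (wfun v b) ^ 4 / (4 * Real.sqrt b ^ 2)

/-- For a nontrivial solution of the focusing equation `v'' + v'/a + μv + v³ = 0`, `μ > 0`,
continuous up to `a = 0` with `a·v'(a) → 0`, the functions `v`, `v'`, `√a·v` and `(√a·v)'`
are bounded on `[1,∞)`, and `v(a) = O(a^{-1/2})`. -/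
theorem stmt4 (μ : ℝ) (hμ : 0 < μ) (v : ℝ → ℝ)
    (hv : ContDiffOn ℝ 2 v (Set.Ioi 0))
    (hode : ∀ a > (0:ℝ), deriv (deriv v) a + deriv v a / a + μ * v a + (v a) ^ 3 = 0)
    (hv0 : ContinuousWithinAt v (Set.Ici 0) 0)
    (hav0 : Filter.Tendsto (fun a => a * deriv v a) (nhdsWithin 0 (Set.Ioi 0)) (nhds 0))
    (hnt : ∃ a > (0:ℝ), v a ≠ 0) :
    ∃ C : ℝ, ∀ a ≥ (1:ℝ),
      |v a| ≤ C ∧ |deriv v a| ≤ C ∧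
      |Real.sqrt a * v a| ≤ C ∧ |deriv (fun b => Real.sqrt b * v b) a| ≤ C ∧
      |v a| ≤ C / Real.sqrt a := by
  have hv1 : ∀ a ∈ Ioi (0:ℝ), HasDerivAt v (deriv v a) a := by
    intro a ha
    exact ((hv.contDiffAt (isOpen_Ioi.mem_nhds ha)).differentiableAt two_ne_zero).hasDerivAt
  have hdv : ContDiffOn ℝ 1 (deriv v) (Ioi 0) :=
    hv.deriv_of_isOpen isOpen_Ioi (by norm_num)
  have hv2 : ∀ a ∈ Ioi (0:ℝ), HasDerivAt (deriv v) (deriv (deriv v) a) a := by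
    intro a ha
    exact ((hdv.contDiffAt (isOpen_Ioi.mem_nhds ha)).differentiableAt one_ne_zero).hasDerivAt
  -- derivative of w
  have hw : ∀ a ∈ Ioi (0:ℝ), HasDerivAt (wfun v) (w1fun v a) a := by
    intro a ha
    have hs : (0:ℝ) < Real.sqrt a := Real.sqrt_pos.mpr ha
    have := (Real.hasDerivAt_sqrt (ne_of_gt ha)).mul (hv1 a ha)
    refine HasDerivAt.congr_deriv this ?_
    rw [w1fun]
    field_simp [wfun, w1fun]
  -- derivative of w1
  have hw1 : ∀ a ∈ Ioi (0:ℝ), HasDerivAt (w1fun v)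
      (deriv v a / Real.sqrt a + Real.sqrt a * deriv (deriv v) a
        - v a / (4 * Real.sqrt a ^ 3)) a := by
    intro a ha
    have hs : (0:ℝ) < Real.sqrt a := Real.sqrt_pos.mpr ha
    have h1 : HasDerivAt (fun b => v b / (2 * Real.sqrt b))
        ((deriv v a * (2 * Real.sqrt a) - v a * (2 * (1 / (2 * Real.sqrt a))))
          / (2 * Real.sqrt a) ^ 2) a :=
      (hv1 a ha).div ((Real.hasDerivAt_sqrt (ne_of_gt ha)).const_mul 2)
        (by positivity)
    have h2 : HasDerivAt (fun b => Real.sqrt b * deriv v b)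
        (1 / (2 * Real.sqrt a) * deriv v a + Real.sqrt a * deriv (deriv v) a) a :=
      (Real.hasDerivAt_sqrt (ne_of_gt ha)).mul (hv2 a ha)
    have := h1.add h2
    refine HasDerivAt.congr_deriv this ?_
    field_simp
    ring
  -- derivative of E
  have hE : ∀ a ∈ Ioi (0:ℝ), HasDerivAt (Efun μ v)
      (-((wfun v a) ^ 2 / (4 * Real.sqrt a ^ 6) + (wfun v a) ^ 4 / (4 * Real.sqrt a ^ 4))) a := by
    intro a ha
    have hs : (0:ℝ) < Real.sqrt a := Real.sqrt_pos.mpr ha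
    have hs2 : Real.sqrt a ^ 2 = a := Real.sq_sqrt (le_of_lt ha)
    have hdd : deriv (deriv v) a
        = -(deriv v a / Real.sqrt a ^ 2 + μ * v a + v a ^ 3) := by
      rw [hs2]; linarith [hode a ha]
    have hsq : HasDerivAt (fun b => Real.sqrt b) (1 / (2 * Real.sqrt a)) a :=
      Real.hasDerivAt_sqrt (ne_of_gt ha)
    have e1 : HasDerivAt (fun b => (w1fun v b) ^ 2 / 2)
        ((2:ℕ) * (w1fun v a) ^ 1 * (deriv v a / Real.sqrt a + Real.sqrt a * deriv (deriv v) a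
          - v a / (4 * Real.sqrt a ^ 3)) / 2) a :=
      ((hw1 a ha).pow 2).div_const 2
    have e2 : HasDerivAt (fun b => (wfun v b) ^ 2 / (8 * Real.sqrt b ^ 4))
        ((((2:ℕ) * (wfun v a) ^ 1 * w1fun v a) * (8 * Real.sqrt a ^ 4)
          - (wfun v a) ^ 2 * (8 * ((4:ℕ) * Real.sqrt a ^ 3 * (1 / (2 * Real.sqrt a)))))
          / (8 * Real.sqrt a ^ 4) ^ 2) a :=
      ((hw a ha).pow 2).div ((hsq.pow 4).const_mul 8) (by positivity)
    have e3 : HasDerivAt (fun b => μ / 2 * (wfun v b) ^ 2)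
        (μ / 2 * ((2:ℕ) * (wfun v a) ^ 1 * w1fun v a)) a :=
      ((hw a ha).pow 2).const_mul (μ / 2)
    have e4 : HasDerivAt (fun b => (wfun v b) ^ 4 / (4 * Real.sqrt b ^ 2))
        ((((4:ℕ) * (wfun v a) ^ 3 * w1fun v a) * (4 * Real.sqrt a ^ 2)
          - (wfun v a) ^ 4 * (4 * ((2:ℕ) * Real.sqrt a ^ 1 * (1 / (2 * Real.sqrt a)))))
          / (4 * Real.sqrt a ^ 2) ^ 2) a :=
      ((hw a ha).pow 4).div ((hsq.pow 2).const_mul 4) (by positivity)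
    have := ((e1.add e2).add e3).add e4
    refine HasDerivAt.congr_deriv this ?_
    simp only [wfun, w1fun, hdd]
    field_simp
    ring
  -- E is antitone on [1, ∞)
  have hmono : AntitoneOn (Efun μ v) (Ici 1) := by
    apply antitoneOn_of_deriv_nonpos (convex_Ici 1)
    · intro x hx
      exact (hE x (show x ∈ Ioi (0:ℝ) from lt_of_lt_of_le one_pos (show (1:ℝ) ≤ x from hx))).continuousAt.continuousWithinAt
    · intro x hx
      rw [interior_Ici] at hx
      exact (hE x (show x ∈ Ioi (0:ℝ) from lt_trans one_pos (show (1:ℝ) < x from hx))).differentiableAt.differentiableWithinAt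
    · intro x hx
      rw [interior_Ici] at hx
      have hx0 : (0:ℝ) < x := lt_trans one_pos hx
      rw [(hE x hx0).deriv]
      have hs : (0:ℝ) < Real.sqrt x := Real.sqrt_pos.mpr hx0
      have : (0:ℝ) ≤ (wfun v x) ^ 2 / (4 * Real.sqrt x ^ 6) + (wfun v x) ^ 4 / (4 * Real.sqrt x ^ 4) := by positivity
      linarith
  set E1 : ℝ := Efun μ v 1 with hE1def
  -- each term of E is nonneg on [1,∞); extract bounds
  have hbounds : ∀ a : ℝ, 1 ≤ a →
      (wfun v a) ^ 2 ≤ 2 * E1 / μ ∧ (w1fun v a) ^ 2 ≤ 2 * E1 := by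
    intro a ha
    have ha0 : (0:ℝ) < a := lt_of_lt_of_le one_pos ha
    have hs : (0:ℝ) < Real.sqrt a := Real.sqrt_pos.mpr ha0
    have hle : Efun μ v a ≤ E1 := hmono (self_mem_Ici) ha ha
    have h1 : (0:ℝ) ≤ (w1fun v a) ^ 2 / 2 := by positivity
    have h2 : (0:ℝ) ≤ (wfun v a) ^ 2 / (8 * Real.sqrt a ^ 4) := by positivity
    have h3 : (0:ℝ) ≤ μ / 2 * (wfun v a) ^ 2 := by positivity
    have h4 : (0:ℝ) ≤ (wfun v a) ^ 4 / (4 * Real.sqrt a ^ 2) := by positivity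
    have hEa : Efun μ v a = (w1fun v a) ^ 2 / 2 + (wfun v a) ^ 2 / (8 * Real.sqrt a ^ 4)
        + μ / 2 * (wfun v a) ^ 2 + (wfun v a) ^ 4 / (4 * Real.sqrt a ^ 2) := rfl
    rw [hEa] at hle
    constructor
    · rw [le_div_iff₀ hμ]
      nlinarith
    · linarith
  set B : ℝ := Real.sqrt (2 * E1 / μ) with hBdef
  set D : ℝ := Real.sqrt (2 * E1) with hDdef
  have hB0 : 0 ≤ B := Real.sqrt_nonneg _
  have hD0 : 0 ≤ D := Real.sqrt_nonneg _
  refine ⟨B + D, fun a ha => ?_⟩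
  have ha0 : (0:ℝ) < a := lt_of_lt_of_le one_pos ha
  have hs : (0:ℝ) < Real.sqrt a := Real.sqrt_pos.mpr ha0
  have hs1 : (1:ℝ) ≤ Real.sqrt a := by
    rw [show (1:ℝ) = Real.sqrt 1 by simp]; exact Real.sqrt_le_sqrt ha
  obtain ⟨hw2, hw12⟩ := hbounds a ha
  have hwB : |wfun v a| ≤ B := by
    rw [← Real.sqrt_sq_eq_abs]; exact Real.sqrt_le_sqrt hw2
  have hw1D : |w1fun v a| ≤ D := by
    rw [← Real.sqrt_sq_eq_abs]; exact Real.sqrt_le_sqrt hw12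
  -- |v a| ≤ B / sqrt a
  have hvB : |v a| ≤ B / Real.sqrt a := by
    rw [le_div_iff₀ hs]
    calc |v a| * Real.sqrt a = |wfun v a| := by
          rw [wfun, abs_mul, abs_of_pos hs]; ring
      _ ≤ B := hwB
  have hvB' : |v a| ≤ B := le_trans hvB (div_le_self hB0 hs1)
  -- deriv v bound
  have hdvB : |deriv v a| ≤ D + B / 2 := by
    have hval : deriv v a = (w1fun v a - v a / (2 * Real.sqrt a)) / Real.sqrt a := by
      rw [w1fun]; field_simp; ring
    rw [hval, abs_div, abs_of_pos hs]
    have h1 : |w1fun v a - v a / (2 * Real.sqrt a)| ≤ D + B / 2 := by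
      have := abs_sub (w1fun v a) (v a / (2 * Real.sqrt a))
      have h2 : |v a / (2 * Real.sqrt a)| ≤ B / 2 := by
        rw [abs_div, abs_of_pos (by positivity : (0:ℝ) < 2 * Real.sqrt a)]
        gcongr <;> linarith
      calc |w1fun v a - v a / (2 * Real.sqrt a)|
          ≤ |w1fun v a| + |v a / (2 * Real.sqrt a)| := abs_sub _ _
        _ ≤ D + B / 2 := add_le_add hw1D h2
    calc |w1fun v a - v a / (2 * Real.sqrt a)| / Real.sqrt a
        ≤ |w1fun v a - v a / (2 * Real.sqrt a)| := by
          apply div_le_self (abs_nonneg _) hs1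
      _ ≤ D + B / 2 := h1
  have hderivw : deriv (fun b => Real.sqrt b * v b) a = w1fun v a := by
    have : (fun b => Real.sqrt b * v b) = wfun v := rfl
    rw [this, (hw a ha0).deriv]
  refine ⟨by linarith, by linarith, ?_, ?_, ?_⟩
  · have : |Real.sqrt a * v a| = |wfun v a| := rfl
    rw [this]; linarith
  · rw [hderivw]; linarith
  · calc |v a| ≤ B / Real.sqrt a := hvB
      _ ≤ (B + D) / Real.sqrt a := by gcongr; linarith
end

section
/- Let μ > 0 and let v : [0,∞) → ℝ be a C¹ function, C² on (0,∞), solving μv - v'' - v'/a + v³ = 0 for a > 0 with v'(0) = 0. If v is not identically zero, then v is unbounded; more precisely v(a)² ≥ c·log a for some c > 0 and all large a. Consequently, the only bounded solution is v ≡ 0. -/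
open Real Set Filter Topology

/-- Defocusing radial standing-wave equation `μv - v'' - v'/a + v³ = 0` with `μ > 0`:
any solution not identically zero on `[0,∞)` satisfies `v(a)² ≥ c·log a` for large `a`
(hence is unbounded); consequently the only bounded solution is `v ≡ 0`. -/
theorem stmt5 (μ : ℝ) (hμ : 0 < μ) (v : ℝ → ℝ)
    (hv1 : ContDiffOn ℝ 1 v (Set.Ici 0))
    (hv2 : ContDiffOn ℝ 2 v (Set.Ioi 0))
    (hode : ∀ a > (0:ℝ), μ * v a - deriv (deriv v) a - deriv v a / a + (v a) ^ 3 = 0)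
    (hv'0 : derivWithin v (Set.Ici 0) 0 = 0) :
    ((∃ a ≥ (0:ℝ), v a ≠ 0) →
      ∃ c > (0:ℝ), ∃ A : ℝ, ∀ a ≥ A, c * Real.log a ≤ (v a) ^ 2) ∧
    ((∃ C : ℝ, ∀ a ≥ (0:ℝ), |v a| ≤ C) → ∀ a ≥ (0:ℝ), v a = 0) := by
  -- Basic differentiability facts
  have hd1 : ∀ a > (0:ℝ), HasDerivAt v (deriv v a) a := by
    intro a ha
    exact (((hv2.differentiableOn (by norm_num)).differentiableAt
      (isOpen_Ioi.mem_nhds ha))).hasDerivAt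
  have hdv : ContDiffOn ℝ 1 (deriv v) (Set.Ioi 0) :=
    hv2.deriv_of_isOpen isOpen_Ioi (by norm_num)
  have hd2 : ∀ a > (0:ℝ), HasDerivAt (deriv v) (deriv (deriv v) a) a := by
    intro a ha
    exact (((hdv.differentiableOn (by norm_num)).differentiableAt
      (isOpen_Ioi.mem_nhds ha))).hasDerivAt
  set g : ℝ → ℝ := fun a => a * v a * deriv v a with hgdef
  -- derivative of g
  have hg' : ∀ a > (0:ℝ), HasDerivAt g
      (a * ((deriv v a) ^ 2 + μ * (v a) ^ 2 + (v a) ^ 4)) a := by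
    intro a ha
    have h1 : HasDerivAt (fun a => a * v a) (1 * v a + a * deriv v a) a :=
      (hasDerivAt_id a).mul (hd1 a ha)
    have h2 : HasDerivAt g ((1 * v a + a * deriv v a) * deriv v a
        + (a * v a) * deriv (deriv v) a) a := h1.mul (hd2 a ha)
    have hode' : deriv (deriv v) a = μ * v a + (v a) ^ 3 - deriv v a / a := by
      have := hode a ha; linarith
    convert h2 using 1
    rw [hode']
    field_simp
    ring
  -- monotonicity of g on (0,∞)
  have hgcont : ContinuousOn g (Set.Ioi 0) := fun a ha =>
    ((hg' a ha).differentiableAt.continuousAt).continuousWithinAt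
  have hgderiv : ∀ a ∈ Set.Ioi (0:ℝ), deriv g a
      = a * ((deriv v a) ^ 2 + μ * (v a) ^ 2 + (v a) ^ 4) := fun a ha => (hg' a ha).deriv
  have hgmono : MonotoneOn g (Set.Ioi 0) := by
    apply monotoneOn_of_deriv_nonneg (convex_Ioi 0) hgcont
    · intro a ha
      rw [interior_Ioi] at ha
      exact ((hg' a ha).differentiableAt).differentiableWithinAt
    · intro a ha
      rw [interior_Ioi] at ha
      rw [hgderiv a ha]
      have : (0:ℝ) < a := ha
      positivity
  -- limit of g at 0⁺
  have hvderiv_eq : ∀ a > (0:ℝ), derivWithin v (Set.Ici 0) a = deriv v a := fun a ha =>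
    derivWithin_of_mem_nhds (mem_of_superset (Ioi_mem_nhds ha) Ioi_subset_Ici_self)
  have hdcont : ContinuousOn (derivWithin v (Set.Ici 0)) (Set.Ici 0) :=
    hv1.continuousOn_derivWithin (uniqueDiffOn_Ici 0) (le_refl 1)
  have htend_dv : Tendsto (deriv v) (𝓝[>] (0:ℝ)) (𝓝 0) := by
    have h1 : Tendsto (derivWithin v (Set.Ici 0)) (𝓝[Set.Ici 0] (0:ℝ)) (𝓝 0) := by
      have := (hdcont 0 self_mem_Ici)
      rw [ContinuousWithinAt, hv'0] at this
      exact this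
    have h2 : Tendsto (derivWithin v (Set.Ici 0)) (𝓝[>] (0:ℝ)) (𝓝 0) :=
      h1.mono_left (nhdsWithin_mono 0 Ioi_subset_Ici_self)
    refine h2.congr' ?_
    filter_upwards [eventually_mem_nhdsWithin] with a ha
    exact hvderiv_eq a ha
  have htend_v : Tendsto v (𝓝[>] (0:ℝ)) (𝓝 (v 0)) :=
    (hv1.continuousOn 0 self_mem_Ici).tendsto.mono_left
      (nhdsWithin_mono 0 Ioi_subset_Ici_self)
  have htend_g : Tendsto g (𝓝[>] (0:ℝ)) (𝓝 0) := by
    have hid : Tendsto (fun a : ℝ => a) (𝓝[>] (0:ℝ)) (𝓝 0) :=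
      (continuous_id.tendsto 0).mono_left nhdsWithin_le_nhds
    have := (hid.mul htend_v).mul htend_dv
    simpa using this
  have hg0 : ∀ a > (0:ℝ), 0 ≤ g a := by
    intro a ha
    refine le_of_tendsto htend_g ?_
    filter_upwards [Ioc_mem_nhdsGT ha] with t ht
    exact hgmono ht.1 ha ht.2
  -- Key claim (first part)
  have key : (∃ a ≥ (0:ℝ), v a ≠ 0) →
      ∃ c > (0:ℝ), ∃ A : ℝ, ∀ a ≥ A, c * Real.log a ≤ (v a) ^ 2 := by
    rintro ⟨a₀, ha₀, hva₀⟩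
    -- find a positive point where v ≠ 0
    have hex : ∃ a₁ > (0:ℝ), v a₁ ≠ 0 := by
      rcases lt_or_eq_of_le ha₀ with h | h
      · exact ⟨a₀, h, hva₀⟩
      · subst h
        have hcw : ContinuousWithinAt v (Set.Ici 0) 0 :=
          hv1.continuousOn 0 self_mem_Ici
        have h1 : ∀ᶠ t in 𝓝[Set.Ici 0] (0:ℝ), v t ≠ 0 :=
          hcw (isOpen_compl_singleton.mem_nhds hva₀)
        have h2 : ∀ᶠ t in 𝓝[>] (0:ℝ), v t ≠ 0 :=
          h1.filter_mono (nhdsWithin_mono 0 Ioi_subset_Ici_self)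
        obtain ⟨a₁, h3, h4⟩ := (h2.and eventually_mem_nhdsWithin).exists
        exact ⟨a₁, h4, h3⟩
    obtain ⟨a₁, ha₁, hva₁⟩ := hex
    -- a neighborhood of a₁ where v ≠ 0 and everything is positive
    have hca : ContinuousAt v a₁ :=
      (hv2.continuousOn.continuousAt (Ioi_mem_nhds ha₁))
    have hev : ∀ᶠ t in 𝓝 a₁, v t ≠ 0 ∧ 0 < t :=
      (hca.eventually_ne hva₁).and (eventually_gt_nhds ha₁)
    obtain ⟨ε, hε, hball⟩ := Metric.eventually_nhds_iff.mp hev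
    set r : ℝ := ε / 2 with hrdef
    have hr : 0 < r := by positivity
    have hIcc : ∀ t ∈ Set.Icc (a₁ - r) (a₁ + r), v t ≠ 0 ∧ 0 < t := by
      intro t ht
      apply hball
      rw [Real.dist_eq, abs_sub_lt_iff]
      constructor <;> [skip; skip] <;>
        · have := ht.1; have := ht.2; simp only [hrdef] at *; linarith
    -- g is strictly monotone on this interval
    have hsm : StrictMonoOn g (Set.Icc (a₁ - r) (a₁ + r)) := by
      apply strictMonoOn_of_deriv_pos (convex_Icc _ _)
      · intro t ht
        exact (hgcont t (hIcc t ht).2).mono (fun x hx => (hIcc x hx).2)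
      · intro t ht
        rw [interior_Icc] at ht
        have ht' := hIcc t (Ioo_subset_Icc_self ht)
        rw [hgderiv t ht'.2]
        have h1 : 0 < (v t) ^ 2 :=
          lt_of_le_of_ne (sq_nonneg _) (Ne.symm (pow_ne_zero 2 ht'.1))
        have h2 : 0 ≤ (deriv v t) ^ 2 := sq_nonneg _
        have h3 : 0 ≤ (v t) ^ 4 := by positivity
        exact mul_pos ht'.2 (by nlinarith)
    set a₂ : ℝ := a₁ + r with ha₂def
    have ha₂pos : 0 < a₂ := (hIcc a₂ (by constructor <;> simp only [ha₂def] <;> linarith)).2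
    have hlow : 0 < a₁ - r := (hIcc (a₁ - r) (by constructor <;> linarith)).2
    set δ : ℝ := g a₂ with hδdef
    have hδ : 0 < δ := by
      have h1 : g (a₁ - r) < g a₂ := hsm ⟨le_refl _, by linarith⟩
        ⟨by linarith, le_refl _⟩ (by linarith)
      have h2 : 0 ≤ g (a₁ - r) := hg0 _ hlow
      linarith
    -- g a ≥ δ for all a ≥ a₂
    have hgδ : ∀ a ≥ a₂, δ ≤ g a := by
      intro a ha
      exact hgmono ha₂pos (lt_of_lt_of_le ha₂pos ha) ha
    -- monotonicity of v² − 2δ log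
    have hmono2 : MonotoneOn (fun a => v a ^ 2 - 2 * δ * Real.log a) (Set.Ici a₂) := by
      have hder : ∀ a, a₂ ≤ a → HasDerivAt (fun a => v a ^ 2 - 2 * δ * Real.log a)
          (2 * v a * deriv v a - 2 * δ * a⁻¹) a := by
        intro a ha
        have hapos : 0 < a := lt_of_lt_of_le ha₂pos ha
        have h1 : HasDerivAt (fun a => v a ^ 2) (2 * v a * deriv v a) a := by
          have := (hd1 a hapos).fun_pow 2
          simpa [mul_comm] using this
        have h2 : HasDerivAt (fun a => 2 * δ * Real.log a) (2 * δ * a⁻¹) a :=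
          (Real.hasDerivAt_log (ne_of_gt hapos)).const_mul (2 * δ)
        exact h1.sub h2
      apply monotoneOn_of_deriv_nonneg (convex_Ici a₂)
      · exact fun a ha => ((hder a ha).differentiableAt.continuousAt).continuousWithinAt
      · intro a ha
        rw [interior_Ici] at ha
        exact ((hder a ha.le).differentiableAt).differentiableWithinAt
      · intro a ha
        rw [interior_Ici] at ha
        rw [(hder a ha.le).deriv]
        have hapos : 0 < a := lt_of_lt_of_le ha₂pos ha.le
        have h1 : δ ≤ a * v a * deriv v a := hgδ a ha.le
        have h2 : 0 ≤ a⁻¹ * (a * v a * deriv v a - δ) :=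
          mul_nonneg (inv_nonneg.mpr hapos.le) (by linarith)
        have h3 : a⁻¹ * (a * v a * deriv v a - δ)
            = v a * deriv v a - δ * a⁻¹ := by
          field_simp
        nlinarith
    refine ⟨δ, hδ, max a₂ (Real.exp (2 * Real.log a₂)), ?_⟩
    intro a ha
    have ha₂a : a₂ ≤ a := le_trans (le_max_left _ _) ha
    have hfa := hmono2 self_mem_Ici ha₂a ha₂a
    simp only at hfa
    have hloga : 2 * Real.log a₂ ≤ Real.log a := by
      have h1 : Real.exp (2 * Real.log a₂) ≤ a := le_trans (le_max_right _ _) ha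
      calc 2 * Real.log a₂ = Real.log (Real.exp (2 * Real.log a₂)) := (Real.log_exp _).symm
        _ ≤ Real.log a := Real.log_le_log (Real.exp_pos _) h1
    have h4 : δ * (2 * Real.log a₂) ≤ δ * Real.log a :=
      mul_le_mul_of_nonneg_left hloga hδ.le
    have h5 : 0 ≤ v a₂ ^ 2 := sq_nonneg _
    linarith
  refine ⟨key, ?_⟩
  rintro ⟨C, hC⟩ a ha
  by_contra hva
  obtain ⟨c, hc, A, hA⟩ := key ⟨a, ha, hva⟩
  set b : ℝ := max (max A 1) (Real.exp ((C ^ 2 + 1) / c)) with hbdef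
  have hb1 : A ≤ b := le_trans (le_max_left _ _) (le_max_left _ _)
  have hb2 : (1:ℝ) ≤ b := le_trans (le_max_right _ _) (le_max_left _ _)
  have hb3 : Real.exp ((C ^ 2 + 1) / c) ≤ b := le_max_right _ _
  have hlogb : (C ^ 2 + 1) / c ≤ Real.log b := by
    calc (C ^ 2 + 1) / c = Real.log (Real.exp ((C ^ 2 + 1) / c)) := (Real.log_exp _).symm
      _ ≤ Real.log b := Real.log_le_log (Real.exp_pos _) hb3
  have h1 : c * Real.log b ≤ v b ^ 2 := hA b hb1
  have h2 : |v b| ≤ C := hC b (by linarith)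
  have h3 : v b ^ 2 ≤ C ^ 2 := by
    rw [← sq_abs]
    exact pow_le_pow_left₀ (abs_nonneg _) h2 2
  have h4 : C ^ 2 + 1 ≤ c * Real.log b := by
    have := mul_le_mul_of_nonneg_left hlogb hc.le
    rwa [mul_div_cancel₀ _ (ne_of_gt hc)] at this
  linarith
end

section
/- Let v : [0,∞) → ℝ solve v'' + v'/a + v³ = 0 on (0,∞) (the μ = 0 focusing case), continuous at 0 with a·v'(a) → 0 as a → 0⁺. Set w(a) = a^{1/3} v(a) and G(a) = ½a^{2/3}(w')² + ¼w⁴ + (1/18)a^{-4/3}w². Then G'(a) = -(2/27)a^{-7/3} w² ≤ 0; consequently w = O(1) and v(a) = O(a^{-1/3}), v'(a) = O(a^{-2/3}) as a → ∞. -/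
open Real Set Filter

lemma rpow_third (a : ℝ) (ha : 0 < a) (c : ℕ) :
    a ^ ((c:ℝ)/3) = (a ^ ((1:ℝ)/3)) ^ c := by
  rw [show ((c:ℝ)/3) = (1/3) * (c:ℝ) by ring, Real.rpow_mul ha.le, Real.rpow_natCast]

lemma rpow_third_neg (a : ℝ) (ha : 0 < a) (c : ℕ) :
    a ^ (-(c:ℝ)/3) = ((a ^ ((1:ℝ)/3)) ^ c)⁻¹ := by
  rw [show (-(c:ℝ)/3) = -((c:ℝ)/3) by ring, Real.rpow_neg ha.le, rpow_third a ha]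
lemma derivG (v : ℝ → ℝ) (hv : ContDiffOn ℝ 2 v (Set.Ioi 0))
    (hode : ∀ a > (0:ℝ), deriv (deriv v) a + deriv v a / a + (v a) ^ 3 = 0)
    (a : ℝ) (ha : 0 < a) :
    DifferentiableAt ℝ (fun x : ℝ =>
      x ^ ((2:ℝ)/3) * (deriv (fun y => y ^ ((1:ℝ)/3) * v y) x) ^ 2 / 2
        + (x ^ ((1:ℝ)/3) * v x) ^ 4 / 4
        + x ^ (-(4:ℝ)/3) * (x ^ ((1:ℝ)/3) * v x) ^ 2 / 18) a ∧
    deriv (fun x : ℝ =>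
      x ^ ((2:ℝ)/3) * (deriv (fun y => y ^ ((1:ℝ)/3) * v y) x) ^ 2 / 2
        + (x ^ ((1:ℝ)/3) * v x) ^ 4 / 4
        + x ^ (-(4:ℝ)/3) * (x ^ ((1:ℝ)/3) * v x) ^ 2 / 18) a
      = -(2/27) * a ^ (-(7:ℝ)/3) * (a ^ ((1:ℝ)/3) * v a) ^ 2 := by
  have hdiff : ∀ x ∈ Ioi (0:ℝ), HasDerivAt v (deriv v x) x := fun x hx =>
    ((hv.differentiableOn (by norm_num)).differentiableAt (Ioi_mem_nhds hx)).hasDerivAt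
  have hdiff2 : HasDerivAt (deriv v) (deriv (deriv v) a) a :=
    (((hv.deriv_of_isOpen (m := 1) isOpen_Ioi (by norm_num)).differentiableOn one_ne_zero).differentiableAt
      (Ioi_mem_nhds ha)).hasDerivAt
  -- derivative of w on Ioi 0
  have hw : ∀ x ∈ Ioi (0:ℝ), HasDerivAt (fun y => y ^ ((1:ℝ)/3) * v y)
      (1/3 * x ^ ((1:ℝ)/3 - 1) * v x + x ^ ((1:ℝ)/3) * deriv v x) x := fun x hx =>
    (Real.hasDerivAt_rpow_const (Or.inl (ne_of_gt hx))).mul (hdiff x hx)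
  have hwd : ∀ x ∈ Ioi (0:ℝ), deriv (fun y => y ^ ((1:ℝ)/3) * v y) x
      = 1/3 * x ^ ((1:ℝ)/3 - 1) * v x + x ^ ((1:ℝ)/3) * deriv v x := fun x hx =>
    (hw x hx).deriv
  -- replace deriv w by explicit formula, as functions near a
  have heq : (fun x : ℝ =>
      x ^ ((2:ℝ)/3) * (deriv (fun y => y ^ ((1:ℝ)/3) * v y) x) ^ 2 / 2
        + (x ^ ((1:ℝ)/3) * v x) ^ 4 / 4
        + x ^ (-(4:ℝ)/3) * (x ^ ((1:ℝ)/3) * v x) ^ 2 / 18)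
      =ᶠ[nhds a] (fun x : ℝ =>
      x ^ ((2:ℝ)/3) * (1/3 * x ^ ((1:ℝ)/3 - 1) * v x + x ^ ((1:ℝ)/3) * deriv v x) ^ 2 / 2
        + (x ^ ((1:ℝ)/3) * v x) ^ 4 / 4
        + x ^ (-(4:ℝ)/3) * (x ^ ((1:ℝ)/3) * v x) ^ 2 / 18) := by
    filter_upwards [Ioi_mem_nhds ha] with x hx
    rw [hwd x hx]
  -- now compute the derivative of the explicit function
  have hW : HasDerivAt (fun x : ℝ => 1/3 * x ^ ((1:ℝ)/3 - 1) * v x + x ^ ((1:ℝ)/3) * deriv v x)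
      ((1/3 * (((1:ℝ)/3 - 1) * a ^ ((1:ℝ)/3 - 1 - 1)) * v a
          + 1/3 * a ^ ((1:ℝ)/3 - 1) * deriv v a)
        + (((1:ℝ)/3 * a ^ ((1:ℝ)/3 - 1)) * deriv v a + a ^ ((1:ℝ)/3) * deriv (deriv v) a)) a := by
    exact (((Real.hasDerivAt_rpow_const (p := (1:ℝ)/3 - 1) (Or.inl (ne_of_gt ha))).const_mul
      (1/3)).mul (hdiff a ha)).add
      ((Real.hasDerivAt_rpow_const (Or.inl (ne_of_gt ha))).mul hdiff2)
  have hG : HasDerivAt (fun x : ℝ =>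
      x ^ ((2:ℝ)/3) * (1/3 * x ^ ((1:ℝ)/3 - 1) * v x + x ^ ((1:ℝ)/3) * deriv v x) ^ 2 / 2
        + (x ^ ((1:ℝ)/3) * v x) ^ 4 / 4
        + x ^ (-(4:ℝ)/3) * (x ^ ((1:ℝ)/3) * v x) ^ 2 / 18)
      (((2/3 * a ^ ((2:ℝ)/3 - 1)) * (1/3 * a ^ ((1:ℝ)/3 - 1) * v a + a ^ ((1:ℝ)/3) * deriv v a) ^ 2
          + a ^ ((2:ℝ)/3) * (2 * (1/3 * a ^ ((1:ℝ)/3 - 1) * v a + a ^ ((1:ℝ)/3) * deriv v a) ^ 1 *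
            ((1/3 * (((1:ℝ)/3 - 1) * a ^ ((1:ℝ)/3 - 1 - 1)) * v a
              + 1/3 * a ^ ((1:ℝ)/3 - 1) * deriv v a)
            + (((1:ℝ)/3 * a ^ ((1:ℝ)/3 - 1)) * deriv v a + a ^ ((1:ℝ)/3) * deriv (deriv v) a)))) / 2
        + (4 * (a ^ ((1:ℝ)/3) * v a) ^ 3 *
            (1/3 * a ^ ((1:ℝ)/3 - 1) * v a + a ^ ((1:ℝ)/3) * deriv v a)) / 4
        + ((-(4:ℝ)/3 * a ^ (-(4:ℝ)/3 - 1)) * (a ^ ((1:ℝ)/3) * v a) ^ 2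
          + a ^ (-(4:ℝ)/3) * (2 * (a ^ ((1:ℝ)/3) * v a) ^ 1 *
            (1/3 * a ^ ((1:ℝ)/3 - 1) * v a + a ^ ((1:ℝ)/3) * deriv v a))) / 18) a := by
    exact ((((Real.hasDerivAt_rpow_const (Or.inl (ne_of_gt ha))).mul (hW.pow 2)).div_const 2).add
      (((hw a ha).pow 4).div_const 4)).add
      (((Real.hasDerivAt_rpow_const (Or.inl (ne_of_gt ha))).mul ((hw a ha).pow 2)).div_const 18)
  refine ⟨hG.differentiableAt.congr_of_eventuallyEq heq, ?_⟩
  rw [heq.deriv_eq, hG.deriv]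
  -- substitute the ODE
  have hX : (0:ℝ) < a ^ ((1:ℝ)/3) := Real.rpow_pos_of_pos ha _
  have hat : a = (a ^ ((1:ℝ)/3)) ^ (3:ℕ) := by
    rw [← rpow_third a ha 3]; norm_num
  have hv2 : deriv (deriv v) a = -(deriv v a / (a ^ ((1:ℝ)/3)) ^ (3:ℕ)) - (v a) ^ 3 := by
    rw [← hat]; have := hode a ha; linarith
  rw [hv2]
  rw [show ((1:ℝ)/3 - 1 - 1) = -((5:ℕ):ℝ)/3 by norm_num,
    show ((1:ℝ)/3 - 1) = -((2:ℕ):ℝ)/3 by norm_num,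
    show ((2:ℝ)/3 - 1) = -((1:ℕ):ℝ)/3 by norm_num,
    show ((2:ℝ)/3) = ((2:ℕ):ℝ)/3 by norm_num,
    show (-(4:ℝ)/3 - 1) = -((7:ℕ):ℝ)/3 by norm_num,
    show (-(4:ℝ)/3) = -((4:ℕ):ℝ)/3 by norm_num,
    show (-(7:ℝ)/3) = -((7:ℕ):ℝ)/3 by norm_num]
  rw [rpow_third_neg a ha, rpow_third_neg a ha, rpow_third_neg a ha, rpow_third_neg a ha,
    rpow_third_neg a ha, rpow_third a ha]
  have hXne : a ^ ((1:ℝ)/3) ≠ 0 := ne_of_gt hX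
  field_simp
  ring

lemma derivw (v : ℝ → ℝ) (hv : ContDiffOn ℝ 2 v (Set.Ioi 0)) (a : ℝ) (ha : 0 < a) :
    deriv (fun y => y ^ ((1:ℝ)/3) * v y) a
      = 1/3 * a ^ ((1:ℝ)/3 - 1) * v a + a ^ ((1:ℝ)/3) * deriv v a := by
  have hva : HasDerivAt v (deriv v a) a :=
    ((hv.differentiableOn (by norm_num)).differentiableAt (Ioi_mem_nhds ha)).hasDerivAt
  exact ((Real.hasDerivAt_rpow_const (Or.inl (ne_of_gt ha))).mul hva).deriv

set_option maxHeartbeats 1000000 in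
/-- The `μ = 0` focusing equation `v'' + v'/a + v³ = 0`: with `w = a^{1/3} v` and
`G = ½a^{2/3}(w')² + ¼w⁴ + (1/18)a^{-4/3}w²` one has `G' = -(2/27)a^{-7/3}w² ≤ 0`;
consequently `w = O(1)`, `v = O(a^{-1/3})` and `v' = O(a^{-2/3})` as `a → ∞`. -/
theorem stmt6 (v : ℝ → ℝ)
    (hv : ContDiffOn ℝ 2 v (Set.Ioi 0))
    (hode : ∀ a > (0:ℝ), deriv (deriv v) a + deriv v a / a + (v a) ^ 3 = 0)
    (hv0 : ContinuousWithinAt v (Set.Ici 0) 0)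
    (hav0 : Filter.Tendsto (fun a => a * deriv v a) (nhdsWithin 0 (Set.Ioi 0)) (nhds 0)) :
    let w : ℝ → ℝ := fun a => a ^ ((1:ℝ)/3) * v a
    let G : ℝ → ℝ := fun a =>
      a ^ ((2:ℝ)/3) * (deriv w a) ^ 2 / 2 + (w a) ^ 4 / 4 + a ^ (-(4:ℝ)/3) * (w a) ^ 2 / 18
    (∀ a > (0:ℝ), deriv G a = -(2/27) * a ^ (-(7:ℝ)/3) * (w a) ^ 2 ∧ deriv G a ≤ 0) ∧
    ∃ C : ℝ, ∀ a ≥ (1:ℝ),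
      |w a| ≤ C ∧ |v a| ≤ C * a ^ (-(1:ℝ)/3) ∧ |deriv v a| ≤ C * a ^ (-(2:ℝ)/3) := by
  intro w G
  have hwdef : w = (fun y : ℝ => y ^ ((1:ℝ)/3) * v y) := rfl
  have hGdef : G = (fun x : ℝ =>
      x ^ ((2:ℝ)/3) * (deriv (fun y => y ^ ((1:ℝ)/3) * v y) x) ^ 2 / 2
        + (x ^ ((1:ℝ)/3) * v x) ^ 4 / 4
        + x ^ (-(4:ℝ)/3) * (x ^ ((1:ℝ)/3) * v x) ^ 2 / 18) := rfl
  have hGw : ∀ a : ℝ, G a = a ^ ((2:ℝ)/3) * (deriv w a) ^ 2 / 2 + (w a) ^ 4 / 4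
      + a ^ (-(4:ℝ)/3) * (w a) ^ 2 / 18 := fun a => rfl
  clear_value w G
  have hwa : ∀ a : ℝ, w a = a ^ ((1:ℝ)/3) * v a := fun a => by rw [hwdef]
  -- Part 1
  have part1 : ∀ a > (0:ℝ), deriv G a = -(2/27) * a ^ (-(7:ℝ)/3) * (w a) ^ 2 ∧ deriv G a ≤ 0 := by
    intro a ha
    have h := (derivG v hv hode a ha).2
    rw [hGdef]
    constructor
    · rw [h, hwa]
    · rw [h]
      have h1 : (0:ℝ) ≤ a ^ (-(7:ℝ)/3) := Real.rpow_nonneg ha.le _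
      nlinarith [sq_nonneg (a ^ ((1:ℝ)/3) * v a), mul_nonneg h1 (sq_nonneg (a ^ ((1:ℝ)/3) * v a))]
  refine ⟨part1, ?_⟩
  -- differentiability of G on Ioi 0
  have hdiffG : ∀ a > (0:ℝ), DifferentiableAt ℝ G a := by
    intro a ha
    rw [hGdef]; exact (derivG v hv hode a ha).1
  -- G is antitone on [1, ∞)
  have hanti : AntitoneOn G (Ici 1) := by
    apply antitoneOn_of_deriv_nonpos (convex_Ici 1)
    · intro x hx
      exact (hdiffG x (lt_of_lt_of_le one_pos hx)).continuousAt.continuousWithinAt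
    · intro x hx
      rw [interior_Ici] at hx
      exact (hdiffG x (lt_trans one_pos hx)).differentiableWithinAt
    · intro x hx
      rw [interior_Ici] at hx
      exact (part1 x (lt_trans one_pos hx)).2
  set B := G 1 with hBdef
  -- nonnegativity of the three terms of G
  have hterm : ∀ a > (0:ℝ), 0 ≤ a ^ ((2:ℝ)/3) * (deriv w a) ^ 2 / 2
      ∧ 0 ≤ (w a) ^ 4 / 4 ∧ 0 ≤ a ^ (-(4:ℝ)/3) * (w a) ^ 2 / 18 := by
    intro a ha
    refine ⟨by positivity, by positivity, by positivity⟩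
  have hB0 : 0 ≤ B := by
    have h := hterm 1 one_pos
    rw [hBdef, hGw 1]; linarith [h.1, h.2.1, h.2.2]
  have hGa : ∀ a : ℝ, 1 ≤ a → G a ≤ B := by
    intro a ha
    exact hanti (mem_Ici.mpr le_rfl) (mem_Ici.mpr ha) ha
  set C := (1 + 4 * B) + Real.sqrt (2 * B) with hCdef
  have hsq : 0 ≤ Real.sqrt (2 * B) := Real.sqrt_nonneg _
  refine ⟨C, ?_⟩
  intro a ha
  have ha0 : (0:ℝ) < a := lt_of_lt_of_le one_pos ha
  have hGexp := hGw a
  have hGaB := hGa a ha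
  rw [hGexp] at hGaB
  obtain ⟨ht1, ht2, ht3⟩ := hterm a ha0
  -- |w a| ≤ 1 + 4B
  have hw4 : (w a) ^ 4 ≤ 4 * B := by linarith
  have hwbound : |w a| ≤ 1 + 4 * B := by
    rcases le_or_gt (|w a|) 1 with h | h
    · linarith
    · have h4 : |w a| ^ 4 ≤ 4 * B := by rw [← abs_pow]; rw [abs_of_nonneg (by positivity)]; exact hw4
      have := le_self_pow₀ h.le (show 4 ≠ 0 by norm_num)
      linarith
  -- basic rpow facts
  have hr13 : (0:ℝ) < a ^ (-(1:ℝ)/3) := Real.rpow_pos_of_pos ha0 _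
  have hr23 : (0:ℝ) < a ^ (-(2:ℝ)/3) := Real.rpow_pos_of_pos ha0 _
  have hr43 : (0:ℝ) < a ^ (-(4:ℝ)/3) := Real.rpow_pos_of_pos ha0 _
  have hinv : a ^ (-(1:ℝ)/3) * a ^ ((1:ℝ)/3) = 1 := by
    rw [← Real.rpow_add ha0]; norm_num
  -- v a = a^{-1/3} w a
  have hva : v a = a ^ (-(1:ℝ)/3) * w a := by
    rw [hwa]; rw [← mul_assoc, hinv, one_mul]
  -- |v a| bound
  have hvbound : |v a| ≤ (1 + 4 * B) * a ^ (-(1:ℝ)/3) := by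
    rw [hva, abs_mul, abs_of_pos hr13]
    calc a ^ (-(1:ℝ)/3) * |w a| ≤ a ^ (-(1:ℝ)/3) * (1 + 4 * B) :=
          mul_le_mul_of_nonneg_left hwbound hr13.le
      _ = (1 + 4 * B) * a ^ (-(1:ℝ)/3) := by ring
  -- |deriv w a| bound
  have hw2 : a ^ ((2:ℝ)/3) * (deriv w a) ^ 2 ≤ 2 * B := by linarith
  have hmm : a ^ (-(2:ℝ)/3) * a ^ ((2:ℝ)/3) = 1 := by
    rw [← Real.rpow_add ha0]; norm_num
  have hsq13 : (a ^ (-(1:ℝ)/3)) ^ 2 = a ^ (-(2:ℝ)/3) := by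
    rw [← Real.rpow_natCast (a ^ (-(1:ℝ)/3)) 2, ← Real.rpow_mul ha0.le]; norm_num
  have hw'sq : (deriv w a) ^ 2 ≤ 2 * B * (a ^ (-(1:ℝ)/3)) ^ 2 := by
    rw [hsq13]
    nlinarith [mul_le_mul_of_nonneg_left hw2 hr23.le, hmm, sq_nonneg (deriv w a)]
  have hw'bound : |deriv w a| ≤ Real.sqrt (2 * B) * a ^ (-(1:ℝ)/3) := by
    rw [← Real.sqrt_sq_eq_abs]
    calc Real.sqrt ((deriv w a) ^ 2) ≤ Real.sqrt (2 * B * (a ^ (-(1:ℝ)/3)) ^ 2) :=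
          Real.sqrt_le_sqrt hw'sq
      _ = Real.sqrt (2 * B) * a ^ (-(1:ℝ)/3) := by
          rw [Real.sqrt_mul (by linarith), Real.sqrt_sq hr13.le]
  -- deriv v in terms of deriv w
  have hdv : deriv v a = a ^ (-(1:ℝ)/3) * deriv w a - 1/3 * a ^ (-(4:ℝ)/3) * w a := by
    have hdw : deriv w a = 1/3 * a ^ ((1:ℝ)/3 - 1) * v a + a ^ ((1:ℝ)/3) * deriv v a := by
      rw [hwdef]; exact derivw v hv a ha0
    rw [hdw, hwa]
    have c2 : a ^ (-(1:ℝ)/3) * a ^ ((1:ℝ)/3 - 1) = a ^ (-(4:ℝ)/3) * a ^ ((1:ℝ)/3) := by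
      rw [← Real.rpow_add ha0, ← Real.rpow_add ha0]; norm_num
    linear_combination (-(deriv v a)) * hinv + (-(v a)/3) * c2
  -- |deriv v a| bound
  have h2313 : a ^ (-(1:ℝ)/3) * a ^ (-(1:ℝ)/3) = a ^ (-(2:ℝ)/3) := by
    rw [← Real.rpow_add ha0]; norm_num
  have h43le : a ^ (-(4:ℝ)/3) ≤ a ^ (-(2:ℝ)/3) :=
    Real.rpow_le_rpow_of_exponent_le ha (by norm_num)
  have hdvbound : |deriv v a| ≤ C * a ^ (-(2:ℝ)/3) := by
    rw [hdv]
    calc |a ^ (-(1:ℝ)/3) * deriv w a - 1/3 * a ^ (-(4:ℝ)/3) * w a|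
        ≤ |a ^ (-(1:ℝ)/3) * deriv w a| + |1/3 * a ^ (-(4:ℝ)/3) * w a| := abs_sub _ _
      _ = a ^ (-(1:ℝ)/3) * |deriv w a| + 1/3 * a ^ (-(4:ℝ)/3) * |w a| := by
          rw [abs_mul, abs_mul, abs_mul, abs_of_pos hr13, abs_of_pos hr43]; norm_num
      _ ≤ a ^ (-(1:ℝ)/3) * (Real.sqrt (2 * B) * a ^ (-(1:ℝ)/3))
            + 1/3 * a ^ (-(4:ℝ)/3) * (1 + 4 * B) := by
          have e1 := mul_le_mul_of_nonneg_left hw'bound hr13.le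
          have e2 := mul_le_mul_of_nonneg_left hwbound (by linarith : (0:ℝ) ≤ 1/3 * a ^ (-(4:ℝ)/3))
          linarith
      _ = Real.sqrt (2 * B) * (a ^ (-(1:ℝ)/3) * a ^ (-(1:ℝ)/3))
            + 1/3 * (1 + 4 * B) * a ^ (-(4:ℝ)/3) := by ring
      _ ≤ Real.sqrt (2 * B) * a ^ (-(2:ℝ)/3) + (1 + 4 * B) * a ^ (-(2:ℝ)/3) := by
          rw [h2313]
          have : 1/3 * (1 + 4 * B) * a ^ (-(4:ℝ)/3) ≤ (1 + 4 * B) * a ^ (-(2:ℝ)/3) := by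
            nlinarith [mul_le_mul_of_nonneg_left h43le (by linarith : (0:ℝ) ≤ 1 + 4 * B)]
          linarith
      _ = C * a ^ (-(2:ℝ)/3) := by rw [hCdef]; ring
  refine ⟨by rw [hCdef]; linarith, ?_, hdvbound⟩
  calc |v a| ≤ (1 + 4 * B) * a ^ (-(1:ℝ)/3) := hvbound
    _ ≤ C * a ^ (-(1:ℝ)/3) := by
        apply mul_le_mul_of_nonneg_right _ hr13.le
        rw [hCdef]; linarith
end

section
/- Let v : [0,∞) → ℝ be C¹ with v'(0) = 0, C² on (0,∞), solving the defocusing equation -v + v'' + v'/a - v³ = 0 (i.e., μ = -1 case of (D): μv - v'' - v'/a + v³ = 0). If v(0) > 1, then v(a) > 1 for all a > 0, and v(a)² ≥ c·log a for some c > 0 for large a; in particular v is unbounded. -/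
open Real Set

/-- Defocusing equation with `μ = -1`: `v'' + v'/a = v³ - v`. If `v(0) > 1` then
`v(a) > 1` for all `a > 0` and `v(a)² ≥ c·log a` for large `a`; in particular `v`
is unbounded. -/
theorem stmt7 (v : ℝ → ℝ)
    (hv1 : ContDiffOn ℝ 1 v (Set.Ici 0))
    (hv2 : ContDiffOn ℝ 2 v (Set.Ioi 0))
    (hode : ∀ a > (0:ℝ), deriv (deriv v) a + deriv v a / a = (v a) ^ 3 - v a)
    (hv'0 : derivWithin v (Set.Ici 0) 0 = 0)
    (h0 : 1 < v 0) :
    (∀ a > (0:ℝ), 1 < v a) ∧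
    ∃ c > (0:ℝ), ∃ A : ℝ, ∀ a ≥ A, c * Real.log a ≤ (v a) ^ 2 := by
  set w : ℝ → ℝ := fun x => x * deriv v x with hw_def
  -- v is continuous on [0,∞)
  have hvc : ContinuousOn v (Set.Ici 0) := hv1.continuousOn
  -- deriv v is C¹ on (0,∞)
  have hdC1 : ContDiffOn ℝ 1 (deriv v) (Set.Ioi 0) :=
    hv2.deriv_of_isOpen isOpen_Ioi (by norm_num)
  -- second derivative exists on (0,∞)
  have hdd : ∀ a : ℝ, 0 < a → HasDerivAt (deriv v) (deriv (deriv v) a) a := by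
    intro a ha
    have := (hdC1.differentiableOn one_ne_zero).differentiableAt (Ioi_mem_nhds ha)
    exact this.hasDerivAt
  -- w has derivative a * (v a ^ 3 - v a) on (0,∞)
  have hw : ∀ a : ℝ, 0 < a → HasDerivAt w (a * ((v a) ^ 3 - v a)) a := by
    intro a ha
    have h1 : HasDerivAt w (1 * deriv v a + a * deriv (deriv v) a) a :=
      (hasDerivAt_id a).mul (hdd a ha)
    have h2 : deriv (deriv v) a = ((v a) ^ 3 - v a) - deriv v a / a := by
      have := hode a ha; linarith
    convert h1 using 1
    rw [h2]
    field_simp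
    ring
  -- w tends to 0 at 0⁺
  have hwlim : Filter.Tendsto w (nhdsWithin 0 (Set.Ioi 0)) (nhds 0) := by
    have hdw : ContinuousOn (derivWithin v (Set.Ici 0)) (Set.Ici 0) :=
      hv1.continuousOn_derivWithin (uniqueDiffOn_Ici 0) le_rfl
    have h1 : Filter.Tendsto (derivWithin v (Set.Ici 0)) (nhdsWithin 0 (Set.Ioi 0)) (nhds 0) := by
      have := (hdw 0 (self_mem_Ici)).tendsto
      rw [hv'0] at this
      exact this.mono_left (nhdsWithin_mono 0 Ioi_subset_Ici_self)
    have h2 : Filter.Tendsto (fun x : ℝ => x) (nhdsWithin 0 (Set.Ioi 0)) (nhds 0) :=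
      Filter.tendsto_id.mono_left nhdsWithin_le_nhds
    have h3 : Filter.Tendsto (fun x => x * derivWithin v (Set.Ici 0) x)
        (nhdsWithin 0 (Set.Ioi 0)) (nhds 0) := by
      have := h2.mul h1; simpa using this
    refine h3.congr' ?_
    filter_upwards [self_mem_nhdsWithin] with x hx
    rw [derivWithin_of_mem_nhds (Ici_mem_nhds hx)]
  -- Lemma A: if v > 1 on (0, t) then deriv v > 0 on (0, t)
  have lemA : ∀ t : ℝ, (∀ s : ℝ, 0 < s → s < t → 1 < v s) →
      ∀ a : ℝ, 0 < a → a < t → 0 < deriv v a := by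
    intro t hvt a ha hat
    have hwmono : StrictMonoOn w (Set.Ioo 0 t) := by
      apply strictMonoOn_of_deriv_pos (convex_Ioo 0 t)
      · intro x hx
        exact ((hw x hx.1).continuousAt).continuousWithinAt
      · intro x hx
        rw [interior_Ioo] at hx
        rw [(hw x hx.1).deriv]
        have h1 : 1 < v x := hvt x hx.1 hx.2
        have : 0 < (v x) ^ 3 - v x := by
          nlinarith [mul_pos (mul_pos (show (0:ℝ) < v x by linarith)
            (show (0:ℝ) < v x - 1 by linarith)) (show (0:ℝ) < v x + 1 by linarith)]
        exact mul_pos hx.1 this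
    have ha2 : a / 2 ∈ Set.Ioo (0:ℝ) t := ⟨by linarith, by linarith⟩
    have ha1 : a ∈ Set.Ioo (0:ℝ) t := ⟨ha, hat⟩
    have hwa2 : 0 ≤ w (a / 2) := by
      refine le_of_tendsto hwlim ?_
      filter_upwards [Ioo_mem_nhdsGT_of_mem (show (0:ℝ) ∈ Set.Ico 0 (a/2) from ⟨le_refl 0, by linarith⟩)] with s hs
      exact le_of_lt (hwmono ⟨hs.1, by linarith [hs.2, ha2.2]⟩ ha2 hs.2)
    have hwa : 0 < w a := lt_of_le_of_lt hwa2 (hwmono ha2 ha1 (by linarith))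
    by_contra h
    push_neg at h
    have hnp : a * deriv v a ≤ 0 := mul_nonpos_iff.mpr (Or.inl ⟨ha.le, h⟩)
    have : 0 < a * deriv v a := hwa
    linarith
  -- Part 1: v > 1 on (0, ∞)
  have part1 : ∀ a : ℝ, 0 < a → 1 < v a := by
    by_contra hcon
    push_neg at hcon
    obtain ⟨a₀, ha₀, hva₀⟩ := hcon
    set S : Set ℝ := {a | 0 < a ∧ v a ≤ 1} with hS_def
    have hSne : S.Nonempty := ⟨a₀, ha₀, hva₀⟩
    have hSbdd : BddBelow S := ⟨0, fun x hx => hx.1.le⟩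
    set t := sInf S with ht_def
    have htC : t ∈ Set.Ici (0:ℝ) ∩ v ⁻¹' (Set.Iic 1) := by
      have hclosed : IsClosed (Set.Ici (0:ℝ) ∩ v ⁻¹' (Set.Iic 1)) :=
        hvc.preimage_isClosed_of_isClosed isClosed_Ici isClosed_Iic
      have hsub : S ⊆ Set.Ici (0:ℝ) ∩ v ⁻¹' (Set.Iic 1) := fun x hx => ⟨hx.1.le, hx.2⟩
      have h1 : t ∈ closure (Set.Ici (0:ℝ) ∩ v ⁻¹' (Set.Iic 1)) :=
        closure_mono hsub (csInf_mem_closure hSne hSbdd)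
      rwa [hclosed.closure_eq] at h1
    have hvt : v t ≤ 1 := htC.2
    have ht0 : 0 ≤ t := htC.1
    have htpos : 0 < t := by
      rcases lt_or_eq_of_le ht0 with h | h
      · exact h
      · exfalso; rw [← h] at hvt; linarith
    have hvgt : ∀ s : ℝ, 0 < s → s < t → 1 < v s := by
      intro s hs hst
      by_contra hle
      push_neg at hle
      exact (notMem_of_lt_csInf hst hSbdd) ⟨hs, hle⟩
    have hmono : StrictMonoOn v (Set.Icc 0 t) := by
      apply strictMonoOn_of_deriv_pos (convex_Icc 0 t)
      · exact hvc.mono (fun x hx => hx.1)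
      · intro x hx
        rw [interior_Icc] at hx
        exact lemA t hvgt x hx.1 hx.2
    have : v 0 < v t := hmono ⟨le_refl 0, ht0⟩ ⟨ht0, le_refl t⟩ htpos
    linarith
  -- deriv v > 0 everywhere on (0, ∞)
  have hdpos : ∀ a : ℝ, 0 < a → 0 < deriv v a :=
    fun a ha => lemA (a + 1) (fun s hs _ => part1 s hs) a ha (lt_add_one a)
  -- v is monotone on [0, ∞)
  have hvmono : MonotoneOn v (Set.Ici 0) := by
    apply StrictMonoOn.monotoneOn
    apply strictMonoOn_of_deriv_pos (convex_Ici 0) hvc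
    intro x hx
    rw [interior_Ici] at hx
    exact hdpos x hx
  refine ⟨fun a ha => part1 a ha, ?_⟩
  set m : ℝ := (v 1) ^ 3 - v 1 with hm_def
  have hv1gt : 1 < v 1 := part1 1 one_pos
  have hm : 0 < m := by
    rw [hm_def]
    nlinarith [mul_pos (mul_pos (show (0:ℝ) < v 1 by linarith)
      (show (0:ℝ) < v 1 - 1 by linarith)) (show (0:ℝ) < v 1 + 1 by linarith)]
  -- lower bound on w for a ≥ 1
  have hw_lb : ∀ a : ℝ, 1 ≤ a → w 1 + m * (a - 1) ≤ w a := by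
    intro a ha
    set g : ℝ → ℝ := fun x => w x - m * x with hg_def
    have hgd : ∀ x : ℝ, 1 ≤ x → HasDerivAt g (x * ((v x) ^ 3 - v x) - m) x := by
      intro x hx
      exact (hw x (by linarith)).sub ((hasDerivAt_id x).const_mul m |>.congr_deriv (by ring))
    have hgmono : MonotoneOn g (Set.Ici 1) := by
      apply monotoneOn_of_deriv_nonneg (convex_Ici 1)
      · intro x hx
        exact ((hgd x hx).continuousAt).continuousWithinAt
      · intro x hx
        rw [interior_Ici] at hx
        exact ((hgd x hx.le).differentiableAt).differentiableWithinAt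
      · intro x hx
        rw [interior_Ici] at hx
        have hx1 : (1:ℝ) < x := hx
        rw [(hgd x hx1.le).deriv]
        have hvx : v 1 ≤ v x := hvmono (by norm_num)
          (show x ∈ Set.Ici (0:ℝ) from le_of_lt (show (0:ℝ) < x by linarith)) hx1.le
        have h1 : (v 1) ^ 3 - v 1 ≤ (v x) ^ 3 - v x := by
          nlinarith [mul_nonneg (sub_nonneg.mpr hvx)
            (show (0:ℝ) ≤ (v x) ^ 2 + v x * v 1 + (v 1) ^ 2 - 1 by nlinarith [hvx, hv1gt]),
            hvx, hv1gt]
        have h2 : m ≤ (v x) ^ 3 - v x := by rw [hm_def]; exact h1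
        nlinarith [h2, hm, hx1]
    have := hgmono (self_mem_Ici) (show a ∈ Set.Ici (1:ℝ) from ha) ha
    simp only [hg_def] at this
    linarith
  have hw1 : 0 < w 1 := by
    have := hdpos 1 one_pos
    simpa [hw_def] using this
  -- deriv v ≥ m/2 for a ≥ 2
  have hdv_lb : ∀ a : ℝ, 2 ≤ a → m / 2 ≤ deriv v a := by
    intro a ha
    have h1 : w 1 + m * (a - 1) ≤ w a := hw_lb a (by linarith)
    have h2 : a * (m / 2) ≤ a * deriv v a := by
      have hwa : w a = a * deriv v a := rfl
      nlinarith [mul_nonneg hm.le (show (0:ℝ) ≤ a / 2 - 1 by linarith), hw1, h1, hwa.symm.le, hwa.le]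
    exact le_of_mul_le_mul_left h2 (by linarith)
  -- linear growth of v for a ≥ 2
  have hv_lb : ∀ a : ℝ, 2 ≤ a → v 2 + m / 2 * (a - 2) ≤ v a := by
    intro a ha
    set g : ℝ → ℝ := fun x => v x - m / 2 * x with hg_def
    have hgd : ∀ x : ℝ, 0 < x → HasDerivAt g (deriv v x - m / 2) x := by
      intro x hx
      have hvd : HasDerivAt v (deriv v x) x :=
        ((hv2.differentiableOn (by norm_num)).differentiableAt (Ioi_mem_nhds hx)).hasDerivAt
      exact hvd.sub ((hasDerivAt_id x).const_mul (m / 2) |>.congr_deriv (by ring))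
    have hgmono : MonotoneOn g (Set.Ici 2) := by
      apply monotoneOn_of_deriv_nonneg (convex_Ici 2)
      · intro x hx
        have hx2 : (2:ℝ) ≤ x := hx
        exact ((hgd x (by linarith)).continuousAt).continuousWithinAt
      · intro x hx
        rw [interior_Ici] at hx
        have hx2 : (2:ℝ) < x := hx
        exact ((hgd x (by linarith)).differentiableAt).differentiableWithinAt
      · intro x hx
        rw [interior_Ici] at hx
        have hx2 : (2:ℝ) < x := hx
        rw [(hgd x (by linarith)).deriv]
        have := hdv_lb x hx2.le
        linarith
    have := hgmono (self_mem_Ici) (show a ∈ Set.Ici (2:ℝ) from ha) ha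
    simp only [hg_def] at this
    linarith
  refine ⟨m ^ 2 / 16, by positivity, 4, ?_⟩
  intro a ha
  have hv2gt : 1 < v 2 := part1 2 two_pos
  have hva : m * a / 4 ≤ v a := by
    have h1 := hv_lb a (by linarith)
    nlinarith [mul_nonneg hm.le (show (0:ℝ) ≤ a / 4 - 1 by linarith), h1, hv2gt]
  have hva0 : 0 ≤ m * a / 4 := by positivity
  have hlog : Real.log a ≤ a - 1 := Real.log_le_sub_one_of_pos (by linarith)
  have hsq : (m * a / 4) ^ 2 ≤ (v a) ^ 2 := by
    have := pow_le_pow_left₀ hva0 hva 2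
    linarith
  have hlog2 : m ^ 2 / 16 * Real.log a ≤ m ^ 2 / 16 * (a - 1) :=
    mul_le_mul_of_nonneg_left hlog (by positivity)
  have hkey : m ^ 2 / 16 * (a - 1) ≤ (m * a / 4) ^ 2 := by
    nlinarith [mul_nonneg (sq_nonneg m) (show (0:ℝ) ≤ a ^ 2 - a + 1 by nlinarith)]
  linarith
end

section
/- Let v : [0,∞) → ℝ be C¹ with v'(0)=0, C² on (0,∞), solving v'' + (1/a)v' = v³ - v on (0,∞) (defocusing, μ = -1). If |v(0)| < 1 then |v(a)| ≤ |v(0)| < 1 for all a > 0. -/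
open Real Set

/-- Defocusing equation with `μ = -1`: `v'' + v'/a = v³ - v`. If `|v(0)| < 1` then
`|v(a)| ≤ |v(0)| < 1` for all `a > 0`. -/
theorem stmt8 (v : ℝ → ℝ)
    (hv1 : ContDiffOn ℝ 1 v (Set.Ici 0))
    (hv2 : ContDiffOn ℝ 2 v (Set.Ioi 0))
    (hode : ∀ a > (0:ℝ), deriv (deriv v) a + deriv v a / a = (v a) ^ 3 - v a)
    (hv'0 : derivWithin v (Set.Ici 0) 0 = 0)
    (h0 : |v 0| < 1) :
    ∀ a > (0:ℝ), |v a| ≤ |v 0| := by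
  set w : ℝ → ℝ := derivWithin v (Set.Ici 0) with hw_def
  set E : ℝ → ℝ := fun a => (w a)^2/2 + (v a)^2/2 - (v a)^4/4 with hE_def
  have hweq : ∀ a ∈ Set.Ioi (0:ℝ), w a = deriv v a := by
    intro a ha
    exact derivWithin_of_mem_nhds (Ici_mem_nhds ha)
  -- continuity of E on Ici 0
  have hwc : ContinuousOn w (Set.Ici 0) :=
    (hv1.derivWithin (m := 0) (uniqueDiffOn_Ici 0) (by norm_num)).continuousOn
  have hvc : ContinuousOn v (Set.Ici 0) := hv1.continuousOn
  have hEc : ContinuousOn E (Set.Ici 0) :=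
    (((hwc.pow 2).div_const 2).add ((hvc.pow 2).div_const 2)).sub ((hvc.pow 4).div_const 4)
  -- derivative of E on Ioi 0
  have hdv2 : ContDiffOn ℝ 1 (deriv v) (Set.Ioi 0) :=
    hv2.deriv_of_isOpen isOpen_Ioi (by norm_num)
  have key : ∀ a ∈ Set.Ioi (0:ℝ), HasDerivAt E (-(deriv v a)^2 / a) a := by
    intro a ha
    have ha' : (0:ℝ) < a := ha
    have hva : HasDerivAt v (deriv v a) a :=
      ((hv2.differentiableOn (by norm_num)).differentiableAt
        (isOpen_Ioi.mem_nhds ha)).hasDerivAt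
    have hva' : HasDerivAt (deriv v) (deriv (deriv v) a) a :=
      ((hdv2.differentiableOn one_ne_zero).differentiableAt
        (isOpen_Ioi.mem_nhds ha)).hasDerivAt
    have hwa : HasDerivAt w (deriv (deriv v) a) a := by
      refine hva'.congr_of_eventuallyEq ?_
      filter_upwards [isOpen_Ioi.mem_nhds ha] with t ht using hweq t ht
    have hE' := (((hwa.pow 2).div_const 2).add ((hva.pow 2).div_const 2)).sub
      ((hva.pow 4).div_const 4)
    have hodea := hode a ha'
    have h2 : deriv (deriv v) a = (v a)^3 - v a - deriv v a / a := by linarith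
    refine hE'.congr_deriv ?_
    rw [hweq a ha, h2]
    field_simp
    ring
  have hEdiff : DifferentiableOn ℝ E (interior (Set.Ici (0:ℝ))) := by
    rw [interior_Ici]
    exact fun a ha => (key a ha).differentiableAt.differentiableWithinAt
  have hEnonpos : ∀ a ∈ interior (Set.Ici (0:ℝ)), deriv E a ≤ 0 := by
    rw [interior_Ici]
    intro a ha
    rw [(key a ha).deriv]
    have ha' : (0:ℝ) < a := ha
    exact div_nonpos_of_nonpos_of_nonneg (by nlinarith [sq_nonneg (deriv v a)]) ha'.le
  have hmono : AntitoneOn E (Set.Ici 0) :=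
    antitoneOn_of_deriv_nonpos (convex_Ici 0) hEc hEdiff hEnonpos
  have hEle : ∀ a ∈ Set.Ici (0:ℝ), E a ≤ E 0 :=
    fun a ha => hmono self_mem_Ici ha ha
  have hE0 : E 0 = (v 0)^2/2 - (v 0)^4/4 := by
    show (w 0)^2/2 + (v 0)^2/2 - (v 0)^4/4 = _
    rw [hv'0]
    ring
  clear_value E w
  have h0sq : (v 0)^2 < 1 := by
    nlinarith [sq_abs (v 0), abs_nonneg (v 0)]
  -- Step 1: (v a)^2 < 1 for all a ≥ 0
  have hsq1 : ∀ a : ℝ, 0 ≤ a → (v a)^2 < 1 := by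
    intro a ha0
    by_contra h
    push_neg at h
    have hmem : (1:ℝ) ∈ Set.Icc ((fun t => (v t)^2) 0) ((fun t => (v t)^2) a) :=
      ⟨h0sq.le, h⟩
    have hcont : ContinuousOn (fun t => (v t)^2) (Set.Icc 0 a) :=
      (hvc.mono (Set.Icc_subset_Ici_self)).pow 2
    obtain ⟨b, hb, hb1⟩ := intermediate_value_Icc ha0 hcont hmem
    have hb1' : (v b)^2 = 1 := hb1
    have hbE : E b ≤ E 0 := hEle b hb.1
    have hEb : E b = (w b)^2/2 + 1/2 - 1/4 := by
      rw [hE_def]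
      show (w b)^2/2 + (v b)^2/2 - (v b)^4/4 = _
      rw [show (v b)^4 = ((v b)^2)^2 by ring, hb1']
      norm_num
    nlinarith [sq_nonneg (w b), mul_pos (sub_pos.mpr h0sq) (sub_pos.mpr h0sq)]
  -- Step 2: conclude
  intro a ha
  have h1 : (v a)^2 < 1 := hsq1 a ha.le
  by_contra habs
  push_neg at habs
  have h2 : (v 0)^2 < (v a)^2 := by
    nlinarith [sq_abs (v a), sq_abs (v 0), abs_nonneg (v 0), abs_nonneg (v a)]
  have h3 : E a ≤ E 0 := hEle a (le_of_lt ha)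
  have h4 : (v a)^2/2 - (v a)^4/4 ≤ E a := by
    have : E a = (w a)^2/2 + (v a)^2/2 - (v a)^4/4 := by rw [hE_def]
    nlinarith [sq_nonneg (w a)]
  have h5 : (0:ℝ) < 2 - (v a)^2 - (v 0)^2 := by linarith
  nlinarith [mul_pos (sub_pos.mpr h2) h5]
end

section
/- Let v solve the defocusing equation v'' + v'/a = v³ - v on (0,∞) with v'(0) = 0 and |v(0)| < 1. Set w = √a·v and E(a) = ½(w')² + w²/(8a²) + ½w² - w⁴/(4a). Then E(a) ≥ ½(w')² + (½ - v(0)²/4)w² > 0 and E'(a) ≤ (c/a)E(a) with c = v(0)²/(2 - v(0)²) < 1. Consequently E, w, and w' are bounded as a → ∞, so v(a) = O(a^{-1/2}). -/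
open Real Set

theorem stmt9_apriori (v : ℝ → ℝ)
    (hv1 : ContDiffOn ℝ 1 v (Set.Ici 0))
    (hv2 : ContDiffOn ℝ 2 v (Set.Ioi 0))
    (hode : ∀ a > (0:ℝ), deriv (deriv v) a + deriv v a / a = (v a) ^ 3 - v a)
    (hv'0 : derivWithin v (Set.Ici 0) 0 = 0)
    (h0 : |v 0| < 1) :
    ∀ a : ℝ, 0 ≤ a → (v a) ^ 2 ≤ (v 0) ^ 2 := by
  have hdv : ∀ a ∈ Ioi (0:ℝ), HasDerivAt v (deriv v a) a := fun a ha =>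
    ((hv2.differentiableOn (by norm_num)).differentiableAt (Ioi_mem_nhds ha)).hasDerivAt
  have hddv : ∀ a ∈ Ioi (0:ℝ), HasDerivAt (deriv v) (deriv (deriv v) a) a := fun a ha =>
    (((hv2.deriv_of_isOpen (m := 1) isOpen_Ioi (by norm_num)).differentiableOn
      (by norm_num)).differentiableAt (Ioi_mem_nhds ha)).hasDerivAt
  set p := derivWithin v (Set.Ici 0) with hp
  have hpa : ∀ a ∈ Ioi (0:ℝ), p a = deriv v a := fun a ha =>
    derivWithin_of_mem_nhds (mem_nhds_iff.2 ⟨Ioi 0, Ioi_subset_Ici le_rfl, isOpen_Ioi, ha⟩)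
  set H : ℝ → ℝ := fun a => (p a)^2/2 + (v a)^2/2 - (v a)^4/4 with hH
  have hvc : ContinuousOn v (Ici 0) := hv1.continuousOn
  have hpc : ContinuousOn p (Ici 0) :=
    hv1.continuousOn_derivWithin (uniqueDiffOn_Ici 0) (by norm_num)
  have hHc : ContinuousOn H (Ici 0) := by
    apply ContinuousOn.sub
    · exact ((hpc.pow 2).div_const 2).add ((hvc.pow 2).div_const 2)
    · exact (hvc.pow 4).div_const 4
  have hHd : ∀ a ∈ Ioi (0:ℝ), HasDerivAt H (-(deriv v a)^2/a) a := by
    intro a ha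
    have hEq : H =ᶠ[nhds a] fun b => (deriv v b)^2/2 + (v b)^2/2 - (v b)^4/4 := by
      filter_upwards [Ioi_mem_nhds ha] with b hb
      simp only [hH, hpa b hb]
    have h1 : HasDerivAt (fun b => (deriv v b)^2/2 + (v b)^2/2 - (v b)^4/4)
        (2 * deriv v a ^ 1 * deriv (deriv v) a / 2 + 2 * v a ^ 1 * deriv v a / 2
          - (4 * v a ^ 3 * deriv v a) / 4) a := by
      exact ((((hddv a ha).pow 2).div_const 2).add (((hdv a ha).pow 2).div_const 2)).sub
        (((hdv a ha).pow 4).div_const 4)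
    have h2 : (2 * deriv v a ^ 1 * deriv (deriv v) a / 2 + 2 * v a ^ 1 * deriv v a / 2
          - (4 * v a ^ 3 * deriv v a) / 4) = -(deriv v a)^2/a := by
      have hode' := hode a ha
      have ha' : a ≠ 0 := ne_of_gt ha
      have : deriv (deriv v) a = (v a)^3 - v a - deriv v a / a := by linarith
      rw [this]; field_simp; ring
    rw [← h2]
    exact h1.congr_of_eventuallyEq hEq
  have hAnti : AntitoneOn H (Ici 0) := by
    apply antitoneOn_of_deriv_nonpos (convex_Ici 0) hHc
    · intro a ha
      rw [interior_Ici] at ha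
      exact (hHd a ha).differentiableAt.differentiableWithinAt
    · intro a ha
      rw [interior_Ici] at ha
      rw [(hHd a ha).deriv]
      have : (0:ℝ) < a := ha
      have h2 : (deriv v a)^2 ≥ 0 := sq_nonneg _
      rw [neg_div]
      exact neg_nonpos.2 (by positivity)
  have hH0 : H 0 = (v 0)^2/2 - (v 0)^4/4 := by simp [hH, hv'0]
  have key : ∀ a : ℝ, 0 ≤ a → (v a)^2/2 - (v a)^4/4 ≤ (v 0)^2/2 - (v 0)^4/4 := by
    intro a ha
    have := hAnti (self_mem_Ici) (mem_Ici.2 ha) ha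
    rw [hH0] at this
    simp only [hH] at this
    nlinarith [sq_nonneg (p a)]
  have hx0 : (v 0)^2 < 1 := by
    have := abs_nonneg (v 0)
    nlinarith [sq_abs (v 0)]
  intro a ha
  by_contra hgt
  push_neg at hgt
  -- v a ^ 2 > v 0 ^ 2, so v a ^ 2 ≥ 2 - v 0 ^2 > 1
  have h1 : (v a)^2 ≥ 2 - (v 0)^2 := by nlinarith [key a ha]
  -- IVT: find a₂ with v a₂ ^ 2 = 1
  have hcont : ContinuousOn (fun t => (v t)^2) (Icc 0 a) :=
    (hvc.mono (Icc_subset_Ici_self)).pow 2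
  have hiv : (1:ℝ) ∈ Set.Icc ((v 0)^2) ((v a)^2) := ⟨le_of_lt hx0, by linarith⟩
  obtain ⟨a₂, ha₂, hva₂⟩ := intermediate_value_Icc ha hcont hiv
  have hk := key a₂ ha₂.1
  simp only at hva₂
  nlinarith [hk, hva₂, sq_nonneg (v 0 ^ 2 - 1)]

theorem stmt9_unique (v : ℝ → ℝ)
    (hv1 : ContDiffOn ℝ 1 v (Set.Ici 0))
    (hdv : ∀ a ∈ Ioi (0:ℝ), HasDerivAt v (deriv v a) a)
    (hddv : ∀ a ∈ Ioi (0:ℝ), HasDerivAt (deriv v) (deriv (deriv v) a) a)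
    (hode : ∀ a > (0:ℝ), deriv (deriv v) a + deriv v a / a = (v a) ^ 3 - v a)
    (hbd : ∀ a : ℝ, 0 ≤ a → (v a) ^ 2 ≤ 1)
    (a₀ : ℝ) (ha₀ : 0 < a₀) (hva₀ : v a₀ = 0) (hdva₀ : deriv v a₀ = 0) :
    v 0 = 0 := by
  have key : ∀ t ∈ Ioc (0:ℝ) a₀, v t = 0 := by
    intro t ht
    set ε := t
    set K : ℝ := 1 + 1/ε with hK
    have hε : 0 < ε := ht.1
    have hKpos : 1 ≤ K := by
      have : 0 < 1/ε := by positivity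
      rw [hK]; linarith
    set g : ℝ → ℝ × ℝ := fun s => (v (a₀ - s), deriv v (a₀ - s)) with hg
    set g' : ℝ → ℝ × ℝ := fun s => (-(deriv v (a₀ - s)), -(deriv (deriv v) (a₀ - s))) with hg'
    have hmem : ∀ x ∈ Icc (0:ℝ) (a₀ - ε), 0 < a₀ - x := by
      intro x hx
      have := hx.2
      linarith [ht.1, ht.2]
    have hder : ∀ x ∈ Icc (0:ℝ) (a₀ - ε), HasDerivAt g (g' x) x := by
      intro x hx
      have hb := hmem x hx
      have hin : HasDerivAt (fun s : ℝ => a₀ - s) (-1) x := by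
        simpa using (hasDerivAt_id x).const_sub a₀
      have h1 : HasDerivAt (fun s => v (a₀ - s)) (deriv v (a₀ - x) * (-1)) x :=
        (hdv _ hb).comp x hin
      have h2 : HasDerivAt (fun s => deriv v (a₀ - s)) (deriv (deriv v) (a₀ - x) * (-1)) x :=
        (hddv _ hb).comp x hin
      have := h1.prodMk h2
      simpa [hg, hg', mul_comm] using this
    have hcont : ContinuousOn g (Icc 0 (a₀ - ε)) := by
      intro x hx
      exact ((hder x hx).continuousAt).continuousWithinAt
    have hbound : ∀ x ∈ Ico (0:ℝ) (a₀ - ε), ‖g' x‖ ≤ K * ‖g x‖ + 0 := by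
      intro x hx
      have hb := hmem x ⟨hx.1, le_of_lt hx.2⟩
      set b := a₀ - x
      have hεb : ε ≤ b := by
        have := hx.2
        simp only [b]
        linarith
      have hvb : (v b)^2 ≤ 1 := hbd b (le_of_lt hb)
      have hodeb := hode b hb
      have hnorm_g : ‖g x‖ = max |v b| |deriv v b| := by
        simp [hg, Prod.norm_def, Real.norm_eq_abs, b]
      have hnorm_g' : ‖g' x‖ = max |deriv v b| |deriv (deriv v) b| := by
        simp [hg', Prod.norm_def, Real.norm_eq_abs, b]
      rw [hnorm_g, hnorm_g', add_zero]
      have hmax1 : |v b| ≤ max |v b| |deriv v b| := le_max_left _ _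
      have hmax2 : |deriv v b| ≤ max |v b| |deriv v b| := le_max_right _ _
      apply max_le
      · calc |deriv v b| ≤ max |v b| |deriv v b| := hmax2
          _ ≤ K * max |v b| |deriv v b| := by
              nlinarith [abs_nonneg (v b), le_max_left |v b| |deriv v b|,
                abs_nonneg (deriv v b)]
      · have hvd : deriv (deriv v) b = (v b)^3 - v b - deriv v b / b := by linarith
        have h3 : |deriv (deriv v) b| ≤ |v b| + |deriv v b| / ε := by
          rw [hvd]
          have h4 : |(v b)^3 - v b| ≤ |v b| := by
            rw [abs_le]
            constructor <;> nlinarith [abs_nonneg (v b), sq_abs (v b), neg_abs_le (v b),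
              le_abs_self (v b)]
          have h5 : |deriv v b / b| ≤ |deriv v b| / ε := by
            rw [abs_div, abs_of_pos hb]
            apply div_le_div_of_nonneg_left (abs_nonneg _) hε hεb
          calc |(v b)^3 - v b - deriv v b / b| ≤ |(v b)^3 - v b| + |deriv v b / b| :=
                abs_sub _ _
            _ ≤ |v b| + |deriv v b| / ε := add_le_add h4 h5
        calc |deriv (deriv v) b| ≤ |v b| + |deriv v b| / ε := h3
          _ ≤ max |v b| |deriv v b| + (max |v b| |deriv v b|) / ε := by
              apply add_le_add hmax1
              gcongr
          _ = K * max |v b| |deriv v b| := by rw [hK]; field_simp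
    have hg0 : ‖g 0‖ ≤ 0 := by
      simp [hg, hva₀, hdva₀, Prod.norm_def]
    have := norm_le_gronwallBound_of_norm_deriv_right_le hcont
      (fun x hx => (hder x ⟨hx.1, le_of_lt hx.2⟩).hasDerivWithinAt) hg0 hbound
    have hfin := this (a₀ - t) ⟨by linarith [ht.2], by simp [ε]⟩
    rw [gronwallBound_ε0_δ0] at hfin
    have : ‖g (a₀ - t)‖ = 0 := le_antisymm hfin (norm_nonneg _)
    have hvt : v (a₀ - (a₀ - t)) = 0 := by
      have := congrArg Prod.fst (norm_eq_zero.1 this)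
      simpa [hg] using this
    simpa using hvt
  -- now take limit t → 0+
  have h1 : Filter.Tendsto v (nhdsWithin 0 (Ioi 0)) (nhds (v 0)) :=
    ((hv1.continuousOn 0 self_mem_Ici).mono_left (nhdsWithin_mono 0 (Ioi_subset_Ici le_rfl)))
  have h2 : Filter.Tendsto v (nhdsWithin 0 (Ioi 0)) (nhds 0) := by
    apply Filter.Tendsto.congr' _ tendsto_const_nhds
    filter_upwards [Ioc_mem_nhdsGT ha₀] with t ht
    exact (key t ht).symm
  exact tendsto_nhds_unique h1 h2

theorem stmt9_w_deriv (v : ℝ → ℝ)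
    (hdv : ∀ a ∈ Ioi (0:ℝ), HasDerivAt v (deriv v a) a) :
    ∀ a ∈ Ioi (0:ℝ), HasDerivAt (fun a => Real.sqrt a * v a)
      (v a / (2 * Real.sqrt a) + Real.sqrt a * deriv v a) a := by
  intro a ha
  have ha' : (0:ℝ) < a := ha
  have hs0 : Real.sqrt a ≠ 0 := by positivity
  have h := (Real.hasDerivAt_sqrt (ne_of_gt ha')).mul (hdv a ha)
  refine h.congr_deriv ?_
  field_simp

theorem stmt9_dw_deriv (v : ℝ → ℝ)
    (hdv : ∀ a ∈ Ioi (0:ℝ), HasDerivAt v (deriv v a) a)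
    (hddv : ∀ a ∈ Ioi (0:ℝ), HasDerivAt (deriv v) (deriv (deriv v) a) a)
    (hode : ∀ a > (0:ℝ), deriv (deriv v) a + deriv v a / a = (v a) ^ 3 - v a) :
    ∀ a ∈ Ioi (0:ℝ), HasDerivAt (fun a => v a / (2 * Real.sqrt a) + Real.sqrt a * deriv v a)
      (-(1 + 1/(4*a^2)) * (Real.sqrt a * v a) + (Real.sqrt a * v a)^3 / a) a := by
  intro a ha
  have ha' : (0:ℝ) < a := ha
  have hs0 : Real.sqrt a ≠ 0 := by positivity
  have ha0 : a ≠ 0 := ne_of_gt ha'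
  have hs : Real.sqrt a * Real.sqrt a = a := Real.mul_self_sqrt ha'.le
  have h2s : (2 : ℝ) * Real.sqrt a ≠ 0 := by positivity
  have h1 : HasDerivAt (fun b => v b / (2 * Real.sqrt b))
      ((deriv v a * (2 * Real.sqrt a) - v a * (2 * (1 / (2 * Real.sqrt a)))) /
        (2 * Real.sqrt a)^2) a :=
    (hdv a ha).div ((Real.hasDerivAt_sqrt (ne_of_gt ha')).const_mul 2) h2s
  have h2 : HasDerivAt (fun b => Real.sqrt b * deriv v b)
      (1 / (2 * Real.sqrt a) * deriv v a + Real.sqrt a * deriv (deriv v) a) a :=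
    (Real.hasDerivAt_sqrt (ne_of_gt ha')).mul (hddv a ha)
  have h := h1.add h2
  refine h.congr_deriv ?_
  have hdd : deriv (deriv v) a = (v a)^3 - v a - deriv v a / a := by
    have := hode a ha'; linarith
  rw [hdd]
  field_simp
  rw [show Real.sqrt a ^ 4 = (Real.sqrt a ^ 2) ^ 2 by ring, Real.sq_sqrt ha'.le]
  ring

theorem stmt9_E_deriv (v : ℝ → ℝ)
    (hdv : ∀ a ∈ Ioi (0:ℝ), HasDerivAt v (deriv v a) a)
    (hddv : ∀ a ∈ Ioi (0:ℝ), HasDerivAt (deriv v) (deriv (deriv v) a) a)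
    (hode : ∀ a > (0:ℝ), deriv (deriv v) a + deriv v a / a = (v a) ^ 3 - v a)
    (hw : ∀ a ∈ Ioi (0:ℝ), HasDerivAt (fun a => Real.sqrt a * v a)
      (v a / (2 * Real.sqrt a) + Real.sqrt a * deriv v a) a)
    (hdw : ∀ a ∈ Ioi (0:ℝ), HasDerivAt (fun a => v a / (2 * Real.sqrt a) + Real.sqrt a * deriv v a)
      (-(1 + 1/(4*a^2)) * (Real.sqrt a * v a) + (Real.sqrt a * v a)^3 / a) a) :
    ∀ a ∈ Ioi (0:ℝ), HasDerivAt (fun b =>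
        (v b / (2 * Real.sqrt b) + Real.sqrt b * deriv v b)^2/2
        + (Real.sqrt b * v b)^2/(8*b^2) + (Real.sqrt b * v b)^2/2
        - (Real.sqrt b * v b)^4/(4*b))
      (-(Real.sqrt a * v a)^2/(4*a^3) + (Real.sqrt a * v a)^4/(4*a^2)) a := by
  intro a ha
  have ha' : (0:ℝ) < a := ha
  have ha0 : a ≠ 0 := ne_of_gt ha'
  have h8 : (8:ℝ) * a^2 ≠ 0 := by positivity
  have h4 : (4:ℝ) * a ≠ 0 := by positivity
  have T1 := ((hdw a ha).pow 2).div_const 2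
  have hden : HasDerivAt (fun b : ℝ => 8 * b^2) (8 * (2 * a^1)) a :=
    (hasDerivAt_pow 2 a).const_mul 8
  have hden4 : HasDerivAt (fun b : ℝ => 4 * b) (4 * 1) a :=
    (hasDerivAt_id a).const_mul 4
  have T2 := ((hw a ha).pow 2).div hden h8
  have T3 := ((hw a ha).pow 2).div_const 2
  have T4 := ((hw a ha).pow 4).div hden4 h4
  have h := ((T1.add T2).add T3).sub T4
  refine h.congr_deriv ?_
  set W := Real.sqrt a * v a
  set D := v a / (2 * Real.sqrt a) + Real.sqrt a * deriv v a
  simp only [Pi.pow_apply]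
  field_simp
  ring

set_option maxHeartbeats 1000000 in
/-- Defocusing `μ = -1` equation with `|v(0)| < 1`. -/
theorem stmt9 (v : ℝ → ℝ)
    (hv1 : ContDiffOn ℝ 1 v (Set.Ici 0))
    (hv2 : ContDiffOn ℝ 2 v (Set.Ioi 0))
    (hode : ∀ a > (0:ℝ), deriv (deriv v) a + deriv v a / a = (v a) ^ 3 - v a)
    (hv'0 : derivWithin v (Set.Ici 0) 0 = 0)
    (h0 : |v 0| < 1) :
    let w : ℝ → ℝ := fun a => Real.sqrt a * v a
    let E : ℝ → ℝ := fun a =>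
      (deriv w a) ^ 2 / 2 + (w a) ^ 2 / (8 * a ^ 2) + (w a) ^ 2 / 2 - (w a) ^ 4 / (4 * a)
    let c : ℝ := (v 0) ^ 2 / (2 - (v 0) ^ 2)
    c < 1 ∧
    (∀ a > (0:ℝ),
      (deriv w a) ^ 2 / 2 + (1 / 2 - (v 0) ^ 2 / 4) * (w a) ^ 2 ≤ E a ∧
      deriv E a ≤ (c / a) * E a) ∧
    (v 0 ≠ 0 → ∀ a > (0:ℝ), 0 < E a) ∧
    ∃ C : ℝ, ∀ a ≥ (1:ℝ),
      E a ≤ C ∧ |w a| ≤ C ∧ |deriv w a| ≤ C ∧ |v a| ≤ C / Real.sqrt a := by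
  intro w E c
  have hwdef : w = fun a => Real.sqrt a * v a := rfl
  have hEdef : E = fun a =>
      (deriv w a) ^ 2 / 2 + (w a) ^ 2 / (8 * a ^ 2) + (w a) ^ 2 / 2 - (w a) ^ 4 / (4 * a) := rfl
  have hcdef : c = (v 0) ^ 2 / (2 - (v 0) ^ 2) := rfl
  clear_value w E c
  have hx0 : (v 0)^2 < 1 := by nlinarith [sq_abs (v 0), abs_nonneg (v 0)]
  have h2x0 : (0:ℝ) < 2 - (v 0)^2 := by nlinarith [sq_nonneg (v 0)]
  have hdv : ∀ a ∈ Ioi (0:ℝ), HasDerivAt v (deriv v a) a := fun a ha =>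
    ((hv2.differentiableOn (by norm_num)).differentiableAt (Ioi_mem_nhds ha)).hasDerivAt
  have hddv : ∀ a ∈ Ioi (0:ℝ), HasDerivAt (deriv v) (deriv (deriv v) a) a := fun a ha =>
    (((hv2.deriv_of_isOpen (m := 1) isOpen_Ioi (by norm_num)).differentiableOn
      (by norm_num)).differentiableAt (Ioi_mem_nhds ha)).hasDerivAt
  have happ := stmt9_apriori v hv1 hv2 hode hv'0 h0
  have hw := stmt9_w_deriv v hdv
  have hdw := stmt9_dw_deriv v hdv hddv hode
  have hED := stmt9_E_deriv v hdv hddv hode hw hdw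
  have hc0 : 0 ≤ c := hcdef ▸ div_nonneg (sq_nonneg _) h2x0.le
  have hc1 : c < 1 := by rw [hcdef, div_lt_one h2x0]; nlinarith [sq_nonneg (v 0)]
  have hderivw : ∀ a ∈ Ioi (0:ℝ), deriv w a
      = v a / (2 * Real.sqrt a) + Real.sqrt a * deriv v a := by
    intro a ha
    rw [hwdef]
    exact (hw a ha).deriv
  have hEd : ∀ a ∈ Ioi (0:ℝ), HasDerivAt E (-(w a)^2/(4*a^3) + (w a)^4/(4*a^2)) a := by
    intro a ha
    simp only [hEdef, hwdef]
    refine (hED a ha).congr_of_eventuallyEq ?_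
    filter_upwards [Ioi_mem_nhds ha] with b hb
    have hb' : deriv (fun a => Real.sqrt a * v a) b
        = v b / (2 * Real.sqrt b) + Real.sqrt b * deriv v b := (hw b hb).deriv
    rw [hb']
  have hwsq : ∀ a ∈ Ioi (0:ℝ), (w a)^2 = a * (v a)^2 := by
    intro a ha
    rw [hwdef]
    simp only
    rw [mul_pow, Real.sq_sqrt (le_of_lt ha)]
  -- part 2a
  have part2a : ∀ a > (0:ℝ),
      (deriv w a)^2/2 + (1/2 - (v 0)^2/4) * (w a)^2 ≤ E a := by
    intro a ha
    have h1 : (w a)^4 = (w a)^2 * (a * (v a)^2) := by rw [← hwsq a ha]; ring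
    have ha0 : a ≠ 0 := ne_of_gt ha
    have h2 : (w a)^4/(4*a) = (w a)^2 * (v a)^2/4 := by
      rw [h1]; field_simp
    have h3 : (w a)^2 * (v a)^2 ≤ (w a)^2 * (v 0)^2 :=
      mul_le_mul_of_nonneg_left (happ a ha.le) (sq_nonneg (w a))
    have h4 : 0 ≤ (w a)^2/(8*a^2) := by positivity
    simp only [hEdef]
    nlinarith
  have hLB : ∀ a > (0:ℝ), (2 - (v 0)^2)/4 * (w a)^2 ≤ E a := by
    intro a ha
    have := part2a a ha
    nlinarith [sq_nonneg (deriv w a)]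
  have hE0 : ∀ a > (0:ℝ), 0 ≤ E a := by
    intro a ha
    have h1 := hLB a ha
    have h2 := mul_nonneg (by linarith : (0:ℝ) ≤ (2 - (v 0)^2)/4) (sq_nonneg (w a))
    linarith
  -- part 2b
  have part2b : ∀ a > (0:ℝ), deriv E a ≤ (c/a) * E a := by
    intro a ha
    have hde : deriv E a = -(w a)^2/(4*a^3) + (w a)^4/(4*a^2) := (hEd a ha).deriv
    rw [hde, div_mul_eq_mul_div, le_div_iff₀ ha]
    have h1 : (w a)^4 = (w a)^2 * (a * (v a)^2) := by rw [← hwsq a ha]; ring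
    have ha0 : a ≠ 0 := ne_of_gt ha
    have e1 : (-(w a)^2/(4*a^3) + (w a)^4/(4*a^2)) * a
        = -((w a)^2/(4*a^2)) + (w a)^2*(v a)^2/4 := by
      rw [h1]; field_simp
    have hcs : c * (2 - (v 0)^2) = (v 0)^2 := by
      rw [hcdef]; field_simp
    have h5 := mul_le_mul_of_nonneg_left (hLB a ha) hc0
    have h6 : c * ((2 - (v 0)^2)/4 * (w a)^2) = (v 0)^2 * (w a)^2/4 := by
      linear_combination ((w a)^2/4) * hcs
    have h7 : (w a)^2 * (v a)^2 ≤ (w a)^2 * (v 0)^2 :=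
      mul_le_mul_of_nonneg_left (happ a ha.le) (sq_nonneg (w a))
    have h8 : 0 ≤ (w a)^2/(4*a^2) := by positivity
    linarith [e1.le, e1.ge]
  -- part 3
  have part3 : v 0 ≠ 0 → ∀ a > (0:ℝ), 0 < E a := by
    intro hv0 a ha
    rcases eq_or_lt_of_le (hE0 a ha) with heq | hlt
    · exfalso
      have hL := part2a a ha
      have hk := mul_nonneg (by linarith : (0:ℝ) ≤ 1 - (v 0)^2) (sq_nonneg (w a))
      have hw2 : (w a)^2 ≤ 0 := by nlinarith [sq_nonneg (deriv w a)]
      have hdw2 : (deriv w a)^2 ≤ 0 := by nlinarith [sq_nonneg (w a)]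
      have hw0 : w a = 0 := pow_eq_zero_iff two_ne_zero |>.1 (le_antisymm hw2 (sq_nonneg _))
      have hdw0 : deriv w a = 0 := pow_eq_zero_iff two_ne_zero |>.1
        (le_antisymm hdw2 (sq_nonneg _))
      have hs0 : Real.sqrt a ≠ 0 := by positivity
      have hva : v a = 0 := by
        have h := hw0
        rw [hwdef] at h
        simp only at h
        rcases mul_eq_zero.1 h with h | h
        · exact absurd h hs0
        · exact h
      have hdva : deriv v a = 0 := by
        have h1 := hderivw a ha
        rw [hdw0, hva] at h1
        simp only [zero_div, zero_add] at h1
        rcases mul_eq_zero.1 h1.symm with h | h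
        · exact absurd h hs0
        · exact h
      have := stmt9_unique v hv1 hdv hddv hode
        (fun b hb => le_trans (happ b hb) hx0.le) a ha hva hdva
      exact hv0 this
    · exact hlt
  -- part 4 : boundedness
  have hE1 : 0 ≤ E 1 := hE0 1 one_pos
  have hEcont : ContinuousOn E (Ici 1) := fun a ha =>
    ((hEd a (show a ∈ Ioi 0 from lt_of_lt_of_le one_pos (mem_Ici.1 ha))).differentiableAt.continuousAt).continuousWithinAt
  -- Step A : E a ≤ E 1 * a ^ c on [1, ∞)
  have stepA : ∀ a ∈ Ici (1:ℝ), E a ≤ E 1 * a ^ c := by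
    have hpsi : AntitoneOn (fun a => E a * a ^ (-c)) (Ici 1) := by
      apply antitoneOn_of_deriv_nonpos (convex_Ici 1)
      · exact hEcont.mul (fun a ha => (Real.continuousAt_rpow_const a (-c)
          (Or.inl (ne_of_gt (lt_of_lt_of_le one_pos ha)))).continuousWithinAt)
      · intro a ha
        rw [interior_Ici] at ha
        have ha0 : (0:ℝ) < a := lt_trans one_pos ha
        exact ((hEd a ha0).differentiableAt.mul
          (Real.hasDerivAt_rpow_const (p := -c) (Or.inl (ne_of_gt ha0))).differentiableAt
          ).differentiableWithinAt
      · intro a ha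
        rw [interior_Ici] at ha
        have ha0 : (0:ℝ) < a := lt_trans one_pos ha
        have hprod := (hEd a ha0).mul
          (Real.hasDerivAt_rpow_const (p := -c) (Or.inl (ne_of_gt ha0)))
        rw [show (fun a => E a * a ^ (-c)) = (E * fun x => x ^ (-c)) from rfl, hprod.deriv]
        have hde : deriv E a = -(w a)^2/(4*a^3) + (w a)^4/(4*a^2) := (hEd a ha0).deriv
        rw [← hde]
        have hrp : (0:ℝ) < a ^ (-c) := Real.rpow_pos_of_pos ha0 _
        have hstep : a ^ (-c - 1) = a ^ (-c) / a := by
          rw [Real.rpow_sub ha0, Real.rpow_one]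
        have h1 : deriv E a * a ^ (-c) ≤ (c/a) * E a * a ^ (-c) :=
          mul_le_mul_of_nonneg_right (part2b a ha0) hrp.le
        have h2 : (c/a) * E a * a ^ (-c) = c * E a * a ^ (-c-1) := by
          rw [hstep]; ring
        have h3 : E a * (-c * a ^ (-c - 1)) = -(c * E a * a ^ (-c-1)) := by ring
        linarith [h1, h2.le, h2.ge]
    intro a ha
    have h1 : E a * a ^ (-c) ≤ E 1 * (1:ℝ) ^ (-c) := hpsi self_mem_Ici ha (mem_Ici.1 ha)
    rw [Real.one_rpow, mul_one] at h1
    have ha0 : (0:ℝ) < a := lt_of_lt_of_le one_pos (mem_Ici.1 ha)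
    have hrp : (0:ℝ) < a ^ c := Real.rpow_pos_of_pos ha0 _
    have h3 := mul_le_mul_of_nonneg_right h1 hrp.le
    have h4 : E a * a ^ (-c) * a ^ c = E a := by
      rw [mul_assoc, ← Real.rpow_add ha0]; simp
    rwa [h4] at h3
  -- Step B : refined differential inequality
  obtain ⟨K3, hK3⟩ : ∃ K3 : ℝ, K3 = (4 * E 1 / (2 - (v 0)^2)) / (2 - (v 0)^2) := ⟨_, rfl⟩
  have hK30 : 0 ≤ K3 := by rw [hK3]; positivity
  have hEp : ∀ a : ℝ, 1 < a → deriv E a ≤ K3 * a ^ (c - 2) * E a := by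
    intro a ha1
    have ha0 : (0:ℝ) < a := lt_trans one_pos ha1
    have ha0' : a ≠ 0 := ne_of_gt ha0
    have hde : deriv E a = -(w a)^2/(4*a^3) + (w a)^4/(4*a^2) := (hEd a ha0).deriv
    have h1 : (w a)^4 = (w a)^2 * (a * (v a)^2) := by rw [← hwsq a ha0]; ring
    have harp : a ^ (c-2) * a = a ^ (c-1) := by
      rw [← Real.rpow_add_one ha0']; congr 1; ring
    have hca : a ^ (c-1) * a = a ^ c := by
      rw [← Real.rpow_add_one ha0']; congr 1; ring
    have e1 : deriv E a ≤ (w a)^2/4 * ((v a)^2 / a) := by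
      rw [hde]
      have h2 : (w a)^4/(4*a^2) = (w a)^2/4 * ((v a)^2/a) := by
        rw [h1]; field_simp
      have hneg : -(w a)^2/(4*a^3) ≤ 0 := by
        rw [neg_div]
        exact neg_nonpos.2 (by positivity)
      linarith [h2.le, h2.ge]
    have e2 : (w a)^2/4 ≤ E a / (2 - (v 0)^2) := by
      rw [le_div_iff₀ h2x0]
      nlinarith [hLB a ha0]
    have e3 : (v a)^2/a ≤ (4 * E 1 / (2 - (v 0)^2)) * a ^ (c-2) := by
      have hEa := stepA a ha1.le
      have hva2 : a * (v a)^2 ≤ (4 * E 1 / (2 - (v 0)^2)) * a ^ c := by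
        rw [← hwsq a ha0]
        have hpos : (0:ℝ) < (2 - (v 0)^2)/4 := by linarith
        have h2 : (2 - (v 0)^2)/4 * ((4 * E 1 / (2 - (v 0)^2)) * a ^ c) = E 1 * a ^ c := by
          field_simp
        exact (mul_le_mul_iff_of_pos_left hpos).1 (by rw [h2]; exact le_trans (hLB a ha0) hEa)
      have h6 : (v a)^2 ≤ (4 * E 1 / (2 - (v 0)^2)) * a ^ (c-1) := by
        rw [← mul_le_mul_iff_of_pos_left ha0, show a * (4 * E 1 / (2 - (v 0)^2) * a ^ (c-1))
          = 4 * E 1 / (2 - (v 0)^2) * (a ^ (c-1) * a) by ring, hca]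
        exact hva2
      have h7 : (v a)^2/a ≤ ((4 * E 1 / (2 - (v 0)^2)) * a ^ (c-1))/a :=
        div_le_div_of_nonneg_right h6 ha0.le
      have h8 : ((4 * E 1 / (2 - (v 0)^2)) * a ^ (c-1))/a
          = (4 * E 1 / (2 - (v 0)^2)) * a ^ (c-2) := by
        rw [← harp]; field_simp
      rw [← h8]
      exact h7
    have e4 := mul_le_mul e2 e3 (div_nonneg (sq_nonneg _) ha0.le)
      (div_nonneg (hE0 a ha0) h2x0.le)
    have e5 : E a / (2 - (v 0)^2) * (4 * E 1 / (2 - (v 0)^2) * a ^ (c-2))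
        = K3 * a ^ (c-2) * E a := by
      rw [hK3]; field_simp
    linarith [e4, e5.le, e5.ge]
  -- Step C : E is bounded on [1, ∞)
  have h1c : (0:ℝ) < 1 - c := by linarith
  obtain ⟨CE, hCE⟩ : ∃ CE : ℝ, CE = E 1 * Real.exp (K3/(1-c)) := ⟨_, rfl⟩
  have hCE0 : 0 ≤ CE := hCE ▸ mul_nonneg hE1 (Real.exp_pos _).le
  have stepC : ∀ a : ℝ, 1 ≤ a → E a ≤ CE := by
    have hphi : AntitoneOn (fun a => E a * Real.exp (K3/(1-c) * a ^ (c-1))) (Ici 1) := by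
      apply antitoneOn_of_deriv_nonpos (convex_Ici 1)
      · apply hEcont.mul
        apply Real.continuous_exp.comp_continuousOn
        apply ContinuousOn.mul continuousOn_const
        exact fun a ha => (Real.continuousAt_rpow_const a (c-1)
          (Or.inl (ne_of_gt (lt_of_lt_of_le one_pos ha)))).continuousWithinAt
      · intro a ha
        rw [interior_Ici] at ha
        have ha0 : (0:ℝ) < a := lt_trans one_pos ha
        have hexp := (((Real.hasDerivAt_rpow_const (p := c-1)
          (Or.inl (ne_of_gt ha0))).const_mul (K3/(1-c))).exp)
        exact ((hEd a ha0).differentiableAt.mul hexp.differentiableAt).differentiableWithinAt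
      · intro a ha
        rw [interior_Ici] at ha
        have ha0 : (0:ℝ) < a := lt_trans one_pos ha
        have hexp := (((Real.hasDerivAt_rpow_const (p := c-1)
          (Or.inl (ne_of_gt ha0))).const_mul (K3/(1-c))).exp)
        have hphi' := (hEd a ha0).mul hexp
        rw [show (fun a => E a * rexp (K3 / (1 - c) * a ^ (c - 1))) = (E * fun x => rexp (K3 / (1 - c) * x ^ (c - 1))) from rfl, hphi'.deriv]
        have hde : deriv E a = -(w a)^2/(4*a^3) + (w a)^4/(4*a^2) := (hEd a ha0).deriv
        rw [← hde]
        set G := Real.exp (K3/(1-c) * a ^ (c-1)) with hG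
        have hG0 : 0 < G := Real.exp_pos _
        have hee : a ^ (c-1-1) = a ^ (c-2) := by congr 1; ring
        rw [hee]
        have hcoef : deriv E a * G + E a * (G * (K3/(1-c) * ((c-1) * a ^ (c-2))))
            = G * (deriv E a - K3 * a ^ (c-2) * E a) := by
          field_simp
          ring
        rw [hcoef]
        exact mul_nonpos_of_nonneg_of_nonpos hG0.le (by linarith [hEp a ha])
    intro a ha
    have h1 : E a * Real.exp (K3/(1-c) * a ^ (c-1))
        ≤ E 1 * Real.exp (K3/(1-c) * (1:ℝ) ^ (c-1)) := hphi self_mem_Ici ha ha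
    rw [Real.one_rpow, mul_one] at h1
    have ha0 : (0:ℝ) < a := lt_of_lt_of_le one_pos ha
    have hge1 : (1:ℝ) ≤ Real.exp (K3/(1-c) * a ^ (c-1)) := by
      have h9 : 0 ≤ K3/(1-c) * a ^ (c-1) :=
        mul_nonneg (div_nonneg hK30 h1c.le) (Real.rpow_nonneg ha0.le _)
      linarith [Real.add_one_le_exp (K3/(1-c) * a ^ (c-1))]
    calc E a = E a * 1 := (mul_one _).symm
      _ ≤ E a * Real.exp (K3/(1-c) * a ^ (c-1)) :=
          mul_le_mul_of_nonneg_left hge1 (hE0 a ha0)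
      _ ≤ CE := hCE ▸ h1
  -- final constant
  refine ⟨hc1, fun a ha => ⟨part2a a ha, part2b a ha⟩, part3, ?_⟩
  obtain ⟨CB, hCB⟩ : ∃ CB : ℝ, CB = Real.sqrt (4 * CE / (2 - (v 0)^2)) := ⟨_, rfl⟩
  obtain ⟨CD, hCD⟩ : ∃ CD : ℝ, CD = Real.sqrt (2 * CE) := ⟨_, rfl⟩
  refine ⟨max CE (max CB CD), ?_⟩
  intro a ha
  have ha0 : (0:ℝ) < a := lt_of_lt_of_le one_pos ha
  have hEa : E a ≤ CE := stepC a ha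
  have hw2 : (w a)^2 ≤ 4 * CE / (2 - (v 0)^2) := by
    rw [le_div_iff₀ h2x0]
    nlinarith [hLB a ha0]
  have hdw2 : (deriv w a)^2 ≤ 2 * CE := by
    have hk := mul_nonneg (by linarith : (0:ℝ) ≤ 1/2 - (v 0)^2/4) (sq_nonneg (w a))
    nlinarith [part2a a ha0]
  have hwb : |w a| ≤ CB := by
    rw [hCB, ← Real.sqrt_sq_eq_abs]
    exact Real.sqrt_le_sqrt hw2
  have hdwb : |deriv w a| ≤ CD := by
    rw [hCD, ← Real.sqrt_sq_eq_abs]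
    exact Real.sqrt_le_sqrt hdw2
  have hCBle : CB ≤ max CE (max CB CD) := le_max_of_le_right (le_max_left _ _)
  have hCDle : CD ≤ max CE (max CB CD) := le_max_of_le_right (le_max_right _ _)
  refine ⟨le_trans hEa (le_max_left _ _), le_trans hwb hCBle, le_trans hdwb hCDle, ?_⟩
  have hsa : (0:ℝ) < Real.sqrt a := Real.sqrt_pos.2 ha0
  rw [le_div_iff₀ hsa]
  have hva : |v a| * Real.sqrt a = |w a| := by
    rw [hwdef]
    simp only
    rw [abs_mul, abs_of_nonneg (Real.sqrt_nonneg a)]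
    ring
  rw [hva]
  exact le_trans hwb hCBle
end

section
/- Let v : [0,∞) → ℝ be C¹ with v'(0)=0, C² on (0,∞), solving the focusing equation v'' + v'/a - v + v³ = 0 (μ = -1). Then |v(a)² - 1| ≤ |v(0)² - 1| for all a > 0. In particular if v(0) ∈ (0,2), then v(a) > 0 for all a ≥ 0. -/
open Real Set intervalIntegral Filter Topology

namespace Stmt10Aux

noncomputable def vE (v : ℝ → ℝ) : ℝ → ℝ := fun σ => (deriv v σ)^2/2 + ((v σ)^2 - 1)^2/4

noncomputable def vG (v : ℝ → ℝ) : ℝ → ℝ := fun σ => σ^2 * (vE v σ - 1/4)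

structure Pack (v : ℝ → ℝ) : Prop where
  cont : ContinuousOn v (Ici 0)
  hv : ∀ σ ∈ Ioi (0:ℝ), HasDerivAt v (deriv v σ) σ
  vdcont : ContinuousOn (deriv v) (Ioi 0)
  hvd : ∀ σ ∈ Ioi (0:ℝ), HasDerivAt (deriv v) (deriv (deriv v) σ) σ
  hE : ∀ σ ∈ Ioi (0:ℝ), HasDerivAt (vE v) (-(deriv v σ)^2/σ) σ
  hG : ∀ σ ∈ Ioi (0:ℝ), HasDerivAt (vG v) (σ/2 * ((v σ)^2*((v σ)^2-2))) σ
  hode : ∀ σ ∈ Ioi (0:ℝ), deriv (deriv v) σ = -(deriv v σ)/σ + v σ - (v σ)^3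
  tendE : Tendsto (vE v) (𝓝[>] 0) (𝓝 (((v 0)^2-1)^2/4))
  tendv : Tendsto v (𝓝[>] 0) (𝓝 (v 0))
  tendvd : Tendsto (fun s => s * deriv v s) (𝓝[>] 0) (𝓝 0)

theorem mkPack {v : ℝ → ℝ}
    (hv1 : ContDiffOn ℝ 1 v (Set.Ici 0))
    (hv2 : ContDiffOn ℝ 2 v (Set.Ioi 0))
    (hode : ∀ a > (0:ℝ), deriv (deriv v) a + deriv v a / a - v a + (v a) ^ 3 = 0)
    (hv'0 : derivWithin v (Set.Ici 0) 0 = 0) : Pack v := by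
  have hcont : ContinuousOn v (Ici 0) := hv1.continuousOn
  have hvIoi : DifferentiableOn ℝ v (Ioi 0) := hv2.differentiableOn (by norm_num)
  have hHv : ∀ σ ∈ Ioi (0:ℝ), HasDerivAt v (deriv v σ) σ := by
    intro σ hσ
    exact ((hvIoi σ hσ).differentiableAt (Ioi_mem_nhds hσ)).hasDerivAt
  have h1 : ContDiffOn ℝ 1 (derivWithin v (Ioi 0)) (Ioi 0) :=
    hv2.derivWithin (uniqueDiffOn_Ioi 0) (by norm_num)
  have hvd1 : ContDiffOn ℝ 1 (deriv v) (Ioi 0) :=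
    h1.congr (fun σ hσ => (derivWithin_of_isOpen isOpen_Ioi hσ).symm)
  have hvdcont : ContinuousOn (deriv v) (Ioi 0) := hvd1.continuousOn
  have hHvd : ∀ σ ∈ Ioi (0:ℝ), HasDerivAt (deriv v) (deriv (deriv v) σ) σ := by
    intro σ hσ
    exact (((hvd1.differentiableOn one_ne_zero) σ hσ).differentiableAt (Ioi_mem_nhds hσ)).hasDerivAt
  have hode' : ∀ σ ∈ Ioi (0:ℝ), deriv (deriv v) σ = -(deriv v σ)/σ + v σ - (v σ)^3 := by
    intro σ hσ
    have h := hode σ hσ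
    have hσ0 : σ ≠ 0 := ne_of_gt hσ
    field_simp at h ⊢
    linarith
  have hE : ∀ σ ∈ Ioi (0:ℝ), HasDerivAt (vE v) (-(deriv v σ)^2/σ) σ := by
    intro σ hσ
    have hσ0 : (σ:ℝ) ≠ 0 := ne_of_gt hσ
    have h1 : HasDerivAt (fun t => (deriv v t)^2/2)
        ((2 * deriv v σ ^ 1 * deriv (deriv v) σ)/2) σ := ((hHvd σ hσ).pow 2).div_const 2
    have h2 : HasDerivAt (fun t => ((v t)^2-1)^2/4)
        ((2 * ((v σ)^2-1)^1 * (2 * v σ ^1 * deriv v σ))/4) σ :=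
      ((((hHv σ hσ).pow 2).sub_const 1).pow 2).div_const 4
    have h3 := h1.add h2
    have : (2 * deriv v σ ^ 1 * deriv (deriv v) σ)/2
        + (2 * ((v σ)^2-1)^1 * (2 * v σ ^1 * deriv v σ))/4 = -(deriv v σ)^2/σ := by
      rw [hode' σ hσ]
      field_simp
      ring
    rw [this] at h3
    exact h3
  have hG : ∀ σ ∈ Ioi (0:ℝ), HasDerivAt (vG v) (σ/2 * ((v σ)^2*((v σ)^2-2))) σ := by
    intro σ hσ
    have hσ0 : (σ:ℝ) ≠ 0 := ne_of_gt hσ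
    have h1 : HasDerivAt (fun t : ℝ => t^2) (2*σ^1) σ := hasDerivAt_pow 2 σ
    have h2 : HasDerivAt (fun t => vE v t - 1/4) (-(deriv v σ)^2/σ) σ := (hE σ hσ).sub_const _
    have h3 := h1.mul h2
    have : 2*σ^1 * (vE v σ - 1/4) + σ^2 * (-(deriv v σ)^2/σ) = σ/2 * ((v σ)^2*((v σ)^2-2)) := by
      show 2*σ^1 * ((deriv v σ)^2/2 + ((v σ)^2 - 1)^2/4 - 1/4) + _ = _
      field_simp
      ring
    rw [this] at h3
    exact h3
  -- limits at 0+
  have hgcont : ContinuousOn (derivWithin v (Ici 0)) (Ici 0) :=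
    hv1.continuousOn_derivWithin (uniqueDiffOn_Ici 0) le_rfl
  have hgeq : ∀ σ ∈ Ioi (0:ℝ), derivWithin v (Ici 0) σ = deriv v σ := fun σ hσ =>
    derivWithin_of_mem_nhds (Ici_mem_nhds hσ)
  have hg0 : Tendsto (derivWithin v (Ici 0)) (𝓝[Ici 0] 0) (𝓝 0) := by
    have := (hgcont 0 self_mem_Ici).tendsto
    rwa [hv'0] at this
  have hv0t : Tendsto v (𝓝[Ici 0] 0) (𝓝 (v 0)) := (hcont 0 self_mem_Ici).tendsto
  have hmem : ∀ᶠ σ in 𝓝[>] (0:ℝ), σ ∈ Ioi (0:ℝ) := eventually_mem_nhdsWithin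
  have hle : 𝓝[>] (0:ℝ) ≤ 𝓝[Ici 0] (0:ℝ) := nhdsWithin_mono 0 Ioi_subset_Ici_self
  have tendv : Tendsto v (𝓝[>] 0) (𝓝 (v 0)) := hv0t.mono_left hle
  have tendE : Tendsto (vE v) (𝓝[>] 0) (𝓝 (((v 0)^2-1)^2/4)) := by
    have hbar : Tendsto (fun s => (derivWithin v (Ici 0) s)^2/2 + ((v s)^2-1)^2/4)
        (𝓝[Ici 0] 0) (𝓝 ((0:ℝ)^2/2 + ((v 0)^2-1)^2/4)) := by
      exact (((hg0.pow 2).div_const 2).add ((((hv0t.pow 2).sub_const 1).pow 2).div_const 4))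
    have hbar' := hbar.mono_left hle
    have heq : ∀ᶠ s in 𝓝[>] (0:ℝ),
        (fun s => (derivWithin v (Ici 0) s)^2/2 + ((v s)^2-1)^2/4) s = vE v s := by
      filter_upwards [hmem] with s hs
      simp only [vE, hgeq s hs]
    have := hbar'.congr' heq
    simpa using this
  have tendvd : Tendsto (fun s => s * deriv v s) (𝓝[>] 0) (𝓝 0) := by
    have hid : Tendsto (fun s : ℝ => s) (𝓝[Ici 0] 0) (𝓝 0) := tendsto_id.mono_left nhdsWithin_le_nhds
    have hbar : Tendsto (fun s => s * derivWithin v (Ici 0) s) (𝓝[Ici 0] 0) (𝓝 (0*0)) :=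
      hid.mul hg0
    have hbar' := (hbar.mono_left hle)
    have heq : ∀ᶠ s in 𝓝[>] (0:ℝ),
        (fun s => s * derivWithin v (Ici 0) s) s = s * deriv v s := by
      filter_upwards [hmem] with s hs
      rw [hgeq s hs]
    have := hbar'.congr' heq
    simpa using this
  exact ⟨hcont, hHv, hvdcont, hHvd, hE, hG, hode', tendE, tendv, tendvd⟩

variable {v : ℝ → ℝ}

theorem Efc (P : Pack v) {s t : ℝ} (hs : 0 < s) (hst : s ≤ t) :
    vE v t - vE v s = -∫ σ in s..t, (deriv v σ)^2/σ := by
  have huIcc : uIcc s t = Icc s t := uIcc_of_le hst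
  have hsub : Icc s t ⊆ Ioi (0:ℝ) := fun σ hσ => lt_of_lt_of_le hs hσ.1
  have hderiv : ∀ σ ∈ uIcc s t, HasDerivAt (vE v) (-(deriv v σ)^2/σ) σ := by
    intro σ hσ; rw [huIcc] at hσ; exact P.hE σ (hsub hσ)
  have hcont : ContinuousOn (fun σ => -(deriv v σ)^2/σ) (uIcc s t) := by
    rw [huIcc]
    exact (((P.vdcont.mono hsub).pow 2).neg).div (continuousOn_id) (fun σ hσ => ne_of_gt (hsub hσ))
  have h := integral_eq_sub_of_hasDerivAt hderiv (hcont.intervalIntegrable)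
  rw [← h, ← intervalIntegral.integral_neg]
  congr 1
  funext σ
  ring

theorem Emono (P : Pack v) {s t : ℝ} (hs : 0 < s) (hst : s ≤ t) : vE v t ≤ vE v s := by
  have h := Efc P hs hst
  have hnn : 0 ≤ ∫ σ in s..t, (deriv v σ)^2/σ := by
    apply intervalIntegral.integral_nonneg hst
    intro σ hσ
    have : 0 < σ := lt_of_lt_of_le hs hσ.1
    positivity
  linarith

theorem E_le_E0 (P : Pack v) {t : ℝ} (ht : 0 < t) : vE v t ≤ ((v 0)^2-1)^2/4 := by
  apply ge_of_tendsto P.tendE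
  filter_upwards [Ioo_mem_nhdsGT ht] with s hs
  exact Emono P hs.1 hs.2.le

theorem part1 (P : Pack v) {t : ℝ} (ht : 0 < t) : |(v t)^2-1| ≤ |(v 0)^2-1| := by
  have h1 : ((v t)^2-1)^2/4 ≤ vE v t := by
    have : 0 ≤ (deriv v t)^2/2 := by positivity
    simp only [vE]; linarith
  have h2 := E_le_E0 P ht
  have h3 : ((v t)^2-1)^2 ≤ ((v 0)^2-1)^2 := by linarith
  have h4 := Real.sqrt_le_sqrt h3
  rwa [Real.sqrt_sq_eq_abs, Real.sqrt_sq_eq_abs] at h4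

-- φ(y) = y √y, differentiable everywhere with derivative (3/2)√y
theorem phi_hasDerivAt (y : ℝ) :
    HasDerivAt (fun y : ℝ => y * Real.sqrt y) (3/2 * Real.sqrt y) y := by
  rcases lt_trichotomy y 0 with hy | rfl | hy
  · have hev : (fun y : ℝ => y * Real.sqrt y) =ᶠ[𝓝 y] fun _ => (0:ℝ) := by
      filter_upwards [Iio_mem_nhds hy] with z hz
      rw [Real.sqrt_eq_zero_of_nonpos (le_of_lt hz), mul_zero]
    have h0 : HasDerivAt (fun _ : ℝ => (0:ℝ)) 0 y := hasDerivAt_const y 0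
    have h1 := h0.congr_of_eventuallyEq hev
    have : (3:ℝ)/2 * Real.sqrt y = 0 := by
      rw [Real.sqrt_eq_zero_of_nonpos (le_of_lt hy), mul_zero]
    rw [this]
    exact h1
  · rw [hasDerivAt_iff_tendsto_slope]
    have hval : (3:ℝ)/2 * Real.sqrt 0 = 0 := by simp
    rw [hval]
    have hsq : Tendsto (fun z : ℝ => Real.sqrt z) (𝓝[≠] 0) (𝓝 0) := by
      have := (Real.continuous_sqrt.tendsto 0)
      rw [Real.sqrt_zero] at this
      exact this.mono_left nhdsWithin_le_nhds
    apply hsq.congr'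
    filter_upwards [self_mem_nhdsWithin] with z hz
    have hz0 : z ≠ 0 := hz
    rw [slope_def_field]
    field_simp
    ring
  · have h := (hasDerivAt_id y).mul (Real.hasDerivAt_sqrt (ne_of_gt hy))
    have hsqpos : 0 < Real.sqrt y := Real.sqrt_pos.mpr hy
    have hsq : Real.sqrt y ^ 2 = y := Real.sq_sqrt hy.le
    simp only [id_eq] at h
    have heq : 1 * Real.sqrt y + y * (1 / (2 * Real.sqrt y)) = 3/2 * Real.sqrt y := by
      field_simp
      nlinarith [hsq]
    rw [heq] at h
    exact h

noncomputable def Th : ℝ → ℝ := fun x => -(1/(3*Real.sqrt 2))*((2-x^2)*Real.sqrt (2-x^2))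
noncomputable def Thd : ℝ → ℝ := fun x => x * Real.sqrt (2-x^2)/Real.sqrt 2

theorem Th_hasDerivAt (x : ℝ) : HasDerivAt Th (Thd x) x := by
  have hu : HasDerivAt (fun x : ℝ => 2 - x^2) (-(2*x^1)) x := (hasDerivAt_pow 2 x).const_sub 2
  have hφ := phi_hasDerivAt (2 - x^2)
  have hcomp := (hφ.comp x hu).const_mul (-(1/(3*Real.sqrt 2)))
  have hs2 : Real.sqrt 2 ≠ 0 := by positivity
  have : -(1/(3*Real.sqrt 2)) * (3/2 * Real.sqrt (2-x^2) * -(2*x^1)) = Thd x := by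
    simp only [Thd, pow_one]
    field_simp
  rw [this] at hcomp
  exact hcomp

theorem Th_sqrt2 : Th (Real.sqrt 2) = 0 := by
  simp [Th, Real.sq_sqrt (by norm_num : (2:ℝ) ≥ 0)]

theorem Th_zero : Th 0 = -(2/3) := by
  have hs2 : Real.sqrt 2 ≠ 0 := by positivity
  simp only [Th]
  rw [show (2:ℝ) - 0^2 = 2 by norm_num]
  field_simp

-- chain rule FTC
theorem chainFTC {v : ℝ → ℝ} (hv : ∀ σ ∈ Ioi (0:ℝ), HasDerivAt v (deriv v σ) σ)
    {s t : ℝ} (hs : 0 < s) (hst : s ≤ t) {Φ Φd : ℝ → ℝ}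
    (hΦ : ∀ σ ∈ Icc s t, HasDerivAt Φ (Φd (v σ)) (v σ))
    (hcont : ContinuousOn (fun σ => Φd (v σ) * deriv v σ) (Icc s t)) :
    ∫ σ in s..t, Φd (v σ) * deriv v σ = Φ (v t) - Φ (v s) := by
  have huIcc : uIcc s t = Icc s t := uIcc_of_le hst
  apply integral_eq_sub_of_hasDerivAt
  · intro σ hσ
    rw [huIcc] at hσ
    have := (hΦ σ hσ).comp σ (hv σ (lt_of_lt_of_le hs hσ.1))
    exact this
  · apply ContinuousOn.intervalIntegrable
    rwa [huIcc]

-- log bounds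
theorem exp_taylor_ub {x : ℝ} (hx0 : 0 ≤ x) (hx1 : x ≤ 1) :
    Real.exp x ≤ 1 + x + x^2/2 + x^3/6 + x^4*(5/96) := by
  have h := Real.exp_bound (x := x) (by rw [abs_of_nonneg hx0]; exact hx1) (n := 4) (by norm_num)
  rw [abs_of_nonneg hx0] at h
  have hsum : ∑ m ∈ Finset.range 4, x ^ m / (m.factorial : ℝ) = 1 + x + x^2/2 + x^3/6 := by
    norm_num [Finset.sum_range_succ, Nat.factorial]
  rw [hsum] at h
  have h2 := abs_le.mp h
  have hfac : ((4:ℕ).factorial : ℝ) = 24 := by norm_num [Nat.factorial]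
  have h3 := h2.2
  rw [hfac] at h3
  norm_num at h3
  nlinarith [h3]

theorem log_lb1 : (1.0715:ℝ) ≤ Real.log 2.9204 := by
  rw [Real.le_log_iff_exp_le (by norm_num)]
  have h1 : Real.exp 1 < 2.7182818286 := Real.exp_one_lt_d9
  have h2 : Real.exp 0.0715 ≤ 1 + 0.0715 + 0.0715^2/2 + 0.0715^3/6 + 0.0715^4*(5/96) :=
    exp_taylor_ub (by norm_num) (by norm_num)
  have h3 : Real.exp (1.0715:ℝ) = Real.exp 1 * Real.exp 0.0715 := by
    rw [← Real.exp_add]; norm_num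
  rw [h3]
  have hp : (0:ℝ) < Real.exp 0.0715 := Real.exp_pos _
  nlinarith [Real.exp_pos (1:ℝ)]

theorem log_lb3 : (1.098:ℝ) ≤ Real.log 3 := by
  rw [Real.le_log_iff_exp_le (by norm_num)]
  have h1 : Real.exp 1 < 2.7182818286 := Real.exp_one_lt_d9
  have h2 : Real.exp 0.098 ≤ 1 + 0.098 + 0.098^2/2 + 0.098^3/6 + 0.098^4*(5/96) :=
    exp_taylor_ub (by norm_num) (by norm_num)
  have h3 : Real.exp (1.098:ℝ) = Real.exp 1 * Real.exp 0.098 := by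
    rw [← Real.exp_add]; norm_num
  rw [h3]
  have hp : (0:ℝ) < Real.exp 0.098 := Real.exp_pos _
  nlinarith [Real.exp_pos (1:ℝ)]

-- numeric windows.  λ = 17/25 : final requirement 2/3 ≤ (17/50) C + (25/34) D gets contradicted.
theorem numW1 {u C D : ℝ} (hu1 : 2 < u) (hu2 : u ≤ 3.9204)
    (hC : C ≤ (u^2-2*u)/8) (hD : D ≤ (u - 2 - Real.log (u-1))/2) :
    (17/50)*C + (25/34)*D < 2/3 := by
  have hupos : (0:ℝ) < u - 1 := by linarith
  have hw : (1:ℝ) ≤ u - 1 := by linarith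
  have hlog : 1.0715 - (2.9204 - (u-1))/(u-1) ≤ Real.log (u-1) := by
    have hd : Real.log ((2.9204:ℝ)/(u-1)) ≤ 2.9204/(u-1) - 1 :=
      Real.log_le_sub_one_of_pos (by positivity)
    rw [Real.log_div (by norm_num) (ne_of_gt hupos)] at hd
    have expand : (2.9204:ℝ)/(u-1) - 1 = (2.9204 - (u-1))/(u-1) := by field_simp
    rw [expand] at hd
    linarith [log_lb1]
  have hdiv : (2.9204 - (u-1))/(u-1) ≤ 2.9204 - (u-1) := by
    have hnum : (0:ℝ) ≤ 2.9204 - (u-1) := by linarith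
    calc (2.9204 - (u-1))/(u-1) ≤ (2.9204 - (u-1))/1 := by
          apply div_le_div_of_nonneg_left hnum (by norm_num) hw
      _ = 2.9204 - (u-1) := by ring
  have hD2 : D ≤ 0.8489/2 := by
    have : Real.log (u-1) ≥ 1.0715 - (2.9204 - (u-1)) := by linarith
    linarith
  have hmul : (0:ℝ) ≤ (3.9204 - u)*(u+2) := mul_nonneg (by linarith) (by linarith)
  have hC2 : C ≤ 0.9411 := by nlinarith [hmul]
  linarith

theorem numW2 {t C D : ℝ} (ht1 : 1.98 < t) (ht2 : t < 2)
    (hC : C ≤ (t^4-2*t^2)/8 - (4263/12800)*(((t-1.45)^2-(t-1.93)^2)/2))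
    (hD : D ≤ (t^2-2-Real.log (t^2-1))/2) :
    (17/50)*C + (25/34)*D < 2/3 := by
  have hw : (1:ℝ) ≤ t^2 - 1 := by nlinarith
  have hupos : (0:ℝ) < t^2 - 1 := by linarith
  have hlog : 1.098 - (3 - (t^2-1))/(t^2-1) ≤ Real.log (t^2-1) := by
    have hd : Real.log ((3:ℝ)/(t^2-1)) ≤ 3/(t^2-1) - 1 :=
      Real.log_le_sub_one_of_pos (by positivity)
    rw [Real.log_div (by norm_num) (ne_of_gt hupos)] at hd
    have expand : (3:ℝ)/(t^2-1) - 1 = (3 - (t^2-1))/(t^2-1) := by field_simp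
    rw [expand] at hd
    linarith [log_lb3]
  have hdiv : (3 - (t^2-1))/(t^2-1) ≤ 3 - (t^2-1) := by
    have hnum : (0:ℝ) ≤ 3 - (t^2-1) := by nlinarith
    calc (3 - (t^2-1))/(t^2-1) ≤ (3 - (t^2-1))/1 := by
          apply div_le_div_of_nonneg_left hnum (by norm_num) hw
      _ = 3 - (t^2-1) := by ring
  have hD2 : D ≤ 0.902/2 := by
    have : Real.log (t^2-1) ≥ 1.098 - (3 - (t^2-1)) := by linarith
    nlinarith
  have ht2' : t^2 ≤ 4 := by nlinarith
  have ht4 : t^4 ≤ 4*t^2 := by nlinarith [mul_le_mul_of_nonneg_left ht2' (sq_nonneg t)]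
  have hE1 : (t^4-2*t^2)/8 ≤ 1 := by nlinarith
  have hcor : (4263/12800 : ℝ)*((24/100)*(58/100)) ≤ (4263/12800)*(((t-1.45)^2-(t-1.93)^2)/2) := by
    nlinarith
  have hC2 : C ≤ 1 - (4263/12800)*((24/100)*(58/100)) := by linarith
  linarith

theorem Gfc (P : Pack v) {s t : ℝ} (hs : 0 < s) (hst : s ≤ t) :
    vG v t - vG v s = ∫ σ in s..t, σ/2 * ((v σ)^2*((v σ)^2-2)) := by
  have huIcc : uIcc s t = Icc s t := uIcc_of_le hst
  have hsub : Icc s t ⊆ Ioi (0:ℝ) := fun σ hσ => lt_of_lt_of_le hs hσ.1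
  have hderiv : ∀ σ ∈ uIcc s t, HasDerivAt (vG v) (σ/2 * ((v σ)^2*((v σ)^2-2))) σ := by
    intro σ hσ; rw [huIcc] at hσ; exact P.hG σ (hsub hσ)
  have hcont : ContinuousOn (fun σ => σ/2 * ((v σ)^2*((v σ)^2-2))) (uIcc s t) := by
    rw [huIcc]
    have hvc : ContinuousOn v (Icc s t) := P.cont.mono (fun σ hσ => Set.mem_Ici.mpr (le_of_lt (hsub hσ)))
    exact (continuousOn_id.div_const 2).mul ((hvc.pow 2).mul ((hvc.pow 2).sub continuousOn_const))
  exact (integral_eq_sub_of_hasDerivAt hderiv (hcont.intervalIntegrable)).symm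

theorem E_nonneg {σ : ℝ} : 0 ≤ vE v σ := by
  simp only [vE]; positivity

theorem tendG (P : Pack v) : Tendsto (vG v) (𝓝[>] 0) (𝓝 0) := by
  set E0 := ((v 0)^2-1)^2/4 with hE0def
  have hE0nn : 0 ≤ E0 := by rw [hE0def]; positivity
  apply squeeze_zero_norm' (a := fun s => s^2 * (E0 + 1/4))
  · filter_upwards [Ioo_mem_nhdsGT one_pos] with s hs
    have h1 : vE v s ≤ E0 := E_le_E0 P hs.1
    have h2 : 0 ≤ vE v s := E_nonneg
    have habs : |vE v s - 1/4| ≤ E0 + 1/4 := by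
      rw [abs_le]; constructor <;> linarith
    have hnorm : ‖vG v s‖ = s^2 * |vE v s - 1/4| := by
      simp only [vG, Real.norm_eq_abs, abs_mul, abs_pow, abs_of_pos hs.1]
    rw [hnorm]
    exact mul_le_mul_of_nonneg_left habs (by positivity)
  · have hc : Tendsto (fun s : ℝ => s^2 * (E0 + 1/4)) (𝓝 0) (𝓝 (0^2 * (E0+1/4))) :=
      ((continuous_pow 2).mul continuous_const).tendsto 0
    have h2 : Tendsto (fun s : ℝ => s^2 * (E0 + 1/4)) (𝓝[>] (0:ℝ)) (𝓝 (0^2 * (E0+1/4))) :=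
      hc.mono_left nhdsWithin_le_nhds
    simpa using h2

theorem easy_case (P : Pack v) (hv0 : 0 < v 0) (h2 : (v 0)^2 ≤ 2)
    {a₂ : ℝ} (ha₂ : 0 < a₂) (hz : v a₂ = 0) : False := by
  have hE0 : ((v 0)^2-1)^2/4 ≤ 1/4 := by nlinarith [sq_nonneg (v 0), mul_pos hv0 hv0]
  have hE14 : ∀ σ ∈ Ioc (0:ℝ) a₂, vE v σ = 1/4 := by
    intro σ hσ
    have hEa₂ : 1/4 ≤ vE v a₂ := by
      simp only [vE, hz]
      nlinarith [sq_nonneg (deriv v a₂)]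
    have hle : vE v a₂ ≤ vE v σ := Emono P hσ.1 hσ.2
    have hup : vE v σ ≤ ((v 0)^2-1)^2/4 := E_le_E0 P hσ.1
    linarith
  have hvda₂ : deriv v a₂ = 0 := by
    have h := hE14 a₂ ⟨ha₂, le_refl _⟩
    simp only [vE, hz] at h
    nlinarith [sq_nonneg (deriv v a₂)]
  have hvd0 : ∀ σ ∈ Ioc (0:ℝ) a₂, deriv v σ = 0 := by
    intro σ hσ
    rcases eq_or_lt_of_le hσ.2 with heq | hlt
    · rw [heq]; exact hvda₂
    · have hconst : (vE v) =ᶠ[𝓝 σ] (fun _ => (1/4:ℝ)) := by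
        filter_upwards [Ioo_mem_nhds hσ.1 hlt] with x hx
        exact hE14 x ⟨hx.1, hx.2.le⟩
      have h1 : HasDerivAt (vE v) 0 σ :=
        (hasDerivAt_const σ (1/4:ℝ)).congr_of_eventuallyEq hconst
      have h2 := P.hE σ hσ.1
      have h3 := h2.unique h1
      have hσ0 : σ ≠ 0 := ne_of_gt hσ.1
      field_simp at h3
      simpa using h3
  have hvconst : ∀ s ∈ Ioo (0:ℝ) a₂, v s = 0 := by
    intro s hs
    have huIcc : uIcc s a₂ = Icc s a₂ := uIcc_of_le hs.2.le
    have hderiv : ∀ σ ∈ uIcc s a₂, HasDerivAt v (deriv v σ) σ := by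
      intro σ hσ; rw [huIcc] at hσ; exact P.hv σ (lt_of_lt_of_le hs.1 hσ.1)
    have hint : IntervalIntegrable (deriv v) MeasureTheory.volume s a₂ := by
      apply ContinuousOn.intervalIntegrable
      rw [huIcc]
      exact P.vdcont.mono (fun σ hσ => lt_of_lt_of_le hs.1 hσ.1)
    have hFTC := integral_eq_sub_of_hasDerivAt hderiv hint
    have hEqOn : EqOn (deriv v) (fun _ => (0:ℝ)) (uIcc s a₂) := by
      intro σ hσ; rw [huIcc] at hσ; exact hvd0 σ ⟨lt_of_lt_of_le hs.1 hσ.1, hσ.2⟩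
    have hzero : ∫ σ in s..a₂, deriv v σ = 0 := by
      rw [intervalIntegral.integral_congr hEqOn]
      simp
    rw [hzero] at hFTC
    rw [hz] at hFTC
    linarith
  have hv00 : v 0 = 0 := by
    have h0 : Tendsto v (𝓝[>] (0:ℝ)) (𝓝 0) := by
      refine Tendsto.congr' ?_ tendsto_const_nhds
      filter_upwards [Ioo_mem_nhdsGT ha₂] with s hs
      exact (hvconst s hs).symm
    exact tendsto_nhds_unique P.tendv h0
  linarith


theorem hInt (P : Pack v) {t : ℝ} (ht : 0 < t) :
    t * deriv v t = ∫ σ in (0:ℝ)..t, σ * (v σ - (v σ)^3) := by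
  have hintc : ContinuousOn (fun σ => σ * (v σ - (v σ)^3)) (Ici 0) :=
    continuousOn_id.mul (P.cont.sub (P.cont.pow 3))
  have key : ∀ s ∈ Ioo (0:ℝ) t,
      t * deriv v t - s * deriv v s = ∫ σ in s..t, σ * (v σ - (v σ)^3) := by
    intro s hs
    have huIcc : uIcc s t = Icc s t := uIcc_of_le hs.2.le
    have hD : ∀ σ ∈ uIcc s t, HasDerivAt (fun r => r * deriv v r) (σ * (v σ - (v σ)^3)) σ := by
      intro σ hσ
      rw [huIcc] at hσ
      have hσpos : 0 < σ := lt_of_lt_of_le hs.1 hσ.1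
      have h1 := (hasDerivAt_id σ).mul (P.hvd σ hσpos)
      have hval : 1 * deriv v σ + σ * deriv (deriv v) σ = σ * (v σ - (v σ)^3) := by
        rw [P.hode σ hσpos]
        field_simp
        ring
      simp only [id_eq] at h1
      rw [hval] at h1
      exact h1
    have hC : ContinuousOn (fun σ => σ * (v σ - (v σ)^3)) (uIcc s t) := by
      apply hintc.mono
      rw [huIcc]
      exact fun σ hσ => le_trans hs.1.le hσ.1
    have := integral_eq_sub_of_hasDerivAt hD (hC.intervalIntegrable)
    linarith [this]
  have hInt0 : ∀ s ∈ Ioo (0:ℝ) t,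
      (∫ σ in (0:ℝ)..s, σ * (v σ - (v σ)^3)) + ∫ σ in s..t, σ * (v σ - (v σ)^3)
        = ∫ σ in (0:ℝ)..t, σ * (v σ - (v σ)^3) := by
    intro s hs
    apply integral_add_adjacent_intervals
    · apply ContinuousOn.intervalIntegrable
      apply hintc.mono
      intro σ hσ
      rw [uIcc_of_le hs.1.le] at hσ
      exact hσ.1
    · apply ContinuousOn.intervalIntegrable
      apply hintc.mono
      intro σ hσ
      rw [uIcc_of_le hs.2.le] at hσ
      exact le_trans hs.1.le hσ.1
  set F := fun s => s * deriv v s - ∫ σ in (0:ℝ)..s, σ * (v σ - (v σ)^3) with hFdef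
  have hFconst : F =ᶠ[𝓝[>] (0:ℝ)] (fun _ => F t) := by
    filter_upwards [Ioo_mem_nhdsGT ht] with s hs
    have h1 := key s hs
    have h2 := hInt0 s hs
    simp only [hFdef]
    linarith
  have hFtend : Tendsto F (𝓝[>] (0:ℝ)) (𝓝 0) := by
    obtain ⟨C, hC⟩ := (isCompact_Icc (a := (0:ℝ)) (b := t)).exists_bound_of_continuousOn
      (hintc.mono (fun σ hσ => hσ.1))
    have hCnn : 0 ≤ C := le_trans (norm_nonneg _) (hC 0 ⟨le_refl _, ht.le⟩)
    have htend2 : Tendsto (fun s => ∫ σ in (0:ℝ)..s, σ * (v σ - (v σ)^3)) (𝓝[>] (0:ℝ)) (𝓝 0) := by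
      apply squeeze_zero_norm' (a := fun s => C * s)
      · filter_upwards [Ioo_mem_nhdsGT ht] with s hs
        have hb := intervalIntegral.norm_integral_le_of_norm_le_const (C := C)
          (f := fun σ => σ * (v σ - (v σ)^3)) (a := (0:ℝ)) (b := s) (by
            intro x hx
            rw [uIoc_of_le hs.1.le] at hx
            exact hC x ⟨hx.1.le, le_trans hx.2 hs.2.le⟩)
        calc ‖∫ σ in (0:ℝ)..s, σ * (v σ - (v σ)^3)‖ ≤ C * |s - 0| := hb
          _ = C * s := by rw [sub_zero, abs_of_pos hs.1]
      · have hc2 : Tendsto (fun s : ℝ => C * s) (𝓝 0) (𝓝 (C * 0)) :=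
          (continuous_const.mul continuous_id).tendsto 0
        have h3 : Tendsto (fun s : ℝ => C * s) (𝓝[>] (0:ℝ)) (𝓝 (C * 0)) :=
          hc2.mono_left nhdsWithin_le_nhds
        simpa using h3
    have := P.tendvd.sub htend2
    simpa using this
  have hFt : F t = 0 := by
    have h1 : Tendsto (fun _ : ℝ => F t) (𝓝[>] (0:ℝ)) (𝓝 0) := hFtend.congr' hFconst
    exact (tendsto_nhds_unique h1 tendsto_const_nhds).symm
  have := hFt
  simp only [hFdef] at this
  linarith

set_option maxHeartbeats 2000000 in
theorem no_zero (P : Pack v) (hv0 : 0 < v 0) (hbig : 2 < (v 0)^2) (hv0lt2 : v 0 < 2)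
    {a₂ : ℝ} (ha₂ : 0 < a₂) (hz : v a₂ = 0)
    (hpos : ∀ σ, 0 ≤ σ → σ < a₂ → 0 < v σ) : False := by
  set s2 := Real.sqrt 2 with hs2def
  have hs2sq : s2^2 = 2 := Real.sq_sqrt (by norm_num)
  have hs2pos : 0 < s2 := Real.sqrt_pos.mpr (by norm_num)
  have hs2lt : s2 < 1.415 := by nlinarith
  have hs2gt : 1.414 < s2 := by nlinarith
  have hv0s2 : s2 < v 0 := by nlinarith
  have hs2cube : s2^3 = 2*s2 := by
    have h : s2^3 = s2^2*s2 := by ring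
    rw [h, hs2sq]
  have hgf_nn : ∀ y : ℝ, s2 ≤ y → s2 ≤ y^3 - y := by
    intro y hy
    have hfac : 0 ≤ (y - s2)*(y^2 + y*s2 + s2^2 - 1) := by
      apply mul_nonneg (by linarith only [hy])
      nlinarith only [hy, hs2sq, hs2pos]
    nlinarith only [hfac, hs2cube]
  -- global upper bound from part 1
  have hub : ∀ σ, 0 ≤ σ → v σ ≤ v 0 := by
    intro σ h0
    rcases h0.eq_or_lt with heq | hσpos
    · rw [← heq]
    · have h1 := part1 P hσpos
      rw [abs_of_pos (by nlinarith : (0:ℝ) < (v 0)^2 - 1)] at h1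
      have h2 := (abs_le.mp h1).2
      nlinarith [h2, hv0]
  -- the first crossing of level √2
  set T := {σ : ℝ | σ ∈ Icc 0 a₂ ∧ v σ ≤ s2} with hTdef
  have hTne : T.Nonempty := ⟨a₂, ⟨⟨ha₂.le, le_refl _⟩, by rw [hz]; exact hs2pos.le⟩⟩
  have hTbdd : BddBelow T := ⟨0, fun σ hσ => hσ.1.1⟩
  have hTclosed : IsClosed T := by
    have hTeq : T = Icc 0 a₂ ∩ v ⁻¹' (Iic s2) := rfl
    rw [hTeq]
    exact (P.cont.mono Icc_subset_Ici_self).preimage_isClosed_of_isClosed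
      isClosed_Icc isClosed_Iic
  set b := sInf T with hbdef
  have hbT : b ∈ T := hTclosed.csInf_mem hTne hTbdd
  have hbpos : 0 < b := by
    have hev : ∀ᶠ σ in 𝓝[Ici 0] (0:ℝ), s2 < v σ :=
      (P.cont 0 self_mem_Ici).eventually (eventually_gt_nhds hv0s2)
    obtain ⟨u, hu, hsub⟩ := mem_nhdsGE_iff_exists_Ico_subset.mp hev
    have hub2 : u ≤ b := by
      apply le_csInf hTne
      intro σ hσ
      by_contra hlt
      push_neg at hlt
      have : s2 < v σ := hsub ⟨hσ.1.1, hlt⟩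
      linarith [hσ.2]
    exact lt_of_lt_of_le hu hub2
  have habove : ∀ σ, 0 ≤ σ → σ < b → s2 < v σ := by
    intro σ h0 hlt
    by_contra h
    push_neg at h
    have hmem : σ ∈ T := ⟨⟨h0, le_trans hlt.le hbT.1.2⟩, h⟩
    exact absurd (csInf_le hTbdd hmem) (not_le.mpr hlt)
  have hvb : v b = s2 := by
    rcases lt_or_eq_of_le hbT.2 with hlt | heq
    · exfalso
      have hca : ContinuousAt v b := P.cont.continuousAt (Ici_mem_nhds hbpos)
      have hev2 : ∀ᶠ σ in 𝓝 b, v σ < s2 := hca.eventually (eventually_lt_nhds hlt)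
      have hev3 : ∀ᶠ σ in 𝓝[<] b, v σ < s2 := hev2.filter_mono nhdsWithin_le_nhds
      have hmem3 : Ioo (0:ℝ) b ∈ 𝓝[<] b := Ioo_mem_nhdsLT hbpos
      obtain ⟨σ, hσv, hσI⟩ := (hev3.and (eventually_of_mem hmem3 (fun σ hσ => hσ))).exists
      exact absurd (habove σ hσI.1.le hσI.2) (not_lt.mpr hσv.le)
    · exact heq
  have hblt : b < a₂ := by
    rcases lt_or_eq_of_le hbT.1.2 with h | h
    · exact h
    · exfalso; rw [h, hz] at hvb; linarith
  have hvge : ∀ σ ∈ Icc (0:ℝ) b, s2 ≤ v σ := by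
    intro σ hσ
    rcases eq_or_lt_of_le hσ.2 with heq | hlt
    · rw [heq, hvb]
    · exact (habove σ hσ.1 hlt).le
  -- pump phase pointwise bounds
  have hvdneg : ∀ σ ∈ Ioc (0:ℝ) b, σ * deriv v σ ≤ -(s2 * σ^2/2) := by
    intro σ hσ
    rw [hInt P hσ.1]
    have hi1 : IntervalIntegrable (fun x => x * (v x - (v x)^3)) MeasureTheory.volume 0 σ := by
      apply ContinuousOn.intervalIntegrable
      apply (continuousOn_id.mul (P.cont.sub (P.cont.pow 3))).mono
      intro x hx
      rw [uIcc_of_le hσ.1.le] at hx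
      exact hx.1
    have hi2 : IntervalIntegrable (fun x : ℝ => -(s2 * x)) MeasureTheory.volume 0 σ :=
      (continuous_const.mul continuous_id).neg.intervalIntegrable 0 σ
    have hmono_int : ∫ x in (0:ℝ)..σ, x * (v x - (v x)^3) ≤ ∫ x in (0:ℝ)..σ, -(s2*x) := by
      apply integral_mono_on hσ.1.le hi1 hi2
      intro x hx
      have hge : s2 ≤ v x := hvge x ⟨hx.1, le_trans hx.2 hσ.2⟩
      have hle2 : v x ≤ v 0 := hub x hx.1
      have hcube : s2 ≤ (v x)^3 - v x := by nlinarith [hs2sq, hge, sq_nonneg (v x - s2)]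
      nlinarith [hx.1, hcube]
    have hval : ∫ x in (0:ℝ)..σ, -(s2*x) = -(s2*σ^2/2) := by
      rw [intervalIntegral.integral_neg, intervalIntegral.integral_const_mul, integral_id]
      ring
    linarith
  have hvdneg' : ∀ σ ∈ Ioc (0:ℝ) b, deriv v σ < 0 := by
    intro σ hσ
    have h := hvdneg σ hσ
    nlinarith [hσ.1, hs2pos, sq_nonneg σ, mul_pos hσ.1 hσ.1]
  -- monotonicity on [0,b]
  have hvftc : ∀ s t : ℝ, 0 < s → s ≤ t → v t - v s = ∫ x in s..t, deriv v x := by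
    intro s t hs hst
    have huIcc : uIcc s t = Icc s t := uIcc_of_le hst
    have hderiv : ∀ σ ∈ uIcc s t, HasDerivAt v (deriv v σ) σ := by
      intro σ hσ; rw [huIcc] at hσ; exact P.hv σ (lt_of_lt_of_le hs hσ.1)
    have hint : IntervalIntegrable (deriv v) MeasureTheory.volume s t := by
      apply ContinuousOn.intervalIntegrable
      rw [huIcc]
      exact P.vdcont.mono (fun σ hσ => lt_of_lt_of_le hs hσ.1)
    exact (integral_eq_sub_of_hasDerivAt hderiv hint).symm
  have hmono2 : ∀ s t : ℝ, 0 ≤ s → s ≤ t → t ≤ b → v t ≤ v s := by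
    intro s t h0 hst htb
    rcases h0.eq_or_lt with heq | hs
    · rw [← heq]; exact hub t (le_trans h0 hst)
    · have hFTC := hvftc s t hs hst
      have hle : ∫ x in s..t, deriv v x ≤ ∫ x in s..t, (0:ℝ) := by
        apply integral_mono_on hst
        · apply ContinuousOn.intervalIntegrable
          rw [uIcc_of_le hst]
          exact P.vdcont.mono (fun σ hσ => lt_of_lt_of_le hs hσ.1)
        · exact intervalIntegrable_const
        · intro x hx
          exact (hvdneg' x ⟨lt_of_lt_of_le hs hx.1, le_trans hx.2 htb⟩).le
      simp at hle
      linarith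
  -- key lower/upper bounds on -(σ v')
  have hkeylow : ∀ σ ∈ Ioc (0:ℝ) b, σ^2/2 * ((v σ)^3 - v σ) ≤ -(σ * deriv v σ) := by
    intro σ hσ
    rw [hInt P hσ.1]
    have hi1 : IntervalIntegrable (fun x => x * (v x - (v x)^3)) MeasureTheory.volume 0 σ := by
      apply ContinuousOn.intervalIntegrable
      apply (continuousOn_id.mul (P.cont.sub (P.cont.pow 3))).mono
      intro x hx
      rw [uIcc_of_le hσ.1.le] at hx
      exact hx.1
    have hi2 : IntervalIntegrable (fun x : ℝ => x * -((v σ)^3 - v σ)) MeasureTheory.volume 0 σ :=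
      (continuous_id.mul continuous_const).intervalIntegrable 0 σ
    have hmono_int : ∫ x in (0:ℝ)..σ, x * (v x - (v x)^3)
        ≤ ∫ x in (0:ℝ)..σ, x * -((v σ)^3 - v σ) := by
      apply integral_mono_on hσ.1.le hi1 hi2
      intro x hx
      have hvxσ : v σ ≤ v x := hmono2 x σ hx.1 hx.2 hσ.2
      have hge : s2 ≤ v σ := hvge σ ⟨hσ.1.le, hσ.2⟩
      have hle2 : v x ≤ v 0 := hub x hx.1
      have hfac : 0 ≤ (v x - v σ)*((v x)^2 + v x * v σ + (v σ)^2 - 1) := by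
        apply mul_nonneg (by linarith)
        nlinarith [hge, hvxσ, hs2sq]
      nlinarith [hx.1, hfac]
    have hval : ∫ x in (0:ℝ)..σ, x * -((v σ)^3 - v σ) = -(σ^2/2 * ((v σ)^3 - v σ)) := by
      rw [show (fun x : ℝ => x * -((v σ)^3 - v σ)) = fun x : ℝ => -((v σ)^3 - v σ) * x by
        funext x; ring]
      rw [intervalIntegral.integral_const_mul, integral_id]
      ring
    linarith
  have hkeyup : ∀ σ ∈ Ioc (0:ℝ) b, -(σ * deriv v σ) ≤ σ^2/2 * ((v 0)^3 - v 0) := by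
    intro σ hσ
    rw [hInt P hσ.1]
    have hi1 : IntervalIntegrable (fun x => x * (v x - (v x)^3)) MeasureTheory.volume 0 σ := by
      apply ContinuousOn.intervalIntegrable
      apply (continuousOn_id.mul (P.cont.sub (P.cont.pow 3))).mono
      intro x hx
      rw [uIcc_of_le hσ.1.le] at hx
      exact hx.1
    have hi2 : IntervalIntegrable (fun x : ℝ => x * -((v 0)^3 - v 0)) MeasureTheory.volume 0 σ :=
      (continuous_id.mul continuous_const).intervalIntegrable 0 σ
    have hmono_int : ∫ x in (0:ℝ)..σ, x * -((v 0)^3 - v 0)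
        ≤ ∫ x in (0:ℝ)..σ, x * (v x - (v x)^3) := by
      apply integral_mono_on hσ.1.le hi2 hi1
      intro x hx
      have hvxσ : v x ≤ v 0 := hub x hx.1
      have hge : s2 ≤ v x := hvge x ⟨hx.1, le_trans hx.2 hσ.2⟩
      have hfac : 0 ≤ (v 0 - v x)*((v 0)^2 + v 0 * v x + (v x)^2 - 1) := by
        apply mul_nonneg (by linarith)
        nlinarith [hge, hvxσ, hs2sq]
      nlinarith [hx.1, hfac]
    have hval : ∫ x in (0:ℝ)..σ, x * -((v 0)^3 - v 0) = -(σ^2/2 * ((v 0)^3 - v 0)) := by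
      rw [show (fun x : ℝ => x * -((v 0)^3 - v 0)) = fun x : ℝ => -((v 0)^3 - v 0) * x by
        funext x; ring]
      rw [intervalIntegral.integral_const_mul, integral_id]
      ring
    linarith
  have hgf0nn : 0 ≤ (v 0)^3 - v 0 := by nlinarith [hs2sq]
  -- distance bound  v0 - v σ ≤ gf(v0) σ²/4
  have hdist : ∀ σ ∈ Icc (0:ℝ) b, v 0 - v σ ≤ ((v 0)^3 - v 0) * σ^2/4 := by
    intro σ hσ
    rcases hσ.1.eq_or_lt with heq | hσpos
    · rw [← heq]; simp
    · have key : ∀ s ∈ Ioo (0:ℝ) σ, v s - v σ ≤ ((v 0)^3 - v 0) * σ^2/4 := by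
        intro s hs
        have hFTC := hvftc s σ hs.1 hs.2.le
        have hi2 : IntervalIntegrable (fun x : ℝ => -(x/2 * ((v 0)^3 - v 0)))
            MeasureTheory.volume s σ :=
          ((continuous_id.div_const 2).mul continuous_const).neg.intervalIntegrable s σ
        have hi1 : IntervalIntegrable (deriv v) MeasureTheory.volume s σ := by
          apply ContinuousOn.intervalIntegrable
          rw [uIcc_of_le hs.2.le]
          exact P.vdcont.mono (fun x hx => lt_of_lt_of_le hs.1 hx.1)
        have hmono_int : ∫ x in s..σ, -(x/2 * ((v 0)^3 - v 0)) ≤ ∫ x in s..σ, deriv v x := by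
          apply integral_mono_on hs.2.le hi2 hi1
          intro x hx
          have hxpos : 0 < x := lt_of_lt_of_le hs.1 hx.1
          have hxb : x ≤ b := le_trans hx.2 hσ.2
          have h1 := hkeyup x ⟨hxpos, hxb⟩
          nlinarith [h1, hxpos]
        have hval : ∫ x in s..σ, -(x/2 * ((v 0)^3 - v 0)) = -(((v 0)^3 - v 0) * (σ^2-s^2)/4) := by
          rw [show (fun x : ℝ => -(x/2 * ((v 0)^3 - v 0))) = fun x : ℝ => -((v 0)^3 - v 0)/2 * x by
            funext x; ring]
          rw [intervalIntegral.integral_const_mul, integral_id]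
          ring
        nlinarith [hFTC, hmono_int, hval, sq_nonneg s, hgf0nn]
      have hlim : Tendsto (fun s => v s - v σ) (𝓝[>] (0:ℝ)) (𝓝 (v 0 - v σ)) :=
        P.tendv.sub_const _
      apply le_of_tendsto hlim
      filter_upwards [Ioo_mem_nhdsGT hσpos] with s hs
      exact key s hs
  -- dissipation step:  Γ(v s) - Γ(v r) ≤ ∫ v'²/x
  have hstep : ∀ s r : ℝ, 0 < s → s ≤ r → r ≤ b →
      ((v s)^4/8 - (v s)^2/4) - ((v r)^4/8 - (v r)^2/4) ≤ ∫ x in s..r, (deriv v x)^2/x := by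
    intro s r hs hsr hrb
    have hsub : Icc s r ⊆ Ioi (0:ℝ) := fun x hx => lt_of_lt_of_le hs hx.1
    have hvc : ContinuousOn v (Icc s r) := P.cont.mono (fun x hx => Set.mem_Ici.mpr (hsub hx).le)
    have hΓ : ∀ y : ℝ, HasDerivAt (fun w : ℝ => w^4/8 - w^2/4) ((y^3 - y)/2) y := by
      intro y
      have h1 := ((hasDerivAt_pow 4 y).div_const 8).sub ((hasDerivAt_pow 2 y).div_const 4)
      refine h1.congr_deriv ?_
      ring
    have hcc : ContinuousOn (fun x => ((v x)^3 - (v x))/2 * deriv v x) (Icc s r) :=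
      (((hvc.pow 3).sub hvc).div_const 2).mul (P.vdcont.mono hsub)
    have hchain := chainFTC P.hv hs hsr (Φ := fun w => w^4/8 - w^2/4)
      (Φd := fun y : ℝ => (y^3 - y)/2) (fun σ _ => hΓ (v σ)) hcc
    have hi1 : IntervalIntegrable (fun x => -(((v x)^3 - v x)/2 * deriv v x))
        MeasureTheory.volume s r := by
      apply ContinuousOn.intervalIntegrable
      rw [uIcc_of_le hsr]
      exact hcc.neg
    have hi2 : IntervalIntegrable (fun x => (deriv v x)^2/x) MeasureTheory.volume s r := by
      apply ContinuousOn.intervalIntegrable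
      rw [uIcc_of_le hsr]
      exact ((P.vdcont.mono hsub).pow 2).div continuousOn_id (fun x hx => ne_of_gt (hsub hx))
    have hmono_int : ∫ x in s..r, -(((v x)^3 - v x)/2 * deriv v x)
        ≤ ∫ x in s..r, (deriv v x)^2/x := by
      apply integral_mono_on hsr hi1 hi2
      intro x hx
      have hxpos : 0 < x := lt_of_lt_of_le hs hx.1
      have hxb : x ≤ b := le_trans hx.2 hrb
      have h1 := hkeylow x ⟨hxpos, hxb⟩
      have h2 := hvdneg' x ⟨hxpos, hxb⟩
      have h3 : x/2 * ((v x)^3 - v x) ≤ -(deriv v x) := by nlinarith [h1, hxpos]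
      rw [le_div_iff₀ hxpos]
      nlinarith [mul_le_mul_of_nonneg_right h3 (neg_nonneg.mpr h2.le)]
    have hflip : ∫ x in s..r, -(((v x)^3 - v x)/2 * deriv v x)
        = -(((v r)^4/8 - (v r)^2/4) - ((v s)^4/8 - (v s)^2/4)) := by
      rw [intervalIntegral.integral_neg, hchain]
    rw [hflip] at hmono_int
    linarith
  -- energy bound at b  (W1 form)
  have hs2four : s2^4 = 4 := by nlinarith [hs2sq]
  have hΓb0 : (v b)^4/8 - (v b)^2/4 = 0 := by
    rw [hvb]
    rw [hs2four, hs2sq]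
    norm_num
  have hEb : vE v b ≤ ((v 0)^2-1)^2/4 - ((v 0)^4/8 - (v 0)^2/4) := by
    have key : ∀ s ∈ Ioo (0:ℝ) b,
        vE v b ≤ vE v s - ((v s)^4/8 - (v s)^2/4) + ((v b)^4/8 - (v b)^2/4) := by
      intro s hs
      have h1 := Efc P hs.1 hs.2.le
      have h2 := hstep s b hs.1 hs.2.le (le_refl b)
      linarith
    have htends : Tendsto (fun s => vE v s - ((v s)^4/8 - (v s)^2/4) + ((v b)^4/8 - (v b)^2/4))
        (𝓝[>] (0:ℝ))
        (𝓝 ((((v 0)^2-1)^2/4 - ((v 0)^4/8 - (v 0)^2/4)) + ((v b)^4/8 - (v b)^2/4))) := by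
      apply Tendsto.add _ tendsto_const_nhds
      exact P.tendE.sub (((P.tendv.pow 4).div_const 8).sub ((P.tendv.pow 2).div_const 4))
    have hfin := ge_of_tendsto htends (by
      filter_upwards [Ioo_mem_nhdsGT hbpos] with s hs
      exact key s hs)
    rw [hΓb0] at hfin
    linarith
  -- G bound at b
  have hPsiD : ∀ x : ℝ, 1 < x → HasDerivAt (fun y => (y^2 - Real.log (y^2-1))/2)
      (x*(x^2-2)/(x^2-1)) x := by
    intro x hx
    have hx2 : (0:ℝ) < x^2 - 1 := by nlinarith
    have hinner : HasDerivAt (fun y : ℝ => y^2 - 1) (2*x^1) x := (hasDerivAt_pow 2 x).sub_const 1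
    have hlog := (Real.hasDerivAt_log (ne_of_gt hx2)).comp x hinner
    have hcomb := ((hasDerivAt_pow 2 x).sub hlog).div_const 2
    refine hcomb.congr_deriv ?_
    field_simp
    ring
  have hGb : vG v b ≤ ((v 0)^2 - Real.log ((v 0)^2-1))/2 - 1 := by
    have key : ∀ s ∈ Ioo (0:ℝ) b,
        vG v b ≤ vG v s + (((v s)^2 - Real.log ((v s)^2-1))/2
          - ((v b)^2 - Real.log ((v b)^2-1))/2) := by
      intro s hs
      have hsub : Icc s b ⊆ Ioi (0:ℝ) := fun x hx => lt_of_lt_of_le hs.1 hx.1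
      have hvc : ContinuousOn v (Icc s b) := P.cont.mono (fun x hx => Set.mem_Ici.mpr (hsub hx).le)
      have h1 := Gfc P hs.1 hs.2.le
      have hvgt1 : ∀ x ∈ Icc s b, 1 < v x := by
        intro x hx
        have := hvge x ⟨(hsub hx).le, hx.2⟩
        nlinarith [hs2sq, hs2pos]
      have hccd : ContinuousOn (fun x => (v x*((v x)^2-2)/((v x)^2-1)) * deriv v x) (Icc s b) := by
        apply ContinuousOn.mul _ (P.vdcont.mono hsub)
        apply ContinuousOn.div (hvc.mul ((hvc.pow 2).sub continuousOn_const))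
          ((hvc.pow 2).sub continuousOn_const)
        intro x hx
        have := hvgt1 x hx
        simp only [Pi.sub_apply, Pi.pow_apply]; nlinarith
      have hchain := chainFTC P.hv hs.1 hs.2.le
        (Φ := fun y => (y^2 - Real.log (y^2-1))/2)
        (Φd := fun y => y*(y^2-2)/(y^2-1))
        (fun x hx => hPsiD (v x) (hvgt1 x hx)) hccd
      have hi1 : IntervalIntegrable (fun x => x/2 * ((v x)^2*((v x)^2-2)))
          MeasureTheory.volume s b := by
        apply ContinuousOn.intervalIntegrable
        rw [uIcc_of_le hs.2.le]
        exact (continuousOn_id.div_const 2).mul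
          ((hvc.pow 2).mul ((hvc.pow 2).sub continuousOn_const))
      have hi2 : IntervalIntegrable (fun x => -((v x*((v x)^2-2)/((v x)^2-1)) * deriv v x))
          MeasureTheory.volume s b := by
        apply ContinuousOn.intervalIntegrable
        rw [uIcc_of_le hs.2.le]
        exact hccd.neg
      have hmono_int : ∫ x in s..b, x/2 * ((v x)^2*((v x)^2-2))
          ≤ ∫ x in s..b, -((v x*((v x)^2-2)/((v x)^2-1)) * deriv v x) := by
        apply integral_mono_on hs.2.le hi1 hi2
        intro x hx
        have hxpos : 0 < x := hsub hx
        have h1' := hkeylow x ⟨hxpos, hx.2⟩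
        have hx1 := hvgt1 x hx
        have hxge : s2 ≤ v x := hvge x ⟨hxpos.le, hx.2⟩
        have hx2' : v x ≤ v 0 := hub x hxpos.le
        have hden : (0:ℝ) < (v x)^2 - 1 := by nlinarith
        have hnum : (0:ℝ) ≤ (v x)^2 - 2 := by nlinarith [hs2sq]
        have hPnn : 0 ≤ v x*((v x)^2-2)/((v x)^2-1) :=
          div_nonneg (mul_nonneg (by linarith) hnum) hden.le
        have h3 : x/2 * ((v x)^3 - v x) ≤ -(deriv v x) := by nlinarith [h1', hxpos]
        have hident : ((v x)^3 - v x) * (v x*((v x)^2-2)/((v x)^2-1))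
            = (v x)^2*((v x)^2-2) := by
          field_simp
        calc x/2 * ((v x)^2*((v x)^2-2))
            = (x/2 * ((v x)^3 - v x)) * (v x*((v x)^2-2)/((v x)^2-1)) := by
              rw [mul_assoc, hident]
          _ ≤ (-(deriv v x)) * (v x*((v x)^2-2)/((v x)^2-1)) :=
              mul_le_mul_of_nonneg_right h3 hPnn
          _ = -((v x*((v x)^2-2)/((v x)^2-1)) * deriv v x) := by ring
      rw [intervalIntegral.integral_neg, hchain] at hmono_int
      linarith
    have hΨb : ((v b)^2 - Real.log ((v b)^2-1))/2 = 1 := by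
      rw [hvb, hs2sq]
      norm_num
    have htends : Tendsto (fun s => vG v s + (((v s)^2 - Real.log ((v s)^2-1))/2
        - ((v b)^2 - Real.log ((v b)^2-1))/2)) (𝓝[>] (0:ℝ))
        (𝓝 (0 + (((v 0)^2 - Real.log ((v 0)^2-1))/2
          - ((v b)^2 - Real.log ((v b)^2-1))/2))) := by
      apply Tendsto.add (tendG P)
      apply Tendsto.sub_const
      have hlogt : Tendsto (fun s => Real.log ((v s)^2-1)) (𝓝[>] (0:ℝ))
          (𝓝 (Real.log ((v 0)^2-1))) := by
        apply (Real.continuousAt_log (by nlinarith : (v 0)^2 - 1 ≠ 0)).tendsto.comp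
        exact (P.tendv.pow 2).sub_const 1
      exact ((P.tendv.pow 2).sub hlogt).div_const 2
    have hfin := ge_of_tendsto htends (by
      filter_upwards [Ioo_mem_nhdsGT hbpos] with s hs
      exact key s hs)
    rw [hΨb] at hfin
    linarith
  -- energy stays ≥ 1/4 up to the zero
  have hE14 : ∀ σ ∈ Ioc (0:ℝ) a₂, 1/4 ≤ vE v σ := by
    intro σ hσ
    have h1 : 1/4 ≤ vE v a₂ := by
      simp only [vE, hz]
      nlinarith [sq_nonneg (deriv v a₂)]
    linarith [Emono P hσ.1 hσ.2]
  -- no excursion above √2 during descent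
  have hexcl : ∀ c, b < c → c < a₂ → v c ≤ s2 := by
    intro c hbc hca₂
    by_contra hgt
    push_neg at hgt
    have hvdb : deriv v b < 0 := hvdneg' b ⟨hbpos, le_refl _⟩
    have hslope : Tendsto (slope v b) (𝓝[≠] b) (𝓝 (deriv v b)) :=
      hasDerivAt_iff_tendsto_slope.mp (P.hv b hbpos)
    have hslope' : Tendsto (slope v b) (𝓝[>] b) (𝓝 (deriv v b)) :=
      hslope.mono_left (nhdsWithin_mono b (fun x hx => ne_of_gt hx))
    have hev : ∀ᶠ x in 𝓝[>] b, slope v b x < 0 := hslope'.eventually_lt_const hvdb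
    obtain ⟨s1, hsl, hs1I⟩ := (hev.and (eventually_of_mem
      (Ioo_mem_nhdsGT hbc) (fun x hx => hx))).exists
    have hs1v : v s1 < s2 := by
      rw [slope_def_field] at hsl
      have hxb : 0 < s1 - b := sub_pos.mpr hs1I.1
      have h5 : v s1 - v b < 0 := by
        by_contra h6
        push_neg at h6
        exact absurd (div_nonneg (by linarith) hxb.le) (not_le.mpr hsl)
      rw [hvb] at h5
      linarith
    obtain ⟨μ, hμmem, hμmin⟩ := (isCompact_Icc (a := b) (b := c)).exists_isMinOn
      ⟨b, left_mem_Icc.mpr hbc.le⟩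
      (P.cont.mono (fun x hx => le_trans hbpos.le hx.1))
    have hμle : v μ ≤ v s1 := hμmin ⟨hs1I.1.le, hs1I.2.le⟩
    have hμlt : v μ < s2 := lt_of_le_of_lt hμle hs1v
    have hμIoo : μ ∈ Ioo b c := by
      constructor
      · rcases hμmem.1.eq_or_lt with heq | h
        · exfalso; rw [← heq, hvb] at hμlt; linarith
        · exact h
      · rcases hμmem.2.eq_or_lt with heq | h
        · exfalso; rw [heq] at hμlt; linarith
        · exact h
    have hlocal : IsLocalMin v μ := hμmin.isLocalMin (Icc_mem_nhds hμIoo.1 hμIoo.2)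
    have hvdμ : deriv v μ = 0 := hlocal.deriv_eq_zero
    have hμpos : 0 < μ := lt_trans hbpos hμIoo.1
    have hμa₂ : μ < a₂ := lt_trans hμIoo.2 hca₂
    have hvμpos : 0 < v μ := hpos μ hμpos.le hμa₂
    have hμ2 : (v μ)^2 < 2 := by nlinarith [hμlt, hvμpos, hs2sq, hs2pos]
    have hlt14 : vE v μ < 1/4 := by
      simp only [vE, hvdμ]
      nlinarith [hμ2, mul_pos hvμpos hvμpos]
    exact absurd (hE14 μ ⟨hμpos, hμa₂.le⟩) (not_le.mpr hlt14)
  have hrange : ∀ σ ∈ Icc b a₂, 0 ≤ v σ ∧ v σ ≤ s2 := by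
    intro σ hσ
    constructor
    · rcases hσ.2.eq_or_lt with heq | h
      · rw [heq, hz]
      · exact (hpos σ (le_trans hbpos.le hσ.1) h).le
    · rcases hσ.1.eq_or_lt with heq | h1
      · rw [← heq, hvb]
      · rcases hσ.2.eq_or_lt with heq2 | h2
        · rw [heq2, hz]; exact hs2pos.le
        · exact hexcl σ h1 h2
  -- Θ - FTC on [b, a₂] and AM-GM
  have hvcD : ContinuousOn v (Icc b a₂) := P.cont.mono (fun x hx => le_trans hbpos.le hx.1)
  have hThint : ContinuousOn (fun σ => Thd (v σ) * deriv v σ) (Icc b a₂) := by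
    apply ContinuousOn.mul _ (P.vdcont.mono (fun x hx => lt_of_lt_of_le hbpos hx.1))
    simp only [Thd]
    apply ContinuousOn.div_const
    exact hvcD.mul (Real.continuous_sqrt.comp_continuousOn
      (continuousOn_const.sub (hvcD.pow 2)))
  have hThFTC := chainFTC P.hv hbpos hblt.le (Φ := Th) (Φd := Thd)
    (fun σ _ => Th_hasDerivAt (v σ)) hThint
  have hThval : ∫ σ in b..a₂, Thd (v σ) * deriv v σ = -(2/3) := by
    rw [hThFTC, hz, hvb, Th_zero, Th_sqrt2]
    ring
  have hAM : ∀ σ ∈ Icc b a₂, -(Thd (v σ) * deriv v σ)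
      ≤ (17/50)*((deriv v σ)^2/σ) + (25/68)*(σ*((v σ)^2*(2-(v σ)^2))) := by
    intro σ hσ
    have hσpos : 0 < σ := lt_of_lt_of_le hbpos hσ.1
    obtain ⟨h0x, hxs2⟩ := hrange σ hσ
    have h2x : (0:ℝ) ≤ 2 - (v σ)^2 := by nlinarith [hs2sq]
    have hT2 : (Thd (v σ))^2 = (v σ)^2*(2-(v σ)^2)/2 := by
      simp only [Thd]
      rw [div_pow, mul_pow, Real.sq_sqrt h2x, Real.sq_sqrt (by norm_num : (0:ℝ) ≤ 2)]
    have hT2σ : σ*((v σ)^2*(2-(v σ)^2)) = 2*(σ*(Thd (v σ))^2) := by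
      rw [hT2]; ring
    have hsq := sq_nonneg ((17/25)*deriv v σ + σ*Thd (v σ))
    have hdd : (deriv v σ)^2/σ*σ = (deriv v σ)^2 := by field_simp
    nlinarith [hsq, hσpos, hT2σ, hdd]
  have hIR1 : IntervalIntegrable (fun σ => (deriv v σ)^2/σ) MeasureTheory.volume b a₂ := by
    apply ContinuousOn.intervalIntegrable
    rw [uIcc_of_le hblt.le]
    exact ((P.vdcont.mono (fun x hx => lt_of_lt_of_le hbpos hx.1)).pow 2).div
      continuousOn_id (fun x hx => ne_of_gt (lt_of_lt_of_le hbpos hx.1))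
  have hIR2 : IntervalIntegrable (fun σ => σ*((v σ)^2*(2-(v σ)^2)))
      MeasureTheory.volume b a₂ := by
    apply ContinuousOn.intervalIntegrable
    rw [uIcc_of_le hblt.le]
    exact continuousOn_id.mul ((hvcD.pow 2).mul (continuousOn_const.sub (hvcD.pow 2)))
  have hIL : IntervalIntegrable (fun σ => -(Thd (v σ) * deriv v σ))
      MeasureTheory.volume b a₂ := by
    apply ContinuousOn.intervalIntegrable
    rw [uIcc_of_le hblt.le]
    exact hThint.neg
  have hint_mono : ∫ σ in b..a₂, -(Thd (v σ) * deriv v σ)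
      ≤ ∫ σ in b..a₂, ((17/50)*((deriv v σ)^2/σ) + (25/68)*(σ*((v σ)^2*(2-(v σ)^2)))) := by
    apply integral_mono_on hblt.le hIL ((hIR1.const_mul _).add (hIR2.const_mul _)) hAM
  have hLHS : ∫ σ in b..a₂, -(Thd (v σ) * deriv v σ) = 2/3 := by
    rw [intervalIntegral.integral_neg, hThval]
    norm_num
  have hsplit : ∫ σ in b..a₂, ((17/50)*((deriv v σ)^2/σ) + (25/68)*(σ*((v σ)^2*(2-(v σ)^2))))
      = (17/50)*(∫ σ in b..a₂, (deriv v σ)^2/σ)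
        + (25/68)*(∫ σ in b..a₂, σ*((v σ)^2*(2-(v σ)^2))) := by
    rw [integral_add (hIR1.const_mul _) (hIR2.const_mul _),
      intervalIntegral.integral_const_mul, intervalIntegral.integral_const_mul]
  have hI1val : ∫ σ in b..a₂, (deriv v σ)^2/σ = vE v b - vE v a₂ := by
    have := Efc P hbpos hblt.le
    linarith
  have hI2val : ∫ σ in b..a₂, σ*((v σ)^2*(2-(v σ)^2)) = -2*(vG v a₂ - vG v b) := by
    have h1 := Gfc P hbpos hblt.le
    have h2 : (fun σ => σ*((v σ)^2*(2-(v σ)^2)))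
        = fun σ => (-2)*(σ/2*((v σ)^2*((v σ)^2-2))) := by
      funext σ; ring
    rw [h2, intervalIntegral.integral_const_mul, ← h1]
  have hGa₂nn : 0 ≤ vG v a₂ := by
    simp only [vG]
    apply mul_nonneg (sq_nonneg a₂)
    linarith [hE14 a₂ ⟨ha₂, le_refl _⟩]
  have hEa₂14 : 1/4 ≤ vE v a₂ := hE14 a₂ ⟨ha₂, le_refl _⟩
  have hfinal : 2/3 ≤ (17/50)*(vE v b - 1/4) + (25/34)*(vG v b) := by
    rw [hLHS, hsplit, hI1val, hI2val] at hint_mono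
    linarith
  rcases le_or_gt (v 0) 1.98 with hW1 | hW2
  · have hu2 : (v 0)^2 ≤ 3.9204 := by nlinarith
    have hC : vE v b - 1/4 ≤ (((v 0)^2)^2 - 2*(v 0)^2)/8 := by
      have hident : ((v 0)^2-1)^2/4 - ((v 0)^4/8 - (v 0)^2/4) - 1/4
          = (((v 0)^2)^2 - 2*(v 0)^2)/8 := by ring
      linarith [hEb]
    have hD : vG v b ≤ ((v 0)^2 - 2 - Real.log ((v 0)^2-1))/2 := by
      have hident : ((v 0)^2 - Real.log ((v 0)^2-1))/2 - 1
          = ((v 0)^2 - 2 - Real.log ((v 0)^2-1))/2 := by ring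
      linarith [hGb]
    have := numW1 hbig hu2 hC hD
    linarith
  · -- W2 : 1.98 < v 0 < 2
    have hIVT := intermediate_value_Icc' (le_of_lt hbpos) (P.cont.mono (fun x hx => hx.1))
    have h193mem : (1.93:ℝ) ∈ Icc (v b) (v 0) := by
      rw [hvb]; exact ⟨by linarith [hs2lt], by linarith⟩
    have h145mem : (1.45:ℝ) ∈ Icc (v b) (v 0) := by
      rw [hvb]; exact ⟨by linarith [hs2lt], by linarith⟩
    obtain ⟨τ93, hτ93mem, hvτ93⟩ := hIVT h193mem
    obtain ⟨τ45, hτ45mem, hvτ45⟩ := hIVT h145mem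
    have hτorder : τ93 ≤ τ45 := by
      by_contra hcon2
      push_neg at hcon2
      have := hmono2 τ45 τ93 hτ45mem.1 hcon2.le hτ93mem.2
      rw [hvτ93, hvτ45] at this
      norm_num at this
    have hτ93pos : 0 < τ93 := by
      rcases hτ93mem.1.eq_or_lt with heq | h
      · exfalso; rw [← heq] at hvτ93; rw [hvτ93] at hW2; norm_num at hW2
      · exact h
    have hτ45pos : 0 < τ45 := lt_of_lt_of_le hτ93pos hτorder
    have hτ45b : τ45 ≤ b := hτ45mem.2
    -- strengthened lower bound for v s - v σ
    have hlow2 : ∀ σ ∈ Ioc (0:ℝ) b, ∀ s ∈ Icc (0:ℝ) σ,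
        ((v σ)^3 - v σ)*(σ^2-s^2)/4 ≤ v s - v σ := by
      intro σ hσ s hs
      have hinner : ∀ s' ∈ Ioo (0:ℝ) σ, ((v σ)^3 - v σ)*(σ^2-s'^2)/4 ≤ v s' - v σ := by
        intro s' hs'
        have hFTC := hvftc s' σ hs'.1 hs'.2.le
        have hi1 : IntervalIntegrable (deriv v) MeasureTheory.volume s' σ := by
          apply ContinuousOn.intervalIntegrable
          rw [uIcc_of_le hs'.2.le]
          exact P.vdcont.mono (fun x hx => lt_of_lt_of_le hs'.1 hx.1)
        have hi2 : IntervalIntegrable (fun x : ℝ => -(x/2*((v σ)^3 - v σ)))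
            MeasureTheory.volume s' σ :=
          ((continuous_id.div_const 2).mul continuous_const).neg.intervalIntegrable _ _
        have hmono_int : ∫ x in s'..σ, deriv v x ≤ ∫ x in s'..σ, -(x/2*((v σ)^3 - v σ)) := by
          apply integral_mono_on hs'.2.le hi1 hi2
          intro x hx
          have hxpos : 0 < x := lt_of_lt_of_le hs'.1 hx.1
          have hxb : x ≤ b := le_trans hx.2 hσ.2
          have h1 := hkeylow x ⟨hxpos, hxb⟩
          have hvxσ : v σ ≤ v x := hmono2 x σ hxpos.le hx.2 hσ.2
          have hge : s2 ≤ v σ := hvge σ ⟨hσ.1.le, hσ.2⟩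
          have hle2 : v x ≤ v 0 := hub x hxpos.le
          have hfac : 0 ≤ (v x - v σ)*((v x)^2 + v x*v σ + (v σ)^2 - 1) := by
            apply mul_nonneg (by linarith only [hvxσ])
            nlinarith only [hge, hs2sq, hvxσ, hs2pos]
          have hgfmono : (v σ)^3 - v σ ≤ (v x)^3 - v x := by linarith only [hfac]
          have hsc : x^2/2*((v σ)^3 - v σ) ≤ x^2/2*((v x)^3 - v x) :=
            mul_le_mul_of_nonneg_left hgfmono (by positivity)
          have hchain2 : x^2/2*((v σ)^3 - v σ) ≤ -(x*deriv v x) := le_trans hsc h1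
          nlinarith only [hchain2, hxpos]
        have hval : ∫ x in s'..σ, -(x/2*((v σ)^3 - v σ))
            = -(((v σ)^3 - v σ)*(σ^2-s'^2)/4) := by
          rw [show (fun x : ℝ => -(x/2*((v σ)^3 - v σ)))
              = fun x : ℝ => -(((v σ)^3 - v σ)/2)*x by funext x; ring]
          rw [intervalIntegral.integral_const_mul, integral_id]
          ring
        rw [hval] at hmono_int
        linarith only [hFTC, hmono_int]
      rcases hs.1.eq_or_lt with heq | hspos
      · have htt : Tendsto (fun s' => v s' - v σ) (𝓝[>] (0:ℝ)) (𝓝 (v 0 - v σ)) :=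
          P.tendv.sub_const _
        have htt2 : Tendsto (fun s' : ℝ => ((v σ)^3 - v σ)*(σ^2-s'^2)/4) (𝓝[>] (0:ℝ))
            (𝓝 (((v σ)^3 - v σ)*(σ^2-0^2)/4)) := by
          apply Tendsto.div_const
          apply Tendsto.const_mul
          exact tendsto_const_nhds.sub
            (((continuous_pow 2).tendsto 0).mono_left nhdsWithin_le_nhds)
        have hle := le_of_tendsto_of_tendsto htt2 htt (by
          filter_upwards [Ioo_mem_nhdsGT hσ.1] with s' hs'
          exact hinner s' hs')
        rw [← heq]
        simpa using hle
      · rcases hs.2.eq_or_lt with heq2 | hslt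
        · rw [heq2]; simp
        · exact hinner s ⟨hspos, hslt⟩
    -- strengthened pump bound on the correction window
    have hkey2 : ∀ σ, τ93 ≤ σ → σ ≤ τ45 →
        σ^2/2*((v σ)^3 - v σ) + 5*((v σ)^3 - v σ)*σ^4/16 ≤ -(σ*deriv v σ) := by
      intro σ h93 h45
      have hσpos : 0 < σ := lt_of_lt_of_le hτ93pos h93
      have hσb : σ ≤ b := le_trans h45 hτ45b
      rw [hInt P hσpos]
      have hgeσ : s2 ≤ v σ := hvge σ ⟨hσpos.le, hσb⟩
      have hgfσnn : 0 ≤ (v σ)^3 - v σ := le_trans hs2pos.le (hgf_nn _ hgeσ)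
      have hi1 : IntervalIntegrable (fun x => x * (v x - (v x)^3)) MeasureTheory.volume 0 σ := by
        apply ContinuousOn.intervalIntegrable
        apply (continuousOn_id.mul (P.cont.sub (P.cont.pow 3))).mono
        intro x hx
        rw [uIcc_of_le hσpos.le] at hx
        exact hx.1
      have hi2 : IntervalIntegrable (fun x : ℝ =>
          -(x*((v σ)^3 - v σ) + 5*((v σ)^3 - v σ)*(x*(σ^2-x^2)/4)))
          MeasureTheory.volume 0 σ := by
        apply Continuous.intervalIntegrable
        have : Continuous (fun x : ℝ => x*(σ^2-x^2)/4) :=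
          (continuous_id.mul (continuous_const.sub (continuous_pow 2))).div_const 4
        exact ((continuous_id.mul continuous_const).add (continuous_const.mul this)).neg
      have hmono_int : ∫ x in (0:ℝ)..σ, x*(v x - (v x)^3)
          ≤ ∫ x in (0:ℝ)..σ, -(x*((v σ)^3 - v σ) + 5*((v σ)^3 - v σ)*(x*(σ^2-x^2)/4)) := by
        apply integral_mono_on hσpos.le hi1 hi2
        intro x hx
        have hxb : x ≤ b := le_trans hx.2 hσb
        have hvxσ : v σ ≤ v x := hmono2 x σ hx.1 hx.2 hσb
        have hgex : s2 ≤ v x := hvge x ⟨hx.1, hxb⟩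
        have hle2 : v x ≤ v 0 := hub x hx.1
        have hslope5 : ((v σ)^3 - v σ) + 5*(v x - v σ) ≤ (v x)^3 - v x := by
          have hfac : 0 ≤ (v x - v σ)*((v x)^2 + v x*v σ + (v σ)^2 - 6) := by
            apply mul_nonneg (by linarith only [hvxσ])
            nlinarith only [hgeσ, hgex, hs2sq, hvxσ, hs2pos]
          linarith only [hfac]
        have hlow := hlow2 σ ⟨hσpos, hσb⟩ x hx
        have hp1 := mul_le_mul_of_nonneg_left hslope5 hx.1
        have hp2 := mul_le_mul_of_nonneg_left hlow hx.1
        have hp3 := mul_le_mul_of_nonneg_left hp2 (by norm_num : (0:ℝ) ≤ 5)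
        nlinarith only [hp1, hp3]
      have hval : ∫ x in (0:ℝ)..σ, -(x*((v σ)^3 - v σ) + 5*((v σ)^3 - v σ)*(x*(σ^2-x^2)/4))
          = -(σ^2/2*((v σ)^3 - v σ) + 5*((v σ)^3 - v σ)*σ^4/16) := by
        rw [show (fun x : ℝ => -(x*((v σ)^3 - v σ) + 5*((v σ)^3 - v σ)*(x*(σ^2-x^2)/4)))
            = fun x : ℝ => (-(((v σ)^3 - v σ) + 5*((v σ)^3 - v σ)*σ^2/4))*x
              + (5*((v σ)^3 - v σ)/4)*x^3 by funext x; ring]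
        have hiA : IntervalIntegrable
            (fun x : ℝ => (-(((v σ)^3 - v σ) + 5*((v σ)^3 - v σ)*σ^2/4))*x)
            MeasureTheory.volume 0 σ := by
          apply Continuous.intervalIntegrable
          exact continuous_const.mul continuous_id
        have hiB : IntervalIntegrable (fun x : ℝ => (5*((v σ)^3 - v σ)/4)*x^3)
            MeasureTheory.volume 0 σ := by
          apply Continuous.intervalIntegrable
          exact continuous_const.mul (continuous_pow 3)
        rw [integral_add hiA hiB,
          intervalIntegral.integral_const_mul, intervalIntegral.integral_const_mul,
          integral_id, integral_pow]
        push_cast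
        ring
      rw [hval] at hmono_int
      linarith only [hmono_int]
    -- integrability helper
    have hii : ∀ p q : ℝ, 0 < p → 0 < q →
        IntervalIntegrable (fun x => (deriv v x)^2/x) MeasureTheory.volume p q := by
      intro p q hp hq
      apply ContinuousOn.intervalIntegrable
      have hsub : uIcc p q ⊆ Ioi (0:ℝ) := fun x hx => lt_of_lt_of_le (lt_min hp hq) hx.1
      exact ((P.vdcont.mono hsub).pow 2).div (continuousOn_id.mono (fun x hx => trivial))
        (fun x hx => ne_of_gt (hsub hx))
    -- middle-piece dissipation with correction
    have hstep2 : ((v τ93)^4/8 - (v τ93)^2/4) - ((v τ45)^4/8 - (v τ45)^2/4)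
        + (4263/12800)*(((v 0 - v τ45)^2 - (v 0 - v τ93)^2)/2)
        ≤ ∫ x in τ93..τ45, (deriv v x)^2/x := by
      rcases hτorder.eq_or_lt with heq | hlt93
      · subst heq
        rw [intervalIntegral.integral_same]
        linarith only []
      · have hsub : Icc τ93 τ45 ⊆ Ioi (0:ℝ) := fun x hx => lt_of_lt_of_le hτ93pos hx.1
        have hvc : ContinuousOn v (Icc τ93 τ45) := P.cont.mono (fun x hx => Set.mem_Ici.mpr (hsub hx).le)
        have hccΓ : ContinuousOn (fun x => ((v x)^3 - v x)/2*deriv v x) (Icc τ93 τ45) :=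
          (((hvc.pow 3).sub hvc).div_const 2).mul (P.vdcont.mono hsub)
        have hccκ : ContinuousOn (fun x => (v 0 - v x)*deriv v x) (Icc τ93 τ45) :=
          (continuousOn_const.sub hvc).mul (P.vdcont.mono hsub)
        have hΓd : ∀ y : ℝ, HasDerivAt (fun w : ℝ => w^4/8 - w^2/4) ((y^3 - y)/2) y := by
          intro y
          have h1 := ((hasDerivAt_pow 4 y).div_const 8).sub ((hasDerivAt_pow 2 y).div_const 4)
          refine h1.congr_deriv ?_
          ring
        have hκd : ∀ y : ℝ, HasDerivAt (fun w : ℝ => -((v 0 - w)^2/2)) (v 0 - y) y := by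
          intro y
          have h0 : HasDerivAt (fun w : ℝ => v 0 - w) (-1) y := by
            simpa using (hasDerivAt_id y).const_sub (v 0)
          have h1 := ((h0.pow 2).div_const 2).neg
          refine h1.congr_deriv ?_
          ring
        have hchainΓ := chainFTC P.hv hτ93pos hlt93.le (Φ := fun w => w^4/8 - w^2/4)
          (Φd := fun y : ℝ => (y^3 - y)/2) (fun x _ => hΓd (v x)) hccΓ
        have hchainκ := chainFTC P.hv hτ93pos hlt93.le (Φ := fun w => -((v 0 - w)^2/2))
          (Φd := fun y : ℝ => v 0 - y) (fun x _ => hκd (v x)) hccκ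
        have hiL : IntervalIntegrable (fun x =>
            -(((v x)^3 - v x)/2*deriv v x) + (4263/12800)*(-((v 0 - v x)*deriv v x)))
            MeasureTheory.volume τ93 τ45 := by
          apply ContinuousOn.intervalIntegrable
          rw [uIcc_of_le hlt93.le]
          exact hccΓ.neg.add (continuousOn_const.mul hccκ.neg)
        have hmono_int : ∫ x in τ93..τ45,
            (-(((v x)^3 - v x)/2*deriv v x) + (4263/12800)*(-((v 0 - v x)*deriv v x)))
            ≤ ∫ x in τ93..τ45, (deriv v x)^2/x := by
          apply integral_mono_on hlt93.le hiL (hii τ93 τ45 hτ93pos hτ45pos)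
          intro x hx
          have hxpos : 0 < x := lt_of_lt_of_le hτ93pos hx.1
          have hxb : x ≤ b := le_trans hx.2 hτ45b
          have h2 := hvdneg' x ⟨hxpos, hxb⟩
          have hk2 := hkey2 x hx.1 hx.2
          have hgex : s2 ≤ v x := hvge x ⟨hxpos.le, hxb⟩
          have hgfxnn : 0 ≤ (v x)^3 - v x := le_trans hs2pos.le (hgf_nn _ hgex)
          have h3 : x/2*((v x)^3 - v x) + 5*((v x)^3 - v x)*x^3/16 ≤ -(deriv v x) := by
            nlinarith only [hk2, hxpos]
          have hvx45 : (1.45:ℝ) ≤ v x := by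
            rw [← hvτ45]
            exact hmono2 x τ45 hxpos.le hx.2 hτ45b
          have hgf6 : (v 0)^3 - v 0 ≤ 6 := by
            nlinarith only [hv0lt2, hv0, sq_nonneg (v 0 + 1)]
          have hd := hdist x ⟨hxpos.le, hxb⟩
          have hxsq : (2/3)*(v 0 - v x) ≤ x^2 := by
            nlinarith only [hd, hgf6, sq_nonneg x]
          have hgf145 : (12789/8000 : ℝ) ≤ (v x)^3 - v x := by
            have hfac2 : 0 ≤ (v x - 1.45)*((v x)^2 + 1.45*(v x) + 1.1025) := by
              apply mul_nonneg (by linarith only [hvx45])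
              nlinarith only [hvx45]
            linarith only [hfac2]
          have hv0vx : 0 ≤ v 0 - v x := by linarith only [hub x hxpos.le]
          have hκb : (4263/12800)*(v 0 - v x) ≤ 5*((v x)^3 - v x)*x^2/16 := by
            linarith only [mul_nonneg (sub_nonneg.mpr hgf145) (sq_nonneg x), hxsq,
              mul_le_mul_of_nonneg_left hxsq (by norm_num : (0:ℝ) ≤ 5*(12789/8000)/16)]
          have hcoeff : (((v x)^3 - v x)/2 + (4263/12800)*(v 0 - v x))*x ≤ -(deriv v x) := by
            linarith only [h3, mul_le_mul_of_nonneg_right hκb hxpos.le]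
          rw [le_div_iff₀ hxpos]
          nlinarith only [mul_le_mul_of_nonneg_right hcoeff (neg_nonneg.mpr h2.le)]
        have hflip : ∫ x in τ93..τ45,
            (-(((v x)^3 - v x)/2*deriv v x) + (4263/12800)*(-((v 0 - v x)*deriv v x)))
            = (((v τ93)^4/8 - (v τ93)^2/4) - ((v τ45)^4/8 - (v τ45)^2/4))
              + (4263/12800)*((v 0 - v τ45)^2/2 - (v 0 - v τ93)^2/2) := by
          have hintΓ : IntervalIntegrable (fun x => -(((v x)^3 - v x)/2*deriv v x))
              MeasureTheory.volume τ93 τ45 := by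
            apply ContinuousOn.intervalIntegrable
            rw [uIcc_of_le hlt93.le]
            exact hccΓ.neg
          have hintκ : IntervalIntegrable
              (fun x => (4263/12800:ℝ)*(-((v 0 - v x)*deriv v x)))
              MeasureTheory.volume τ93 τ45 := by
            apply ContinuousOn.intervalIntegrable
            rw [uIcc_of_le hlt93.le]
            exact continuousOn_const.mul hccκ.neg
          rw [integral_add hintΓ hintκ, intervalIntegral.integral_const_mul,
            intervalIntegral.integral_neg, intervalIntegral.integral_neg, hchainΓ, hchainκ]
          ring
        rw [hflip] at hmono_int
        linarith
    -- full three-piece energy bound at b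
    have hEb2 : vE v b ≤ ((v 0)^2-1)^2/4 - ((v 0)^4/8 - (v 0)^2/4)
        - (4263/12800)*(((v 0 - 1.45)^2 - (v 0 - 1.93)^2)/2) := by
      have hstep2' : ((1.93:ℝ)^4/8 - (1.93:ℝ)^2/4) - ((1.45:ℝ)^4/8 - (1.45:ℝ)^2/4)
          + (4263/12800)*(((v 0 - 1.45)^2 - (v 0 - 1.93)^2)/2)
          ≤ ∫ x in τ93..τ45, (deriv v x)^2/x := by
        have := hstep2
        rw [hvτ93, hvτ45] at this
        linarith only [this]
      have key : ∀ s ∈ Ioo (0:ℝ) τ93, vE v b ≤ vE v s - ((v s)^4/8 - (v s)^2/4)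
          - (4263/12800)*(((v 0 - 1.45)^2 - (v 0 - 1.93)^2)/2) := by
        intro s hs
        have hsb : s ≤ b := le_trans hs.2.le (le_trans hτorder hτ45b)
        have h1 := Efc P hs.1 hsb
        have hadd1 := integral_add_adjacent_intervals (hii s τ93 hs.1 hτ93pos)
          (hii τ93 τ45 hτ93pos hτ45pos)
        have hadd2 := integral_add_adjacent_intervals (hii s τ45 hs.1 hτ45pos)
          (hii τ45 b hτ45pos hbpos)
        have hp1 := hstep s τ93 hs.1 hs.2.le (le_trans hτorder hτ45b)
        have hp3 := hstep τ45 b hτ45pos hτ45b (le_refl b)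
        rw [hvτ93] at hp1
        rw [hvτ45] at hp3
        have hΓb0' : (v b)^4/8 - (v b)^2/4 = 0 := hΓb0
        linarith only [hstep2', hp1, hp3, hadd1, hadd2, h1, hΓb0']
      have htends : Tendsto (fun s => vE v s - ((v s)^4/8 - (v s)^2/4)
          - (4263/12800)*(((v 0 - 1.45)^2 - (v 0 - 1.93)^2)/2)) (𝓝[>] (0:ℝ))
          (𝓝 ((((v 0)^2-1)^2/4 - ((v 0)^4/8 - (v 0)^2/4))
            - (4263/12800)*(((v 0 - 1.45)^2 - (v 0 - 1.93)^2)/2))) := by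
        apply Tendsto.sub_const
        exact P.tendE.sub (((P.tendv.pow 4).div_const 8).sub ((P.tendv.pow 2).div_const 4))
      have hfin := ge_of_tendsto htends (by
        filter_upwards [Ioo_mem_nhdsGT hτ93pos] with s hs
        exact key s hs)
      linarith only [hfin]
    have hC : vE v b - 1/4 ≤ ((v 0)^4 - 2*(v 0)^2)/8
        - (4263/12800)*(((v 0 - 1.45)^2 - (v 0 - 1.93)^2)/2) := by
      have hident : ((v 0)^2-1)^2/4 - ((v 0)^4/8 - (v 0)^2/4) - 1/4
          = ((v 0)^4 - 2*(v 0)^2)/8 := by ring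
      linarith only [hEb2, hident]
    have hD : vG v b ≤ ((v 0)^2 - 2 - Real.log ((v 0)^2-1))/2 := by
      have hident : ((v 0)^2 - Real.log ((v 0)^2-1))/2 - 1
          = ((v 0)^2 - 2 - Real.log ((v 0)^2-1))/2 := by ring
      linarith only [hGb, hident]
    have := numW2 hW2 hv0lt2 hC hD
    linarith only [this, hfinal]

end Stmt10Aux

open Stmt10Aux in
/-- Focusing equation with `μ = -1`: `v'' + v'/a - v + v³ = 0`. Then
`|v(a)² - 1| ≤ |v(0)² - 1|` for all `a > 0`; in particular if `v(0) ∈ (0,2)` then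
`v(a) > 0` for all `a ≥ 0`. -/
theorem stmt10 (v : ℝ → ℝ)
    (hv1 : ContDiffOn ℝ 1 v (Set.Ici 0))
    (hv2 : ContDiffOn ℝ 2 v (Set.Ioi 0))
    (hode : ∀ a > (0:ℝ), deriv (deriv v) a + deriv v a / a - v a + (v a) ^ 3 = 0)
    (hv'0 : derivWithin v (Set.Ici 0) 0 = 0) :
    (∀ a > (0:ℝ), |(v a) ^ 2 - 1| ≤ |(v 0) ^ 2 - 1|) ∧
    (v 0 ∈ Set.Ioo (0:ℝ) 2 → ∀ a ≥ (0:ℝ), 0 < v a) := by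
  have P := mkPack hv1 hv2 hode hv'0
  constructor
  · intro a ha
    exact part1 P ha
  · rintro ⟨hv0pos, hv0lt2⟩ a ha
    rcases ha.eq_or_lt with rfl | hapos
    · exact hv0pos
    by_contra hcon
    push_neg at hcon
    set S := {σ : ℝ | σ ∈ Icc 0 a ∧ v σ ≤ 0} with hSdef
    have hSne : S.Nonempty := ⟨a, ⟨⟨ha, le_refl a⟩, hcon⟩⟩
    have hSbdd : BddBelow S := ⟨0, fun σ hσ => hσ.1.1⟩
    have hSclosed : IsClosed S := by
      have hSeq : S = Icc 0 a ∩ v ⁻¹' (Iic 0) := rfl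
      rw [hSeq]
      exact (P.cont.mono Icc_subset_Ici_self).preimage_isClosed_of_isClosed
        isClosed_Icc isClosed_Iic
    set a₂ := sInf S with ha₂def
    have ha₂S : a₂ ∈ S := hSclosed.csInf_mem hSne hSbdd
    have ha₂pos : 0 < a₂ := by
      have hev : ∀ᶠ σ in 𝓝[Ici 0] (0:ℝ), 0 < v σ :=
        (P.cont 0 self_mem_Ici).eventually (eventually_gt_nhds hv0pos)
      obtain ⟨u, hu, hsub⟩ := mem_nhdsGE_iff_exists_Ico_subset.mp hev
      have hua₂ : u ≤ a₂ := by
        apply le_csInf hSne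
        intro σ hσ
        by_contra hlt
        push_neg at hlt
        have : 0 < v σ := hsub ⟨hσ.1.1, hlt⟩
        linarith [hσ.2]
      exact lt_of_lt_of_le hu hua₂
    have hposS : ∀ σ, 0 ≤ σ → σ < a₂ → 0 < v σ := by
      intro σ h0 hlt
      by_contra h
      push_neg at h
      have hmem : σ ∈ S := ⟨⟨h0, le_trans hlt.le ha₂S.1.2⟩, h⟩
      exact absurd (csInf_le hSbdd hmem) (not_le.mpr hlt)
    have hva₂ : v a₂ = 0 := by
      rcases lt_or_eq_of_le ha₂S.2 with hlt | heq
      · exfalso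
        have hca : ContinuousAt v a₂ := P.cont.continuousAt (Ici_mem_nhds ha₂pos)
        have hev2 : ∀ᶠ σ in 𝓝 a₂, v σ < 0 := hca.eventually (eventually_lt_nhds hlt)
        have hev3 : ∀ᶠ σ in 𝓝[<] a₂, v σ < 0 := hev2.filter_mono nhdsWithin_le_nhds
        have hmem3 : Ioo (0:ℝ) a₂ ∈ 𝓝[<] a₂ := Ioo_mem_nhdsLT ha₂pos
        obtain ⟨σ, hσv, hσI⟩ := (hev3.and (eventually_of_mem hmem3 (fun σ hσ => hσ))).exists
        exact absurd (hposS σ hσI.1.le hσI.2) (not_lt.mpr hσv.le)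
      · exact heq
    rcases le_or_gt ((v 0)^2) 2 with hsmall | hbig
    · exact easy_case P hv0pos hsmall ha₂pos hva₂
    · exact no_zero P hv0pos hbig hv0lt2 ha₂pos hva₂ hposS
end

section
/- Bounded continuous hyperbolically radial standing waves of the hyperbolic cubic NLS exist only for μ < 0: if μ ≥ 0, any pair (v_f, v_d) of bounded C² solutions on (0,∞) of v_f'' + v_f'/a + μv_f + v_f³ = 0 and -v_d'' - v_d'/a + μv_d + v_d³ = 0, both continuous at 0 with vanishing derivative there and satisfying the matching condition v_f(0) = v_d(0), must have v_d ≡ 0 and hence (by matching) v_f(0) = 0. -/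
open Real Set Filter Topology

lemma defocusing_zero (μ : ℝ) (hμ : 0 ≤ μ) (v : ℝ → ℝ)
    (h1 : ContDiffOn ℝ 1 v (Set.Ici 0)) (h2 : ContDiffOn ℝ 2 v (Set.Ioi 0))
    (hbdd : ∃ C : ℝ, ∀ a ≥ (0:ℝ), |v a| ≤ C)
    (hode : ∀ a > (0:ℝ), -deriv (deriv v) a - deriv v a / a + μ * v a + (v a) ^ 3 = 0)
    (h'0 : derivWithin v (Set.Ici 0) 0 = 0) :
    ∀ a ≥ (0:ℝ), v a = 0 := by
  obtain ⟨C, hC⟩ := hbdd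
  -- differentiability facts
  have hvdiff : DifferentiableOn ℝ v (Ioi 0) := h2.differentiableOn (by norm_num)
  have hv'cd : ContDiffOn ℝ 1 (deriv v) (Ioi 0) :=
    h2.deriv_of_isOpen isOpen_Ioi (by norm_num)
  have hv'diff : DifferentiableOn ℝ (deriv v) (Ioi 0) := hv'cd.differentiableOn one_ne_zero
  have hvA : ∀ a ∈ Ioi (0:ℝ), HasDerivAt v (deriv v a) a := fun a ha =>
    ((hvdiff a ha).differentiableAt (Ioi_mem_nhds ha)).hasDerivAt
  have hv'A : ∀ a ∈ Ioi (0:ℝ), HasDerivAt (deriv v) (deriv (deriv v) a) a := fun a ha =>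
    ((hv'diff a ha).differentiableAt (Ioi_mem_nhds ha)).hasDerivAt
  set P : ℝ → ℝ := fun a => a * (v a * deriv v a) with hPdef
  set D : ℝ → ℝ := fun a => a * ((deriv v a)^2 + μ * (v a)^2 + (v a)^4) with hDdef
  have hP : ∀ a ∈ Ioi (0:ℝ), HasDerivAt P (D a) a := by
    intro a ha
    have ha0 : (0:ℝ) < a := ha
    have h := (hasDerivAt_id a).mul ((hvA a ha).mul (hv'A a ha))
    have hodea : deriv (deriv v) a = μ * v a + v a ^ 3 - deriv v a / a := by
      have := hode a ha0; linarith
    refine h.congr_deriv ?_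
    simp only [hDdef, id, Pi.mul_apply]
    rw [hodea]; field_simp; ring
  have hDnn : ∀ a ∈ Ioi (0:ℝ), 0 ≤ D a := by
    intro a ha
    have : (0:ℝ) < a := ha
    have : (0:ℝ) ≤ (deriv v a)^2 + μ * (v a)^2 + (v a)^4 := by positivity
    positivity
  -- monotonicity of P on Ioi 0
  have hPmono : ∀ s t : ℝ, 0 < s → s ≤ t → P s ≤ P t := by
    intro s t hs hst
    have hsub : Icc s t ⊆ Ioi 0 := fun x hx => lt_of_lt_of_le hs hx.1
    have hmono : MonotoneOn P (Icc s t) := by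
      apply monotoneOn_of_deriv_nonneg (convex_Icc s t)
      · exact fun x hx => ((hP x (hsub hx)).continuousAt).continuousWithinAt
      · intro x hx
        rw [interior_Icc] at hx
        exact ((hP x (hsub (Ioo_subset_Icc_self hx))).differentiableAt).differentiableWithinAt
      · intro x hx
        rw [interior_Icc] at hx
        rw [(hP x (hsub (Ioo_subset_Icc_self hx))).deriv]
        exact hDnn x (hsub (Ioo_subset_Icc_self hx))
    exact hmono ⟨le_rfl, hst⟩ ⟨hst, le_rfl⟩ hst
  -- P tends to 0 at 0+
  have hvcont : ContinuousOn v (Ici 0) := h1.continuousOn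
  have hgcont : ContinuousOn (derivWithin v (Ici 0)) (Ici 0) :=
    h1.continuousOn_derivWithin (uniqueDiffOn_Ici 0) le_rfl
  have hlim : Tendsto P (𝓝[>] 0) (𝓝 0) := by
    have h1' : Tendsto v (𝓝[>] (0:ℝ)) (𝓝 (v 0)) :=
      (hvcont 0 self_mem_Ici).mono_left (nhdsWithin_mono _ Ioi_subset_Ici_self)
    have h2' : Tendsto (deriv v) (𝓝[>] (0:ℝ)) (𝓝 0) := by
      have hg : Tendsto (derivWithin v (Ici 0)) (𝓝[>] (0:ℝ)) (𝓝 0) := by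
        have := (hgcont 0 self_mem_Ici).mono_left (nhdsWithin_mono _ Ioi_subset_Ici_self)
        rwa [h'0] at this
      refine hg.congr' ?_
      filter_upwards [self_mem_nhdsWithin] with x hx
      exact derivWithin_of_mem_nhds (Ici_mem_nhds hx)
    have h3' : Tendsto (fun a : ℝ => a) (𝓝[>] (0:ℝ)) (𝓝 0) :=
      tendsto_id.mono_left nhdsWithin_le_nhds
    have := h3'.mul (h1'.mul h2')
    simpa using this
  have hPnn : ∀ a > (0:ℝ), 0 ≤ P a := by
    intro a ha
    refine le_of_tendsto hlim ?_
    filter_upwards [Ioo_mem_nhdsGT ha] with x hx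
    exact hPmono x a hx.1 hx.2.le
  -- main contradiction argument
  by_contra hcon
  push_neg at hcon
  obtain ⟨a₀, ha₀, hva₀⟩ := hcon
  -- get b > 0 with v b ≠ 0
  obtain ⟨b, hb0, hvb⟩ : ∃ b > (0:ℝ), v b ≠ 0 := by
    rcases eq_or_lt_of_le ha₀ with h | h
    · have hc : ContinuousWithinAt v (Ici 0) 0 := hvcont 0 self_mem_Ici
      have : ∀ᶠ x in 𝓝[Ici 0] (0:ℝ), v x ≠ 0 := by
        apply hc.eventually_ne
        subst h; exact hva₀
      have h' : ∀ᶠ x in 𝓝[>] (0:ℝ), v x ≠ 0 :=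
        this.filter_mono (nhdsWithin_mono _ Ioi_subset_Ici_self)
      obtain ⟨b, hb1, hb2⟩ := (h'.and self_mem_nhdsWithin).exists
      exact ⟨b, hb2, hb1⟩
    · exact ⟨a₀, h, hva₀⟩
  -- D is continuous and positive at b
  have hDcont : ContinuousAt D b := by
    have hvc : ContinuousAt v b := (hvA b hb0).differentiableAt.continuousAt
    have hv'c : ContinuousAt (deriv v) b := (hv'A b hb0).differentiableAt.continuousAt
    fun_prop
  have hDb : 0 < D b := by
    have h1 : (0:ℝ) < (v b)^4 := by positivity
    have h2 : (0:ℝ) ≤ (deriv v b)^2 + μ * (v b)^2 := by positivity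
    have : (0:ℝ) < (deriv v b)^2 + μ * (v b)^2 + (v b)^4 := by linarith
    exact mul_pos hb0 this
  -- find ε so that D > 0 on ball b ε within Ioi 0
  have hev : ∀ᶠ x in 𝓝 b, 0 < D x ∧ 0 < x :=
    (hDcont.eventually (eventually_gt_nhds hDb)).and (eventually_gt_nhds hb0)
  obtain ⟨ε, hε, hball⟩ := Metric.eventually_nhds_iff_ball.mp hev
  set t₀ := b + ε/2 with ht₀
  have hbt₀ : b < t₀ := by rw [ht₀]; linarith
  have hPbt : P b < P t₀ := by
    have hsub : Icc b t₀ ⊆ Ioi 0 := fun x hx => lt_of_lt_of_le hb0 hx.1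
    have hstrict : StrictMonoOn P (Icc b t₀) := by
      apply strictMonoOn_of_deriv_pos (convex_Icc b t₀)
      · exact fun x hx => ((hP x (hsub hx)).continuousAt).continuousWithinAt
      · intro x hx
        rw [interior_Icc] at hx
        rw [(hP x (hsub (Ioo_subset_Icc_self hx))).deriv]
        obtain ⟨hx1, hx2⟩ := hx
        rw [ht₀] at hx2
        have hxball : x ∈ Metric.ball b ε := by
          rw [Real.ball_eq_Ioo]
          exact ⟨by linarith, by linarith⟩
        exact (hball _ hxball).1
    exact hstrict ⟨le_rfl, hbt₀.le⟩ ⟨hbt₀.le, le_rfl⟩ hbt₀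
  set c := P t₀ with hc
  have hcpos : 0 < c := lt_of_le_of_lt (hPnn b hb0) hPbt
  have ht₀pos : 0 < t₀ := lt_trans hb0 hbt₀
  -- Q monotone
  set Q : ℝ → ℝ := fun a => (v a)^2 / 2 - c * Real.log a with hQdef
  have hQ : ∀ a ∈ Ioi (0:ℝ), HasDerivAt Q (v a * deriv v a - c / a) a := by
    intro a ha
    have ha0 : (0:ℝ) < a := ha
    have h1 : HasDerivAt (fun a => (v a)^2 / 2) (v a * deriv v a) a := by
      have := ((hvA a ha).pow 2).div_const 2
      refine this.congr_deriv ?_; ring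
    have h2 : HasDerivAt (fun a => c * Real.log a) (c * a⁻¹) a :=
      (Real.hasDerivAt_log ha0.ne').const_mul c
    exact (h1.sub h2).congr_deriv (by rw [div_eq_mul_inv])
  have hQmono : ∀ t : ℝ, t₀ ≤ t → Q t₀ ≤ Q t := by
    intro t ht
    have hsub : Icc t₀ t ⊆ Ioi 0 := fun x hx => lt_of_lt_of_le ht₀pos hx.1
    have hmono : MonotoneOn Q (Icc t₀ t) := by
      apply monotoneOn_of_deriv_nonneg (convex_Icc t₀ t)
      · exact fun x hx => ((hQ x (hsub hx)).continuousAt).continuousWithinAt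
      · intro x hx
        rw [interior_Icc] at hx
        exact ((hQ x (hsub (Ioo_subset_Icc_self hx))).differentiableAt).differentiableWithinAt
      · intro x hx
        rw [interior_Icc] at hx
        have hx' : x ∈ Ioi (0:ℝ) := hsub (Ioo_subset_Icc_self hx)
        rw [(hQ x hx').deriv]
        have hPx : c ≤ P x := hPmono t₀ x ht₀pos hx.1.le
        have hx0 : (0:ℝ) < x := hx'
        have : c / x ≤ v x * deriv v x := by
          rw [div_le_iff₀ hx0]
          calc c ≤ P x := hPx
          _ = v x * deriv v x * x := by rw [hPdef]; ring
        linarith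
    exact hmono ⟨le_rfl, ht⟩ ⟨ht, le_rfl⟩ ht
  -- contradiction with boundedness
  set M := (C^2 / 2 - Q t₀ + 1) / c with hM
  set t := max (t₀ + 1) (Real.exp M) with htdef
  have htt₀ : t₀ ≤ t := le_trans (by linarith) (le_max_left _ _)
  have htpos : 0 < t := lt_of_lt_of_le ht₀pos htt₀
  have hlogt : M ≤ Real.log t := by
    calc M = Real.log (Real.exp M) := (Real.log_exp M).symm
    _ ≤ Real.log t := Real.log_le_log (Real.exp_pos M) (le_max_right _ _)
  have hQt : Q t₀ ≤ Q t := hQmono t htt₀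
  have hvt : (v t)^2 ≤ C^2 := by
    have := hC t htpos.le
    calc (v t)^2 = |v t|^2 := (sq_abs _).symm
    _ ≤ C^2 := by
          apply pow_le_pow_left₀ (abs_nonneg _) this
  have hclog : C^2 / 2 - Q t₀ + 1 ≤ c * Real.log t := by
    calc C^2 / 2 - Q t₀ + 1 = c * M := by rw [hM]; field_simp
    _ ≤ c * Real.log t := by
          apply mul_le_mul_of_nonneg_left hlogt hcpos.le
  have : (v t)^2 / 2 - c * Real.log t ≥ Q t₀ := hQt
  nlinarith

/-- Bounded continuous hyperbolically radial standing waves of the hyperbolic cubic NLS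
exist only for `μ < 0`: if `μ ≥ 0` and `(v_f, v_d)` are bounded solutions of the focusing
and defocusing radial equations with `v_f'(0) = v_d'(0) = 0` and matching `v_f(0) = v_d(0)`,
then `v_d ≡ 0` and `v_f(0) = 0`. -/
theorem stmt12 (μ : ℝ) (hμ : 0 ≤ μ) (vf vd : ℝ → ℝ)
    (hf1 : ContDiffOn ℝ 1 vf (Set.Ici 0)) (hf2 : ContDiffOn ℝ 2 vf (Set.Ioi 0))
    (hd1 : ContDiffOn ℝ 1 vd (Set.Ici 0)) (hd2 : ContDiffOn ℝ 2 vd (Set.Ioi 0))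
    (hbdd : ∃ C : ℝ, ∀ a ≥ (0:ℝ), |vf a| ≤ C ∧ |vd a| ≤ C)
    (hodef : ∀ a > (0:ℝ), deriv (deriv vf) a + deriv vf a / a + μ * vf a + (vf a) ^ 3 = 0)
    (hoded : ∀ a > (0:ℝ), -deriv (deriv vd) a - deriv vd a / a + μ * vd a + (vd a) ^ 3 = 0)
    (hf'0 : derivWithin vf (Set.Ici 0) 0 = 0)
    (hd'0 : derivWithin vd (Set.Ici 0) 0 = 0)
    (hmatch : vf 0 = vd 0) :
    (∀ a ≥ (0:ℝ), vd a = 0) ∧ vf 0 = 0 := by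
  obtain ⟨C, hC⟩ := hbdd
  have hzero := defocusing_zero μ hμ vd hd1 hd2 ⟨C, fun a ha => (hC a ha).2⟩ hoded hd'0
  exact ⟨hzero, hmatch.trans (hzero 0 le_rfl)⟩
end
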